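/- arXiv:1403.5699 — 4 statements merged into one kernel-verified Lean document; each statement's English description precedes it below -/
import Mathlib

section
/- Let T > 0 and let (η, u) be a classical solution, with η, u ∈ C¹([0,1]×[0,T]), of the symmetric shallow water system (SSW). Then for every t ∈ [0,T], ∫₀¹ (η(x,t)² + u(x,t)²) dx = ∫₀¹ (η₀(x)² + u₀(x)²) dx. -/
noncomputable section
open Set

namespace SSWaux
def SP (T : ℝ) : Set (ℝ × ℝ) := (Icc (0:ℝ) 1) ×ˢ (Icc (0:ℝ) T)
def pdx (f : ℝ → ℝ → ℝ) (T y t : ℝ) : ℝ :=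
  fderivWithin ℝ (fun p : ℝ × ℝ => f p.1 p.2) (SP T) (y, t) (1, 0)
def pdt (f : ℝ → ℝ → ℝ) (T y t : ℝ) : ℝ :=
  fderivWithin ℝ (fun p : ℝ × ℝ => f p.1 p.2) (SP T) (y, t) (0, 1)
lemma uniqueDiffSP {T : ℝ} (hT : 0 < T) : UniqueDiffOn ℝ (SP T) :=
  (uniqueDiffOn_Icc one_pos).prod (uniqueDiffOn_Icc hT)
lemma hasDeriv_x {T : ℝ} (f : ℝ → ℝ → ℝ)
    (hf : DifferentiableOn ℝ (fun p : ℝ × ℝ => f p.1 p.2) (SP T))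
    {y t : ℝ} (hy : y ∈ Icc (0:ℝ) 1) (ht : t ∈ Icc (0:ℝ) T) :
    HasDerivWithinAt (fun z => f z t) (pdx f T y t) (Icc (0:ℝ) 1) y := by
  have hmem : ((y, t) : ℝ × ℝ) ∈ SP T := mk_mem_prod hy ht
  have hF := (hf (y, t) hmem).hasFDerivWithinAt
  have hγ : HasDerivWithinAt (fun z : ℝ => ((z, t) : ℝ × ℝ)) (1, 0) (Icc (0:ℝ) 1) y :=
    ((hasDerivAt_id y).prodMk (hasDerivAt_const y t)).hasDerivWithinAt
  exact hF.comp_hasDerivWithinAt y hγ (fun z hz => mk_mem_prod hz ht)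
lemma hasDeriv_t {T : ℝ} (f : ℝ → ℝ → ℝ)
    (hf : DifferentiableOn ℝ (fun p : ℝ × ℝ => f p.1 p.2) (SP T))
    {y t : ℝ} (hy : y ∈ Icc (0:ℝ) 1) (ht : t ∈ Icc (0:ℝ) T) :
    HasDerivWithinAt (fun s => f y s) (pdt f T y t) (Icc (0:ℝ) T) t := by
  have hmem : ((y, t) : ℝ × ℝ) ∈ SP T := mk_mem_prod hy ht
  have hF := (hf (y, t) hmem).hasFDerivWithinAt
  have hγ : HasDerivWithinAt (fun s : ℝ => ((y, s) : ℝ × ℝ)) (0, 1) (Icc (0:ℝ) T) t :=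
    ((hasDerivAt_const t y).prodMk (hasDerivAt_id t)).hasDerivWithinAt
  exact hF.comp_hasDerivWithinAt t hγ (fun s hs => mk_mem_prod hy hs)
lemma cont_pdx {T : ℝ} (hT : 0 < T) (f : ℝ → ℝ → ℝ)
    (hf : ContDiffOn ℝ 1 (fun p : ℝ × ℝ => f p.1 p.2) (SP T)) :
    ContinuousOn (fun p : ℝ × ℝ => pdx f T p.1 p.2) (SP T) :=
  (hf.continuousOn_fderivWithin (uniqueDiffSP hT) le_rfl).clm_apply continuousOn_const
lemma cont_pdt {T : ℝ} (hT : 0 < T) (f : ℝ → ℝ → ℝ)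
    (hf : ContDiffOn ℝ 1 (fun p : ℝ × ℝ => f p.1 p.2) (SP T)) :
    ContinuousOn (fun p : ℝ × ℝ => pdt f T p.1 p.2) (SP T) :=
  (hf.continuousOn_fderivWithin (uniqueDiffSP hT) le_rfl).clm_apply continuousOn_const
end SSWaux

open MeasureTheory SSWaux


/-- **L² conservation for the symmetric shallow water system.**
If `(η,u)` is a classical `C¹` solution of (SSW) on `[0,1]×[0,T]`, then the quantity
`∫₀¹ (η² + u²) dx` is conserved. -/
theorem stmt_0 (T : ℝ) (hT : 0 < T) (η u : ℝ → ℝ → ℝ) (η₀ u₀ : ℝ → ℝ)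
    (hηreg : ContDiffOn ℝ 1 (fun p : ℝ × ℝ => η p.1 p.2) ((Icc (0:ℝ) 1) ×ˢ (Icc (0:ℝ) T)))
    (hureg : ContDiffOn ℝ 1 (fun p : ℝ × ℝ => u p.1 p.2) ((Icc (0:ℝ) 1) ×ˢ (Icc (0:ℝ) T)))
    (hpde1 : ∀ y ∈ Icc (0:ℝ) 1, ∀ t ∈ Icc (0:ℝ) T,
      derivWithin (fun s => η y s) (Icc (0:ℝ) T) t
        + derivWithin (fun z => u z t) (Icc (0:ℝ) 1) y
        + (1/2) * derivWithin (fun z => η z t * u z t) (Icc (0:ℝ) 1) y = 0)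
    (hpde2 : ∀ y ∈ Icc (0:ℝ) 1, ∀ t ∈ Icc (0:ℝ) T,
      derivWithin (fun s => u y s) (Icc (0:ℝ) T) t
        + derivWithin (fun z => η z t) (Icc (0:ℝ) 1) y
        + (3/2) * (u y t * derivWithin (fun z => u z t) (Icc (0:ℝ) 1) y)
        + (1/2) * (η y t * derivWithin (fun z => η z t) (Icc (0:ℝ) 1) y) = 0)
    (hbc : ∀ t ∈ Icc (0:ℝ) T, u 0 t = 0 ∧ u 1 t = 0)
    (hic : ∀ y ∈ Icc (0:ℝ) 1, η y 0 = η₀ y ∧ u y 0 = u₀ y) :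
    ∀ t ∈ Icc (0:ℝ) T,
      (∫ y in (0:ℝ)..1, (η y t ^ 2 + u y t ^ 2))
        = ∫ y in (0:ℝ)..1, (η₀ y ^ 2 + u₀ y ^ 2) := by
  intro t ht
  obtain ⟨ht0, htT⟩ := ht
  have hSP : (SP T) = (Icc (0:ℝ) 1) ×ˢ (Icc (0:ℝ) T) := rfl
  rw [← hSP] at hηreg hureg
  have hηd : DifferentiableOn ℝ (fun p : ℝ × ℝ => η p.1 p.2) (SP T) :=
    hηreg.differentiableOn one_ne_zero
  have hud : DifferentiableOn ℝ (fun p : ℝ × ℝ => u p.1 p.2) (SP T) :=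
    hureg.differentiableOn one_ne_zero
  -- continuity of the functions and their partials on SP T
  have hcη : ContinuousOn (fun p : ℝ × ℝ => η p.1 p.2) (SP T) := hηreg.continuousOn
  have hcu : ContinuousOn (fun p : ℝ × ℝ => u p.1 p.2) (SP T) := hureg.continuousOn
  have hcEt : ContinuousOn (fun p : ℝ × ℝ => pdt η T p.1 p.2) (SP T) := cont_pdt hT η hηreg
  have hcUt : ContinuousOn (fun p : ℝ × ℝ => pdt u T p.1 p.2) (SP T) := cont_pdt hT u hureg
  have hcEx : ContinuousOn (fun p : ℝ × ℝ => pdx η T p.1 p.2) (SP T) := cont_pdx hT η hηreg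
  have hcUx : ContinuousOn (fun p : ℝ × ℝ => pdx u T p.1 p.2) (SP T) := cont_pdx hT u hureg
  -- the PDEs rewritten with our partials
  have H1 : ∀ y ∈ Icc (0:ℝ) 1, ∀ s ∈ Icc (0:ℝ) T,
      pdt η T y s + pdx u T y s
        + (1/2) * (pdx η T y s * u y s + η y s * pdx u T y s) = 0 := by
    intro y hy s hs
    have h := hpde1 y hy s hs
    rw [(hasDeriv_t η hηd hy hs).derivWithin ((uniqueDiffOn_Icc hT) s hs),
      (hasDeriv_x u hud hy hs).derivWithin ((uniqueDiffOn_Icc one_pos) y hy),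
      ((hasDeriv_x η hηd hy hs).fun_mul (hasDeriv_x u hud hy hs)).derivWithin
        ((uniqueDiffOn_Icc one_pos) y hy)] at h
    exact h
  have H2 : ∀ y ∈ Icc (0:ℝ) 1, ∀ s ∈ Icc (0:ℝ) T,
      pdt u T y s + pdx η T y s + (3/2) * (u y s * pdx u T y s)
        + (1/2) * (η y s * pdx η T y s) = 0 := by
    intro y hy s hs
    have h := hpde2 y hy s hs
    rw [(hasDeriv_t u hud hy hs).derivWithin ((uniqueDiffOn_Icc hT) s hs),
      (hasDeriv_x u hud hy hs).derivWithin ((uniqueDiffOn_Icc one_pos) y hy),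
      (hasDeriv_x η hηd hy hs).derivWithin ((uniqueDiffOn_Icc one_pos) y hy)] at h
    exact h
  -- the time-derivative of the energy density
  set D : ℝ → ℝ → ℝ := fun y s => 2 * η y s * pdt η T y s + 2 * u y s * pdt u T y s with hD
  -- continuity of D on SP T
  have hcD : ContinuousOn (fun p : ℝ × ℝ => D p.1 p.2) (SP T) := by
    exact ((continuousOn_const.mul hcη).mul hcEt).add ((continuousOn_const.mul hcu).mul hcUt)
  -- Step 1 : FTC in time.
  have key1 : ∀ y ∈ Icc (0:ℝ) 1,
      (∫ s in (0:ℝ)..t, D y s) = (η y t ^ 2 + u y t ^ 2) - (η y 0 ^ 2 + u y 0 ^ 2) := by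
    intro y hy
    have hcurve : Continuous fun s : ℝ => ((y, s) : ℝ × ℝ) :=
      continuous_const.prodMk continuous_id
    have hmaps : MapsTo (fun s : ℝ => ((y, s) : ℝ × ℝ)) (Icc (0:ℝ) T) (SP T) :=
      fun s hs => mk_mem_prod hy hs
    have hsub : Icc (0:ℝ) t ⊆ Icc (0:ℝ) T := Icc_subset_Icc le_rfl htT
    apply intervalIntegral.integral_eq_sub_of_hasDerivAt_of_le ht0
    · exact (((hcη.comp hcurve.continuousOn hmaps).pow 2).add
        ((hcu.comp hcurve.continuousOn hmaps).pow 2)).mono hsub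
    · intro s hs
      have hsT : s ∈ Icc (0:ℝ) T := ⟨hs.1.le, hs.2.le.trans htT⟩
      have hnhds : Icc (0:ℝ) T ∈ nhds s := Icc_mem_nhds hs.1 (hs.2.trans_le htT)
      have h1 := ((hasDeriv_t η hηd hy hsT).hasDerivAt hnhds).fun_pow 2
      have h2 := ((hasDeriv_t u hud hy hsT).hasDerivAt hnhds).fun_pow 2
      have := h1.fun_add h2
      convert this using 1
      rw [hD]; push_cast; ring
    · apply ContinuousOn.intervalIntegrable
      rw [uIcc_of_le ht0]
      exact ((hcD.comp hcurve.continuousOn hmaps).mono hsub)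
  -- Step 3 : the space integral of D vanishes, by FTC in space + PDE + boundary conditions.
  have key2 : ∀ s ∈ Icc (0:ℝ) T, (∫ y in (0:ℝ)..1, D y s) = 0 := by
    intro s hs
    have hcurve : Continuous fun y : ℝ => ((y, s) : ℝ × ℝ) :=
      continuous_id.prodMk continuous_const
    have hmaps : MapsTo (fun y : ℝ => ((y, s) : ℝ × ℝ)) (Icc (0:ℝ) 1) (SP T) :=
      fun y hy => mk_mem_prod hy hs
    set g : ℝ → ℝ := fun z => 2 * (η z s * u z s) + ((η z s) ^ 2 * u z s + (u z s) ^ 3)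
      with hg
    set gd : ℝ → ℝ := fun y =>
      (pdx η T y s * u y s + η y s * pdx u T y s) * 2
        + ((2 * η y s * pdx η T y s * u y s + (η y s) ^ 2 * pdx u T y s)
            + 3 * (u y s) ^ 2 * pdx u T y s) with hgd
    have hftc : (∫ y in (0:ℝ)..1, gd y) = g 1 - g 0 := by
      apply intervalIntegral.integral_eq_sub_of_hasDerivAt_of_le zero_le_one
      · have hη1 : ContinuousOn (fun z => η z s) (Icc (0:ℝ) 1) :=
          hcη.comp hcurve.continuousOn hmaps
        have hu1 : ContinuousOn (fun z => u z s) (Icc (0:ℝ) 1) :=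
          hcu.comp hcurve.continuousOn hmaps
        exact (continuousOn_const.mul (hη1.mul hu1)).add
          (((hη1.pow 2).mul hu1).add (hu1.pow 3))
      · intro y hy
        have hy1 : y ∈ Icc (0:ℝ) 1 := ⟨hy.1.le, hy.2.le⟩
        have hnhds : Icc (0:ℝ) 1 ∈ nhds y := Icc_mem_nhds hy.1 hy.2
        have h1 := (hasDeriv_x η hηd hy1 hs).hasDerivAt hnhds
        have h2 := (hasDeriv_x u hud hy1 hs).hasDerivAt hnhds
        have := ((h1.fun_mul h2).const_mul (2:ℝ)).fun_add (((h1.fun_pow 2).fun_mul h2).fun_add (h2.fun_pow 3))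
        convert this using 1
        rw [hgd]; push_cast; ring
      · apply ContinuousOn.intervalIntegrable
        rw [uIcc_of_le zero_le_one]
        have hη1 : ContinuousOn (fun z => η z s) (Icc (0:ℝ) 1) :=
          hcη.comp hcurve.continuousOn hmaps
        have hu1 : ContinuousOn (fun z => u z s) (Icc (0:ℝ) 1) :=
          hcu.comp hcurve.continuousOn hmaps
        have hEx1 : ContinuousOn (fun z => pdx η T z s) (Icc (0:ℝ) 1) :=
          hcEx.comp hcurve.continuousOn hmaps
        have hUx1 : ContinuousOn (fun z => pdx u T z s) (Icc (0:ℝ) 1) :=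
          hcUx.comp hcurve.continuousOn hmaps
        exact (((hEx1.mul hu1).add (hη1.mul hUx1)).mul continuousOn_const).add
          (((((continuousOn_const.mul hη1).mul hEx1).mul hu1).add
            ((hη1.pow 2).mul hUx1)).add ((continuousOn_const.mul (hu1.pow 2)).mul hUx1))
    have hDgd : ∀ y ∈ Icc (0:ℝ) 1, D y s = -(gd y) := by
      intro y hy
      have h1 := H1 y hy s hs
      have h2 := H2 y hy s hs
      rw [hD, hgd]
      dsimp only
      linear_combination 2 * η y s * h1 + 2 * u y s * h2
    have hb0 : u 0 s = 0 := (hbc s hs).1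
    have hb1 : u 1 s = 0 := (hbc s hs).2
    calc (∫ y in (0:ℝ)..1, D y s) = ∫ y in (0:ℝ)..1, -(gd y) := by
          apply intervalIntegral.integral_congr
          intro y hy
          rw [uIcc_of_le zero_le_one] at hy
          exact hDgd y hy
      _ = -(g 1 - g 0) := by rw [intervalIntegral.integral_neg, hftc]
      _ = 0 := by rw [hg]; simp [hb0, hb1]
  -- Reduce RHS to t = 0 via initial conditions.
  have hF0 : (∫ y in (0:ℝ)..1, (η₀ y ^ 2 + u₀ y ^ 2))
      = ∫ y in (0:ℝ)..1, (η y 0 ^ 2 + u y 0 ^ 2) := by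
    apply intervalIntegral.integral_congr
    intro y hy
    rw [uIcc_of_le zero_le_one] at hy
    show η₀ y ^ 2 + u₀ y ^ 2 = η y 0 ^ 2 + u y 0 ^ 2
    rw [(hic y hy).1, (hic y hy).2]
  rw [hF0]
  -- integrability of energy densities at fixed times
  have sectInt : ∀ τ ∈ Icc (0:ℝ) T,
      IntervalIntegrable (fun y => η y τ ^ 2 + u y τ ^ 2) volume 0 1 := by
    intro τ hτ
    apply ContinuousOn.intervalIntegrable
    rw [uIcc_of_le zero_le_one]
    have hcurve : Continuous fun y : ℝ => ((y, τ) : ℝ × ℝ) :=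
      continuous_id.prodMk continuous_const
    have hmaps : MapsTo (fun y : ℝ => ((y, τ) : ℝ × ℝ)) (Icc (0:ℝ) 1) (SP T) :=
      fun y hy => mk_mem_prod hy hτ
    exact ((hcη.comp hcurve.continuousOn hmaps).pow 2).add
      ((hcu.comp hcurve.continuousOn hmaps).pow 2)
  have h0T : (0:ℝ) ∈ Icc (0:ℝ) T := ⟨le_rfl, hT.le⟩
  -- Step 2 + Fubini : the difference equals a double integral which vanishes.
  have hdiff : (∫ y in (0:ℝ)..1, (η y t ^ 2 + u y t ^ 2))
      - (∫ y in (0:ℝ)..1, (η y 0 ^ 2 + u y 0 ^ 2)) = 0 := by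
    have e1 : (∫ y in (0:ℝ)..1, (η y t ^ 2 + u y t ^ 2))
        - (∫ y in (0:ℝ)..1, (η y 0 ^ 2 + u y 0 ^ 2))
        = ∫ y in (0:ℝ)..1, ((η y t ^ 2 + u y t ^ 2) - (η y 0 ^ 2 + u y 0 ^ 2)) :=
      (intervalIntegral.integral_sub (sectInt t ⟨ht0, htT⟩) (sectInt 0 h0T)).symm
    have e2 : (∫ y in (0:ℝ)..1, ((η y t ^ 2 + u y t ^ 2) - (η y 0 ^ 2 + u y 0 ^ 2)))
        = ∫ y in (0:ℝ)..1, ∫ s in (0:ℝ)..t, D y s := by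
      apply intervalIntegral.integral_congr
      intro y hy
      rw [uIcc_of_le zero_le_one] at hy
      exact (key1 y hy).symm
    -- Fubini
    have hint : Integrable (Function.uncurry D)
        ((volume.restrict (Ioc (0:ℝ) 1)).prod (volume.restrict (Ioc (0:ℝ) t))) := by
      rw [Measure.prod_restrict]
      apply IntegrableOn.mono_set (t := (Icc (0:ℝ) 1) ×ˢ (Icc (0:ℝ) t))
      · apply ContinuousOn.integrableOn_compact (isCompact_Icc.prod isCompact_Icc)
        exact hcD.mono (prod_mono_right (Icc_subset_Icc le_rfl htT))
      · exact prod_mono Ioc_subset_Icc_self Ioc_subset_Icc_self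
    have e3 : (∫ y in (0:ℝ)..1, ∫ s in (0:ℝ)..t, D y s)
        = ∫ s in (0:ℝ)..t, ∫ y in (0:ℝ)..1, D y s := by
      rw [intervalIntegral.integral_of_le zero_le_one,
        intervalIntegral.integral_of_le ht0]
      have := MeasureTheory.integral_integral_swap hint
      calc (∫ y in Ioc (0:ℝ) 1, ∫ s in (0:ℝ)..t, D y s)
          = ∫ y in Ioc (0:ℝ) 1, ∫ s in Ioc (0:ℝ) t, D y s := by
            apply setIntegral_congr_fun measurableSet_Ioc
            intro y _
            exact intervalIntegral.integral_of_le ht0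
        _ = ∫ s in Ioc (0:ℝ) t, ∫ y in Ioc (0:ℝ) 1, D y s := this
        _ = ∫ s in Ioc (0:ℝ) t, ∫ y in (0:ℝ)..1, D y s := by
            apply setIntegral_congr_fun measurableSet_Ioc
            intro s _
            exact (intervalIntegral.integral_of_le zero_le_one).symm
    have e4 : (∫ s in (0:ℝ)..t, ∫ y in (0:ℝ)..1, D y s) = 0 := by
      have : (∫ s in (0:ℝ)..t, ∫ y in (0:ℝ)..1, D y s) = ∫ s in (0:ℝ)..t, (0:ℝ) := by
        apply intervalIntegral.integral_congr
        intro s hsx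
        rw [uIcc_of_le ht0] at hsx
        exact key2 s ⟨hsx.1, hsx.2.trans htT⟩
      simp [this]
    rw [e1, e2, e3, e4]
  linarith [hdiff]
end
end

section
/- Let u ∈ C₀⁴ with u''(0) = u''(1) = 0, and let σ = u − P₀u. Then there exists a constant C, depending only on ‖u⁽⁴⁾‖_{L^∞(0,1)} and not on N, such that for all N ≥ 2, max_{1≤i≤N} |∫_{I_i} σ(x) dx| ≤ C h⁵. -/
set_option maxHeartbeats 3000000

noncomputable section
open Set intervalIntegral MeasureTheory

/-- The L²(0,1) inner product of two real functions. -/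
def ip (f g : ℝ → ℝ) : ℝ := ∫ y in (0:ℝ)..1, f y * g y

/-- The L²(0,1) norm. -/
def nrm (f : ℝ → ℝ) : ℝ := Real.sqrt (∫ y in (0:ℝ)..1, (f y)^2)

/-- `g` is the L²(0,1)-orthogonal projection of `f` onto `S`. -/
def IsL2ProjOn (S : Set (ℝ → ℝ)) (f g : ℝ → ℝ) : Prop :=
  g ∈ S ∧ ∀ χ ∈ S, ip (fun y => f y - g y) χ = 0

/-- Continuous piecewise linear functions on the uniform mesh of `[0,1]`
with `N` subintervals. -/
def PL (N : ℕ) : Set (ℝ → ℝ) :=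
  {φ | ContinuousOn φ (Icc (0:ℝ) 1) ∧
    ∀ i < N, ∃ a b : ℝ, ∀ y ∈ Icc ((i : ℝ)/N) (((i : ℝ)+1)/N), φ y = a * y + b}

/-- Elements of `PL N` vanishing at 0 and 1. -/
def PL0 (N : ℕ) : Set (ℝ → ℝ) := {φ | φ ∈ PL N ∧ φ 0 = 0 ∧ φ 1 = 0}

/-- exact integral of a quartic polynomial -/
lemma integ_poly (p q e0 e1 e2 e3 e4 : ℝ) :
    ∫ y in p..q, (e0 + e1*y + e2*y^2 + e3*y^3 + e4*y^4)
      = (e0*q + e1*q^2/2 + e2*q^3/3 + e3*q^4/4 + e4*q^5/5)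
        - (e0*p + e1*p^2/2 + e2*p^3/3 + e3*p^4/4 + e4*p^5/5) := by
  have h : ∀ y : ℝ, HasDerivAt (fun y : ℝ => e0*y + e1*y^2/2 + e2*y^3/3 + e3*y^4/4 + e4*y^5/5)
      (e0 + e1*y + e2*y^2 + e3*y^3 + e4*y^4) y := by
    intro y
    have h1 : HasDerivAt (fun y : ℝ => y) 1 y := hasDerivAt_id y
    have h2 := hasDerivAt_pow 2 y
    have h3 := hasDerivAt_pow 3 y
    have h4 := hasDerivAt_pow 4 y
    have h5 := hasDerivAt_pow 5 y
    have := (((((h1.const_mul e0).add ((h2.const_mul e1).div_const 2)).add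
      ((h3.const_mul e2).div_const 3)).add ((h4.const_mul e3).div_const 4)).add
      ((h5.const_mul e4).div_const 5))
    exact this.congr_deriv (by ring)
  exact integral_eq_sub_of_hasDerivAt (fun y _ => h y)
    ((Continuous.intervalIntegrable (by continuity) p q))

lemma integ_bound (p q : ℝ) (hpq : p ≤ q) (f : ℝ → ℝ) (B : ℝ)
    (hB : ∀ y ∈ Icc p q, |f y| ≤ B) : |∫ y in p..q, f y| ≤ B * (q - p) := by
  have h := intervalIntegral.norm_integral_le_of_norm_le_const
    (f := f) (a := p) (b := q) (C := B) (fun x hx => by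
      rw [uIoc_of_le hpq] at hx
      exact hB x ⟨le_of_lt hx.1, hx.2⟩)
  simpa [abs_of_nonneg (sub_nonneg.2 hpq)] using h

/-- discrete maximum principle for the tridiagonal (1,4,1) system -/
lemma maxp (N : ℕ) (hN : 2 ≤ N) (ε : ℕ → ℝ) (G : ℝ)
    (h0 : ε 0 = 0) (hNN : ε N = 0)
    (hrec : ∀ j, j + 2 ≤ N → |ε j + 4*ε (j+1) + ε (j+2)| ≤ 6*G) :
    ∀ j ≤ N, |ε j| ≤ 3*G := by
  have hG : 0 ≤ G := by
    have := hrec 0 hN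
    have := abs_nonneg (ε 0 + 4*ε 1 + ε 2)
    linarith
  obtain ⟨j0, hj0mem, hj0max⟩ := Finset.exists_max_image (Finset.range (N+1))
    (fun j => |ε j|) ⟨0, by simp⟩
  have hj0le : j0 ≤ N := Nat.lt_succ_iff.mp (Finset.mem_range.mp hj0mem)
  have key : |ε j0| ≤ 3*G := by
    rcases Nat.eq_zero_or_pos j0 with h | hpos
    · rw [h, h0]; simpa using by positivity
    rcases eq_or_lt_of_le hj0le with h | hlt
    · rw [h, hNN]; simpa using by positivity
    · obtain ⟨k, rfl⟩ := Nat.exists_eq_succ_of_ne_zero (Nat.pos_iff_ne_zero.mp hpos)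
      have hk2 : k + 2 ≤ N := hlt
      have hr := hrec k hk2
      have h1 : |ε k| ≤ |ε (k+1)| := hj0max k (Finset.mem_range.mpr (by omega))
      have h2 : |ε (k+2)| ≤ |ε (k+1)| := hj0max (k+2) (Finset.mem_range.mpr (by omega))
      have habs := abs_le.mp hr
      have hk1 := neg_abs_le (ε k)
      have hk1' := le_abs_self (ε k)
      have hk3 := neg_abs_le (ε (k+2))
      have hk3' := le_abs_self (ε (k+2))
      rcases abs_cases (ε (k+1)) with ⟨he, _⟩ | ⟨he, _⟩ <;> rw [he] <;> linarith
  intro j hj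
  exact le_trans (hj0max j (Finset.mem_range.mpr (Nat.lt_succ_of_le hj))) key

lemma bound_step (f g : ℝ → ℝ) (K : ℝ) (m : ℕ) (a : ℝ) (ha : a ∈ Icc (0:ℝ) 1)
    (hd : ∀ x ∈ Icc (0:ℝ) 1, HasDerivWithinAt f (g x) (Icc (0:ℝ) 1) x)
    (hgc : ContinuousOn g (Icc (0:ℝ) 1))
    (hfa : f a = 0)
    (hgb : ∀ x ∈ Icc (0:ℝ) 1, |g x| ≤ K * |x - a| ^ m) :
    ∀ x ∈ Icc (0:ℝ) 1, |f x| ≤ K * |x - a| ^ (m+1) := by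
  have hK : 0 ≤ K := by
    have h1 := hgb a ha
    have h2 := abs_nonneg (g a)
    rcases Nat.eq_zero_or_pos m with hm | hm
    · rw [hm] at h1; simpa using le_trans h2 h1
    · -- use another point: 1/2? a could be anything in Icc; pick x with |x-a|>0
      by_contra hneg
      push_neg at hneg
      rcases eq_or_ne a 1 with rfl | hne
      · have := hgb 0 (by norm_num)
        have : (0:ℝ) ≤ K * |0 - (1:ℝ)| ^ m := le_trans (abs_nonneg _) this
        simp at this; nlinarith [this]
      · have h1' : a < 1 := lt_of_le_of_ne ha.2 hne
        have := hgb 1 (by norm_num)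
        have h3 : (0:ℝ) ≤ K * |1 - a| ^ m := le_trans (abs_nonneg _) this
        have h4 : 0 < |1 - a| ^ m := pow_pos (abs_pos.mpr (by linarith)) m
        nlinarith
  have hfc : ContinuousOn f (Icc (0:ℝ) 1) := fun x hx => (hd x hx).continuousWithinAt
  intro x hx
  rcases le_or_gt a x with hax | hax
  · have hderiv : ∀ t ∈ Ioo a x, HasDerivWithinAt f (g t) (Ioi t) t := by
      intro t ht
      exact (hd t ⟨le_trans ha.1 (le_of_lt ht.1), le_trans (le_of_lt ht.2) hx.2⟩).mono_of_mem_nhdsWithin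
        (Icc_mem_nhdsGT_of_mem ⟨le_trans ha.1 (le_of_lt ht.1), lt_of_lt_of_le ht.2 hx.2⟩)
    have hint : IntervalIntegrable g volume a x :=
      (hgc.mono (by rw [uIcc_of_le hax]; exact Icc_subset_Icc ha.1 hx.2)).intervalIntegrable
    have key : ∫ t in a..x, g t = f x - f a :=
      integral_eq_sub_of_hasDeriv_right_of_le hax
        (hfc.mono (Icc_subset_Icc ha.1 hx.2)) hderiv hint
    have hb : ∀ t ∈ Set.uIoc a x, ‖g t‖ ≤ K * |x - a| ^ m := by
      intro t ht
      rw [uIoc_of_le hax] at ht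
      refine le_trans (hgb t ⟨le_trans ha.1 (le_of_lt ht.1), le_trans ht.2 hx.2⟩) ?_
      have h1 : |t - a| ≤ |x - a| := by
        rw [abs_of_nonneg (by linarith [ht.1] : (0:ℝ) ≤ t - a),
          abs_of_nonneg (by linarith : (0:ℝ) ≤ x - a)]
        linarith [ht.2]
      exact mul_le_mul_of_nonneg_left (pow_le_pow_left₀ (abs_nonneg _) h1 m) hK
    have := intervalIntegral.norm_integral_le_of_norm_le_const hb
    rw [key, hfa, sub_zero] at this
    calc |f x| ≤ K * |x - a| ^ m * |x - a| := this
      _ = K * |x - a| ^ (m+1) := by ring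
  · have hderiv : ∀ t ∈ Ioo x a, HasDerivWithinAt f (g t) (Ioi t) t := by
      intro t ht
      exact (hd t ⟨le_trans hx.1 (le_of_lt ht.1), le_trans (le_of_lt ht.2) ha.2⟩).mono_of_mem_nhdsWithin
        (Icc_mem_nhdsGT_of_mem ⟨le_trans hx.1 (le_of_lt ht.1), lt_of_lt_of_le ht.2 ha.2⟩)
    have hint : IntervalIntegrable g volume x a :=
      (hgc.mono (by rw [uIcc_of_le (le_of_lt hax)]; exact Icc_subset_Icc hx.1 ha.2)).intervalIntegrable
    have key : ∫ t in x..a, g t = f a - f x :=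
      integral_eq_sub_of_hasDeriv_right_of_le (le_of_lt hax)
        (hfc.mono (Icc_subset_Icc hx.1 ha.2)) hderiv hint
    have hb : ∀ t ∈ Set.uIoc x a, ‖g t‖ ≤ K * |x - a| ^ m := by
      intro t ht
      rw [uIoc_of_le (le_of_lt hax)] at ht
      refine le_trans (hgb t ⟨le_trans hx.1 (le_of_lt ht.1), le_trans ht.2 ha.2⟩) ?_
      have h1 : |t - a| ≤ |x - a| := by
        rw [abs_of_nonpos (by linarith [ht.2] : t - a ≤ 0),
          abs_of_nonpos (by linarith : x - a ≤ 0)]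
        linarith [ht.1]
      exact mul_le_mul_of_nonneg_left (pow_le_pow_left₀ (abs_nonneg _) h1 m) hK
    have := intervalIntegral.norm_integral_le_of_norm_le_const hb
    rw [key, hfa, zero_sub] at this
    have h2 : |f x| = ‖-f x‖ := by simp
    rw [h2]
    calc ‖-f x‖ ≤ K * |x - a| ^ m * |a - x| := this
      _ = K * |x - a| ^ (m+1) := by rw [abs_sub_comm a x]; ring

lemma taylor_est (u u1 u2 u3 u4 : ℝ → ℝ) (M : ℝ)
    (h0 : ∀ x ∈ Icc (0:ℝ) 1, HasDerivWithinAt u (u1 x) (Icc (0:ℝ) 1) x)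
    (h1 : ∀ x ∈ Icc (0:ℝ) 1, HasDerivWithinAt u1 (u2 x) (Icc (0:ℝ) 1) x)
    (h2 : ∀ x ∈ Icc (0:ℝ) 1, HasDerivWithinAt u2 (u3 x) (Icc (0:ℝ) 1) x)
    (h3 : ∀ x ∈ Icc (0:ℝ) 1, HasDerivWithinAt u3 (u4 x) (Icc (0:ℝ) 1) x)
    (h4c : ContinuousOn u4 (Icc (0:ℝ) 1))
    (h4b : ∀ x ∈ Icc (0:ℝ) 1, |u4 x| ≤ M) (a : ℝ) (ha : a ∈ Icc (0:ℝ) 1) :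
    (∀ x ∈ Icc (0:ℝ) 1, |u3 x - u3 a| ≤ M * |x - a|) ∧
    (∀ x ∈ Icc (0:ℝ) 1, |u2 x - u2 a - u3 a * (x - a)| ≤ M * |x - a|^2) ∧
    (∀ x ∈ Icc (0:ℝ) 1,
      |u x - (u a + u1 a * (x - a) + u2 a * (x - a)^2/2 + u3 a * (x - a)^3/6)|
        ≤ M * |x - a|^4) := by
  have P1 : ∀ x ∈ Icc (0:ℝ) 1, |u3 x - u3 a| ≤ M * |x - a|^(0+1) := by
    refine bound_step _ u4 M 0 a ha (fun x hx => (h3 x hx).sub_const _) h4c (by simp) ?_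
    intro x hx; simpa using h4b x hx
  have P1' : ∀ x ∈ Icc (0:ℝ) 1, |u3 x - u3 a| ≤ M * |x - a| := by
    intro x hx; simpa using P1 x hx
  have hu3c : ContinuousOn u3 (Icc (0:ℝ) 1) := fun x hx => (h3 x hx).continuousWithinAt
  have P2 : ∀ x ∈ Icc (0:ℝ) 1, |u2 x - u2 a - u3 a * (x - a)| ≤ M * |x - a|^(1+1) := by
    refine bound_step _ (fun x => u3 x - u3 a) M 1 a ha ?_ (hu3c.sub continuousOn_const)
      (by simp) (fun x hx => by simpa using P1' x hx)
    intro x hx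
    have hb := (h2 x hx).sub
      (((((hasDerivAt_id' (x := x))).sub_const a).const_mul (u3 a)).hasDerivWithinAt.const_add
        (u2 a))
    have hb' : HasDerivWithinAt (fun y => u2 y - u2 a - u3 a * (y - a))
        (u3 x - u3 a * 1) (Icc (0:ℝ) 1) x := hb.congr (fun y _ => by simp only [Pi.sub_apply, Pi.add_apply, Pi.pow_apply]; ring) (by simp only [Pi.sub_apply, Pi.add_apply, Pi.pow_apply]; ring)
    convert hb' using 1
    ring
  have hu2c : ContinuousOn u2 (Icc (0:ℝ) 1) := fun x hx => (h2 x hx).continuousWithinAt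
  have P3 : ∀ x ∈ Icc (0:ℝ) 1,
      |u1 x - u1 a - u2 a * (x - a) - u3 a * (x - a)^2/2| ≤ M * |x - a|^(2+1) := by
    refine bound_step _ (fun x => u2 x - u2 a - u3 a * (x - a)) M 2 a ha ?_
      ((hu2c.sub continuousOn_const).sub (continuousOn_const.mul
        ((continuousOn_id.sub continuousOn_const)))) (by simp) (fun x hx => P2 x hx)
    intro x hx
    have hq := (((hasDerivAt_id' (x := x)).sub_const a).pow 2).const_mul (u3 a) |>.div_const 2
    have hl := ((hasDerivAt_id' (x := x)).sub_const a).const_mul (u2 a)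
    have hb := (h1 x hx).sub (((hl.const_add (u1 a)).add hq).hasDerivWithinAt)
    have hb' : HasDerivWithinAt (fun y => u1 y - u1 a - u2 a * (y - a) - u3 a * (y - a)^2/2)
        (u2 x - (u2 a * 1 + u3 a * (↑2 * (x - a) ^ (2 - 1) * 1) / 2)) (Icc (0:ℝ) 1) x :=
      hb.congr (fun y _ => by simp only [Pi.sub_apply, Pi.add_apply, Pi.pow_apply]; ring) (by simp only [Pi.sub_apply, Pi.add_apply, Pi.pow_apply]; ring)
    convert hb' using 1
    push_cast; ring
  have hu1c : ContinuousOn u1 (Icc (0:ℝ) 1) := fun x hx => (h1 x hx).continuousWithinAt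
  have P4 : ∀ x ∈ Icc (0:ℝ) 1,
      |u x - (u a + u1 a * (x - a) + u2 a * (x - a)^2/2 + u3 a * (x - a)^3/6)|
        ≤ M * |x - a|^(3+1) := by
    refine bound_step _
      (fun x => u1 x - u1 a - u2 a * (x - a) - u3 a * (x - a)^2/2) M 3 a ha ?_
      (((hu1c.sub continuousOn_const).sub (continuousOn_const.mul
        (continuousOn_id.sub continuousOn_const))).sub
        ((continuousOn_const.mul ((continuousOn_id.sub continuousOn_const).pow 2)).div_const 2))
      (by simp) (fun x hx => P3 x hx)
    intro x hx
    have hq := (((hasDerivAt_id' (x := x)).sub_const a).pow 2).const_mul (u2 a) |>.div_const 2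
    have hcu := (((hasDerivAt_id' (x := x)).sub_const a).pow 3).const_mul (u3 a) |>.div_const 6
    have hl := ((hasDerivAt_id' (x := x)).sub_const a).const_mul (u1 a)
    have hb := (h0 x hx).sub ((((hl.const_add (u a)).add hq).add hcu).hasDerivWithinAt)
    have hb' : HasDerivWithinAt
        (fun y => u y - (u a + u1 a * (y - a) + u2 a * (y - a)^2/2 + u3 a * (y - a)^3/6))
        (u1 x - (u1 a * 1 + u2 a * (↑2 * (x - a) ^ (2 - 1) * 1) / 2
          + u3 a * (↑3 * (x - a) ^ (3 - 1) * 1) / 6)) (Icc (0:ℝ) 1) x :=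
      hb.congr (fun y _ => by simp only [Pi.sub_apply, Pi.add_apply, Pi.pow_apply]) (by simp only [Pi.sub_apply, Pi.add_apply, Pi.pow_apply])
    convert hb' using 1
    push_cast; ring
  exact ⟨P1', fun x hx => by simpa using P2 x hx, fun x hx => by simpa using P4 x hx⟩

noncomputable def hat (N j : ℕ) : ℝ → ℝ := fun y => max 0 (1 - |(N:ℝ)*y - j|)

lemma hat_nonneg (N j : ℕ) (y : ℝ) : 0 ≤ hat N j y := le_max_left _ _

lemma hat_le_one (N j : ℕ) (y : ℝ) : hat N j y ≤ 1 := by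
  unfold hat
  have := abs_nonneg ((N:ℝ)*y - j)
  rcases max_cases (0:ℝ) (1 - |(N:ℝ)*y - j|) with ⟨h, _⟩ | ⟨h, _⟩ <;> rw [h] <;> linarith

lemma hat_eq_zero_left (N j : ℕ) (y : ℝ) (h : (N:ℝ)*y ≤ (j:ℝ) - 1) : hat N j y = 0 := by
  unfold hat
  rw [max_eq_left]
  have h1 : ((j:ℝ)) - (N:ℝ)*y ≥ 1 := by linarith
  have h2 : |(N:ℝ)*y - j| = j - (N:ℝ)*y := by rw [abs_sub_comm]; exact abs_of_nonneg (by linarith)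
  rw [h2]; linarith

lemma hat_eq_zero_right (N j : ℕ) (y : ℝ) (h : (j:ℝ) + 1 ≤ (N:ℝ)*y) : hat N j y = 0 := by
  unfold hat
  rw [max_eq_left]
  have h2 : |(N:ℝ)*y - j| = (N:ℝ)*y - j := abs_of_nonneg (by linarith)
  rw [h2]; linarith

lemma hat_left_cell (N j : ℕ) (y : ℝ) (h1 : (j:ℝ) - 1 ≤ (N:ℝ)*y) (h2 : (N:ℝ)*y ≤ j) :
    hat N j y = (N:ℝ)*y + (1 - j) := by
  unfold hat
  have h3 : |(N:ℝ)*y - j| = j - (N:ℝ)*y := by rw [abs_sub_comm]; exact abs_of_nonneg (by linarith)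
  rw [h3, max_eq_right (by linarith)]; ring

lemma hat_right_cell (N j : ℕ) (y : ℝ) (h1 : (j:ℝ) ≤ (N:ℝ)*y) (h2 : (N:ℝ)*y ≤ (j:ℝ) + 1) :
    hat N j y = -((N:ℝ)*y) + (1 + j) := by
  unfold hat
  have h3 : |(N:ℝ)*y - j| = (N:ℝ)*y - j := abs_of_nonneg (by linarith)
  rw [h3, max_eq_right (by linarith)]; ring

lemma hat_mem (N j : ℕ) (hN : 0 < N) (hj0 : 1 ≤ j) (hjN : j < N) : hat N j ∈ PL0 N := by
  have hN0 : (0:ℝ) < N := by exact_mod_cast hN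
  refine ⟨⟨(Continuous.max continuous_const (by continuity)).continuousOn, ?_⟩, ?_, ?_⟩
  · intro k hk
    have cell_bounds : ∀ y ∈ Icc ((k:ℝ)/N) (((k:ℝ)+1)/N),
        (k:ℝ) ≤ (N:ℝ)*y ∧ (N:ℝ)*y ≤ (k:ℝ)+1 := by
      intro y hy
      constructor
      · have := hy.1; rw [div_le_iff₀ hN0] at this; linarith [this]
      · have := hy.2; rw [le_div_iff₀ hN0] at this; linarith [this]
    rcases lt_trichotomy (k+1) j with hlt | heq | hgt
    · refine ⟨0, 0, fun y hy => ?_⟩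
      obtain ⟨_, h2⟩ := cell_bounds y hy
      have : ((k:ℝ)+1) ≤ (j:ℝ) - 1 := by
        have : (k:ℝ) + 2 ≤ j := by exact_mod_cast hlt
        linarith
      rw [hat_eq_zero_left N j y (by linarith)]; ring
    · refine ⟨(N:ℝ), 1 - j, fun y hy => ?_⟩
      obtain ⟨h1, h2⟩ := cell_bounds y hy
      have hk : (k:ℝ) = (j:ℝ) - 1 := by
        have : (k:ℝ) + 1 = j := by exact_mod_cast heq
        linarith
      rw [hat_left_cell N j y (by linarith) (by rw [hk] at h2; linarith)]
    · rcases eq_or_lt_of_le (Nat.succ_le_of_lt hgt) with heq2 | hlt2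
      · -- j + 1 = k + 1, i.e. k = j
        have hk : (k:ℝ) = j := by
          have : j + 1 = k + 1 := heq2
          have : j = k := by omega
          exact_mod_cast this.symm
        refine ⟨-(N:ℝ), 1 + j, fun y hy => ?_⟩
        obtain ⟨h1, h2⟩ := cell_bounds y hy
        rw [hat_right_cell N j y (by rw [hk] at h1; linarith) (by rw [hk] at h2; linarith)]
        ring
      · -- j + 1 ≤ k
        have : (j:ℝ) + 1 ≤ (k:ℝ) := by
          have : j + 1 ≤ k := by omega
          exact_mod_cast this
        refine ⟨0, 0, fun y hy => ?_⟩
        obtain ⟨h1, _⟩ := cell_bounds y hy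
        rw [hat_eq_zero_right N j y (by linarith)]; ring
  · exact hat_eq_zero_left N j 0 (by push_cast; simp; exact_mod_cast hj0)
  · exact hat_eq_zero_right N j 1 (by push_cast; simp; exact_mod_cast hjN)

/-- cubic Taylor polynomial shape -/
noncomputable def tpoly (c0 c1 c2 c3 a y : ℝ) : ℝ := c0 + c1*(y-a) + c2*(y-a)^2/2 + c3*(y-a)^3/6

/-- antiderivative of `tpoly * (c*y+d)`, as a function of `t = y - a` -/
noncomputable def tprim (c0 c1 c2 c3 a c d t : ℝ) : ℝ :=
  c0*(c*a+d)*t + (c0*c + c1*(c*a+d))*t^2/2 + (c1*c + c2*(c*a+d)/2)*t^3/3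
  + (c2*c/2 + c3*(c*a+d)/6)*t^4/4 + (c3*c/6)*t^5/5

lemma integ_TA (c0 c1 c2 c3 a c d p q : ℝ) :
    ∫ y in p..q, tpoly c0 c1 c2 c3 a y * (c*y + d)
      = tprim c0 c1 c2 c3 a c d (q-a) - tprim c0 c1 c2 c3 a c d (p-a) := by
  have hD : ∀ y : ℝ, HasDerivAt (fun y => tprim c0 c1 c2 c3 a c d (y-a))
      (tpoly c0 c1 c2 c3 a y * (c*y + d)) y := by
    intro y
    have ht : ∀ k : ℕ, HasDerivAt (fun y : ℝ => (y-a)^k) (k*(y-a)^(k-1)) y := by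
      intro k
      have := ((hasDerivAt_id' (x := y)).sub_const a).pow k
      exact this.congr_deriv (by ring)
    have h1 := (ht 1).const_mul (c0*(c*a+d))
    have h2 := ((ht 2).const_mul (c0*c + c1*(c*a+d))).div_const 2
    have h3 := ((ht 3).const_mul (c1*c + c2*(c*a+d)/2)).div_const 3
    have h4 := ((ht 4).const_mul (c2*c/2 + c3*(c*a+d)/6)).div_const 4
    have h5 := ((ht 5).const_mul (c3*c/6)).div_const 5
    have hb := (((h1.add h2).add h3).add h4).add h5
    have hfun : (fun y => tprim c0 c1 c2 c3 a c d (y-a))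
        = (fun x => c0*(c*a+d)*(x-a)^1 + (c0*c + c1*(c*a+d))*(x-a)^2/2
          + (c1*c + c2*(c*a+d)/2)*(x-a)^3/3 + (c2*c/2 + c3*(c*a+d)/6)*(x-a)^4/4
          + (c3*c/6)*(x-a)^5/5) := by
      funext z; simp [tprim]
    rw [hfun]
    refine hb.congr_deriv ?_
    push_cast
    norm_num
    simp [tpoly]
    ring
  exact integral_eq_sub_of_hasDerivAt (fun y _ => hD y)
    ((Continuous.intervalIntegrable (by unfold tpoly; continuity) p q))

lemma split4 (f : ℝ → ℝ) (p q r : ℝ) (h0 : (0:ℝ) ≤ p) (h1 : p ≤ q) (h2 : q ≤ r) (h3 : r ≤ 1)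
    (hf : ContinuousOn f (Icc (0:ℝ) 1)) :
    ∫ y in (0:ℝ)..1, f y = (∫ y in (0:ℝ)..p, f y) + (∫ y in p..q, f y)
      + (∫ y in q..r, f y) + (∫ y in r..(1:ℝ), f y) := by
  have ii : ∀ a b : ℝ, 0 ≤ a → a ≤ b → b ≤ 1 → IntervalIntegrable f volume a b := by
    intro a b ha hab hb
    apply ContinuousOn.intervalIntegrable
    rw [uIcc_of_le hab]; exact hf.mono (Icc_subset_Icc ha hb)
  have e3 := integral_add_adjacent_intervals (ii q r (le_trans h0 h1) h2 h3)
    (ii r 1 (le_trans (le_trans h0 h1) h2) h3 le_rfl)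
  have e2 := integral_add_adjacent_intervals (ii p q h0 h1 (le_trans h2 h3))
    (ii q 1 (le_trans h0 h1) (le_trans h2 h3) le_rfl)
  have e1 := integral_add_adjacent_intervals (ii 0 p le_rfl h0 (le_trans h1 (le_trans h2 h3)))
    (ii p 1 h0 (le_trans h1 (le_trans h2 h3)) le_rfl)
  linarith

/-- **Superaccuracy of cell averages of the L² projection error onto `S_{h,0}`.** -/
theorem stmt_4 :
    ∃ C : ℝ → ℝ,
      ∀ (u Pu : ℝ → ℝ) (N : ℕ), 2 ≤ N →
        ContDiffOn ℝ 4 u (Icc (0:ℝ) 1) → u 0 = 0 → u 1 = 0 →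
        iteratedDerivWithin 2 u (Icc (0:ℝ) 1) 0 = 0 →
        iteratedDerivWithin 2 u (Icc (0:ℝ) 1) 1 = 0 →
        IsL2ProjOn (PL0 N) u Pu →
        ∀ i < N,
          |∫ y in ((i : ℝ)/N)..(((i : ℝ)+1)/N), (u y - Pu y)|
            ≤ C (sSup ((fun y => |iteratedDerivWithin 4 u (Icc (0:ℝ) 1) y|) '' Icc (0:ℝ) 1))
                * ((1:ℝ)/N) ^ 5 := by
  classical
  refine ⟨fun z => 100 * z, ?_⟩
  intro u Pu N hN hu hu0 hu1 hu20 hu21 hproj i hi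
  have hNn : 0 < N := by omega
  have hNR : (0:ℝ) < N := by exact_mod_cast hNn
  have hNe : (N:ℝ) ≠ 0 := ne_of_gt hNR
  have hH : (0:ℝ) < 1/N := by positivity
  have hUD : UniqueDiffOn ℝ (Icc (0:ℝ) 1) := uniqueDiffOn_Icc (by norm_num)
  set u1 := iteratedDerivWithin 1 u (Icc (0:ℝ) 1) with hu1d
  set u2 := iteratedDerivWithin 2 u (Icc (0:ℝ) 1) with hu2d
  set u3 := iteratedDerivWithin 3 u (Icc (0:ℝ) 1) with hu3d
  set u4 := iteratedDerivWithin 4 u (Icc (0:ℝ) 1) with hu4d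
  set M := sSup ((fun y => |u4 y|) '' Icc (0:ℝ) 1) with hMdef
  show |∫ y in ((i:ℝ)/N)..(((i:ℝ)+1)/N), (u y - Pu y)| ≤ 100 * M * ((1:ℝ)/N)^5
  -- derivative chain
  have hkey : ∀ k : ℕ, k < 4 → ∀ x ∈ Icc (0:ℝ) 1, HasDerivWithinAt (iteratedDerivWithin k u (Icc (0:ℝ) 1))
      (iteratedDerivWithin (k+1) u (Icc (0:ℝ) 1) x) (Icc (0:ℝ) 1) x := by
    intro k hk x hx
    have hdiff : DifferentiableOn ℝ (iteratedDerivWithin k u (Icc (0:ℝ) 1)) (Icc (0:ℝ) 1) :=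
      hu.differentiableOn_iteratedDerivWithin (by exact_mod_cast hk) hUD
    rw [iteratedDerivWithin_succ]
    exact (hdiff x hx).hasDerivWithinAt
  have hd0 : ∀ x ∈ Icc (0:ℝ) 1, HasDerivWithinAt u (u1 x) (Icc (0:ℝ) 1) x := by
    intro x hx
    exact (hkey 0 (by norm_num) x hx).congr (fun y _ => by simp) (by simp)
  have hd1 : ∀ x ∈ Icc (0:ℝ) 1, HasDerivWithinAt u1 (u2 x) (Icc (0:ℝ) 1) x := by
    intro x hx; rw [hu1d, hu2d]; exact hkey 1 (by norm_num) x hx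
  have hd2 : ∀ x ∈ Icc (0:ℝ) 1, HasDerivWithinAt u2 (u3 x) (Icc (0:ℝ) 1) x := by
    intro x hx; rw [hu2d, hu3d]; exact hkey 2 (by norm_num) x hx
  have hd3 : ∀ x ∈ Icc (0:ℝ) 1, HasDerivWithinAt u3 (u4 x) (Icc (0:ℝ) 1) x := by
    intro x hx; rw [hu3d, hu4d]; exact hkey 3 (by norm_num) x hx
  have hu4c : ContinuousOn u4 (Icc (0:ℝ) 1) := by
    rw [hu4d]; exact hu.continuousOn_iteratedDerivWithin (by norm_num) hUD
  have hucont : ContinuousOn u (Icc (0:ℝ) 1) := hu.continuousOn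
  have hMb : ∀ y ∈ Icc (0:ℝ) 1, |u4 y| ≤ M := by
    intro y hy
    apply le_csSup
    · exact (isCompact_Icc.image_of_continuousOn hu4c.abs).bddAbove
    · exact mem_image_of_mem _ hy
  have hM0 : 0 ≤ M := le_trans (abs_nonneg _) (hMb 0 (by norm_num))
  have tay := taylor_est u u1 u2 u3 u4 M hd0 hd1 hd2 hd3 hu4c hMb
  -- Pu structure
  obtain ⟨⟨hPuc, hPuaff⟩, hPu0, hPu1⟩ := hproj.1
  choose! A B hAB using hPuaff
  set v : ℕ → ℝ := fun k => Pu ((k:ℝ)/N) with hvdef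
  set ee : ℕ → ℝ := fun k => u ((k:ℝ)/N) - v k with heedef
  set ep : ℕ → ℝ := fun k => ee k - ((1:ℝ)/N)^2/12 * u2 ((k:ℝ)/N) with hepdef
  have hnode : ∀ k : ℕ, k ≤ N → ((k:ℝ)/N) ∈ Icc (0:ℝ) 1 := by
    intro k hk
    constructor
    · positivity
    · rw [div_le_one hNR]; exact_mod_cast hk
  have hInt : ∀ (f : ℝ → ℝ), ContinuousOn f (Icc (0:ℝ) 1) → ∀ p q : ℝ, 0 ≤ p → p ≤ q → q ≤ 1 →
      IntervalIntegrable f volume p q := by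
    intro f hf p q h0 hpq h1
    apply ContinuousOn.intervalIntegrable
    rw [uIcc_of_le hpq]
    exact hf.mono (Icc_subset_Icc h0 h1)
  have cellu : ∀ a p q c d : ℝ, a ∈ Icc (0:ℝ) 1 → 0 ≤ p → p ≤ q → q ≤ 1 →
      (∀ y ∈ Icc p q, |y - a| ≤ 1/N) → (∀ y ∈ Icc p q, |c*y+d| ≤ 1) →
      |(∫ y in p..q, u y * (c*y+d))
        - (tprim (u a) (u1 a) (u2 a) (u3 a) a c d (q-a)
           - tprim (u a) (u1 a) (u2 a) (u3 a) a c d (p-a))|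
        ≤ M * ((1:ℝ)/N)^4 * (q - p) := by
    intro a p q c d ha h0p hpq hq1 hclose hw
    have hIccS : Icc p q ⊆ Icc (0:ℝ) 1 := Icc_subset_Icc h0p hq1
    have hT := (tay a ha).2.2
    have hcw : Continuous (fun y : ℝ => c*y+d) := by fun_prop
    have htc : Continuous (fun y => tpoly (u a) (u1 a) (u2 a) (u3 a) a y) := by
      unfold tpoly; fun_prop
    have int1 : IntervalIntegrable
        (fun y => tpoly (u a) (u1 a) (u2 a) (u3 a) a y * (c*y+d)) volume p q :=
      Continuous.intervalIntegrable (htc.mul hcw) p q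
    have int2 : IntervalIntegrable
        (fun y => (u y - tpoly (u a) (u1 a) (u2 a) (u3 a) a y) * (c*y+d)) volume p q :=
      hInt _ (((hucont.sub htc.continuousOn).mul hcw.continuousOn)) p q h0p hpq hq1
    have hsplit : ∫ y in p..q, u y * (c*y+d)
        = (∫ y in p..q, tpoly (u a) (u1 a) (u2 a) (u3 a) a y * (c*y+d))
          + ∫ y in p..q, (u y - tpoly (u a) (u1 a) (u2 a) (u3 a) a y) * (c*y+d) := by
      rw [← intervalIntegral.integral_add int1 int2]
      apply intervalIntegral.integral_congr
      intro y _
      simp only [tpoly]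
      ring
    rw [hsplit, integ_TA, add_sub_cancel_left]
    apply integ_bound p q hpq _ _
    intro y hy
    have hT' : |u y - tpoly (u a) (u1 a) (u2 a) (u3 a) a y| ≤ M * |y - a|^4 := by
      simpa [tpoly] using hT y (hIccS hy)
    have hw' := hw y hy
    have hcl := hclose y hy
    have hpow : |y - a|^4 ≤ ((1:ℝ)/N)^4 :=
      pow_le_pow_left₀ (abs_nonneg _) hcl 4
    calc |(u y - tpoly (u a) (u1 a) (u2 a) (u3 a) a y) * (c*y+d)|
        = |u y - tpoly (u a) (u1 a) (u2 a) (u3 a) a y| * |c*y+d| := abs_mul _ _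
      _ ≤ (M * |y - a|^4) * 1 := by
          apply mul_le_mul hT' hw' (abs_nonneg _)
          positivity
      _ ≤ M * ((1:ℝ)/N)^4 := by
          rw [mul_one]
          exact mul_le_mul_of_nonneg_left hpow hM0
  have hPuInt : ∀ k : ℕ, k < N → ∀ c d p q : ℝ, p = (k:ℝ)/N → q = ((k:ℝ)+1)/N →
      ∫ y in p..q, Pu y * (c*y+d)
        = tprim (B k) (A k) 0 0 0 c d q - tprim (B k) (A k) 0 0 0 c d p := by
    intro k hk c d p q hp hq
    subst hp hq
    have hcell : (k:ℝ)/N ≤ ((k:ℝ)+1)/N := by gcongr; linarith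
    have hEq : EqOn (fun y => Pu y * (c*y+d))
        (fun y => tpoly (B k) (A k) 0 0 0 y * (c*y+d))
        (uIcc ((k:ℝ)/N) (((k:ℝ)+1)/N)) := by
      intro y hy
      rw [uIcc_of_le hcell] at hy
      have hPy := hAB k hk y hy
      simp only [tpoly]
      rw [hPy]
      ring
    rw [intervalIntegral.integral_congr hEq, integ_TA, sub_zero, sub_zero]
  have mass0 : ∀ j : ℕ, j + 2 ≤ N →
      (∫ y in ((j:ℝ)/N)..(((j:ℝ)+1)/N), u y * ((N:ℝ)*y + (-(j:ℝ))))
      + (∫ y in (((j:ℝ)+1)/N)..(((j:ℝ)+2)/N), u y * (-(N:ℝ)*y + ((j:ℝ)+2)))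
      = (∫ y in ((j:ℝ)/N)..(((j:ℝ)+1)/N), Pu y * ((N:ℝ)*y + (-(j:ℝ))))
      + (∫ y in (((j:ℝ)+1)/N)..(((j:ℝ)+2)/N), Pu y * (-(N:ℝ)*y + ((j:ℝ)+2))) := by
    intro j hj
    have hp0 : (0:ℝ) ≤ (j:ℝ)/N := by positivity
    have hpq : (j:ℝ)/N ≤ ((j:ℝ)+1)/N := by gcongr; linarith
    have hqr : ((j:ℝ)+1)/N ≤ ((j:ℝ)+2)/N := by gcongr; linarith
    have hr1 : ((j:ℝ)+2)/N ≤ 1 := by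
      rw [div_le_one hNR]
      have : ((j:ℕ):ℝ) + 2 ≤ (N:ℝ) := by exact_mod_cast hj
      linarith
    have hhatc : Continuous (hat N (j+1)) := by
      apply Continuous.max continuous_const
      exact continuous_const.sub ((continuous_const.mul continuous_id).sub continuous_const).abs
    have hfc : ContinuousOn (fun y => (u y - Pu y) * hat N (j+1) y) (Icc (0:ℝ) 1) :=
      (hucont.sub hPuc).mul hhatc.continuousOn
    have orth : ∫ y in (0:ℝ)..1, (u y - Pu y) * hat N (j+1) y = 0 := by
      have := hproj.2 (hat N (j+1)) (hat_mem N (j+1) hNn (by omega) (by omega))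
      simpa [ip] using this
    have hsp := split4 _ ((j:ℝ)/N) (((j:ℝ)+1)/N) (((j:ℝ)+2)/N) hp0 hpq hqr hr1 hfc
    have z1 : (∫ y in (0:ℝ)..((j:ℝ)/N), (u y - Pu y) * hat N (j+1) y) = 0 := by
      rw [intervalIntegral.integral_congr (g := fun _ => (0:ℝ)) ?_, intervalIntegral.integral_zero]
      intro y hy
      rw [uIcc_of_le hp0] at hy
      have hy2 : (N:ℝ)*y ≤ (j:ℝ) := by
        have := hy.2
        rw [le_div_iff₀ hNR] at this
        linarith
      have := hat_eq_zero_left N (j+1) y (by push_cast; linarith)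
      simp [this]
    have z4 : (∫ y in (((j:ℝ)+2)/N)..(1:ℝ), (u y - Pu y) * hat N (j+1) y) = 0 := by
      rw [intervalIntegral.integral_congr (g := fun _ => (0:ℝ)) ?_, intervalIntegral.integral_zero]
      intro y hy
      rw [uIcc_of_le hr1] at hy
      have hy2 : (j:ℝ) + 2 ≤ (N:ℝ)*y := by
        have := hy.1
        rw [div_le_iff₀ hNR] at this
        linarith
      have := hat_eq_zero_right N (j+1) y (by push_cast; linarith)
      simp [this]
    have m1 : (∫ y in ((j:ℝ)/N)..(((j:ℝ)+1)/N), (u y - Pu y) * hat N (j+1) y)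
        = ∫ y in ((j:ℝ)/N)..(((j:ℝ)+1)/N), (u y - Pu y) * ((N:ℝ)*y + (-(j:ℝ))) := by
      apply intervalIntegral.integral_congr
      intro y hy
      rw [uIcc_of_le hpq] at hy
      have hy1 : (j:ℝ) ≤ (N:ℝ)*y := by
        have := hy.1; rw [div_le_iff₀ hNR] at this; linarith
      have hy2 : (N:ℝ)*y ≤ (j:ℝ)+1 := by
        have := hy.2; rw [le_div_iff₀ hNR] at this; linarith
      have hval := hat_left_cell N (j+1) y (by push_cast; linarith) (by push_cast; linarith)
      simp only [hval]
      push_cast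
      ring
    have m2 : (∫ y in (((j:ℝ)+1)/N)..(((j:ℝ)+2)/N), (u y - Pu y) * hat N (j+1) y)
        = ∫ y in (((j:ℝ)+1)/N)..(((j:ℝ)+2)/N), (u y - Pu y) * (-(N:ℝ)*y + ((j:ℝ)+2)) := by
      apply intervalIntegral.integral_congr
      intro y hy
      rw [uIcc_of_le hqr] at hy
      have hy1 : (j:ℝ)+1 ≤ (N:ℝ)*y := by
        have := hy.1; rw [div_le_iff₀ hNR] at this; linarith
      have hy2 : (N:ℝ)*y ≤ (j:ℝ)+2 := by
        have := hy.2; rw [le_div_iff₀ hNR] at this; linarith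
      have hval := hat_right_cell N (j+1) y (by push_cast; linarith) (by push_cast; linarith)
      simp only [hval]
      push_cast
      ring
    have wsub : ∀ pp qq c d : ℝ, 0 ≤ pp → pp ≤ qq → qq ≤ 1 →
        (∫ y in pp..qq, (u y - Pu y) * (c*y+d))
          = (∫ y in pp..qq, u y * (c*y+d)) - ∫ y in pp..qq, Pu y * (c*y+d) := by
      intro pp qq c d h0 h1 h2
      have hcw : Continuous (fun y : ℝ => c*y+d) := by fun_prop
      rw [← intervalIntegral.integral_sub
        (hInt (fun y => u y * (c*y+d)) (hucont.mul hcw.continuousOn) pp qq h0 h1 h2)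
        (hInt (fun y => Pu y * (c*y+d)) (hPuc.mul hcw.continuousOn) pp qq h0 h1 h2)]
      apply intervalIntegral.integral_congr
      intro y _
      ring
    rw [z1, z4, m1, m2] at hsp
    rw [wsub _ _ _ _ hp0 hpq (le_trans hqr hr1), wsub _ _ _ _ (le_trans hp0 hpq) hqr hr1] at hsp
    rw [orth] at hsp
    linarith
  have massEq : ∀ j : ℕ, j + 2 ≤ N →
      |((1:ℝ)/N) * u (((j:ℝ)+1)/N) + ((1:ℝ)/N)^3 * u2 (((j:ℝ)+1)/N) / 12
        - (1/(6*(N:ℝ))) * (v j + 4 * v (j+1) + v (j+2))| ≤ 2 * M * ((1:ℝ)/N)^5 := by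
    intro j hj
    have hm := mass0 j hj
    set a : ℝ := ((j:ℝ)+1)/N with hadef
    have hp0 : (0:ℝ) ≤ (j:ℝ)/N := by positivity
    have hpq : (j:ℝ)/N ≤ ((j:ℝ)+1)/N := by gcongr; linarith
    have hqr : ((j:ℝ)+1)/N ≤ ((j:ℝ)+2)/N := by gcongr; linarith
    have hjN : ((j:ℝ)) + 2 ≤ (N:ℝ) := by exact_mod_cast hj
    have hr1 : ((j:ℝ)+2)/N ≤ 1 := by rw [div_le_one hNR]; linarith
    have hq1 : ((j:ℝ)+1)/N ≤ 1 := le_trans hqr hr1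
    have haS : a ∈ Icc (0:ℝ) 1 := ⟨by positivity, hq1⟩
    have hgap1 : ((j:ℝ)+1)/N - (j:ℝ)/N = 1/N := by
      rw [div_sub_div_same]; ring_nf
    have hgap2 : ((j:ℝ)+2)/N - ((j:ℝ)+1)/N = 1/N := by
      rw [div_sub_div_same]; ring_nf
    have hL := cellu a ((j:ℝ)/N) (((j:ℝ)+1)/N) (N:ℝ) (-(j:ℝ)) haS hp0 hpq hq1
      (by
        intro y hy
        rw [abs_le]
        constructor
        · have := hy.1; rw [hadef]; linarith [hgap1]
        · have := hy.2; rw [hadef]; linarith)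
      (by
        intro y hy
        have hy1 : (j:ℝ) ≤ (N:ℝ)*y := by
          have := hy.1; rw [div_le_iff₀ hNR] at this; linarith
        have hy2 : (N:ℝ)*y ≤ (j:ℝ)+1 := by
          have := hy.2; rw [le_div_iff₀ hNR] at this; linarith
        rw [abs_le]; constructor <;> linarith)
    have hR := cellu a (((j:ℝ)+1)/N) (((j:ℝ)+2)/N) (-(N:ℝ)) ((j:ℝ)+2) haS (by positivity) hqr hr1
      (by
        intro y hy
        rw [abs_le]
        constructor
        · have := hy.1; rw [hadef]; linarith
        · have := hy.2; rw [hadef]; linarith [hgap2])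
      (by
        intro y hy
        have hy1 : (j:ℝ)+1 ≤ (N:ℝ)*y := by
          have := hy.1; rw [div_le_iff₀ hNR] at this; linarith
        have hy2 : (N:ℝ)*y ≤ (j:ℝ)+2 := by
          have := hy.2; rw [le_div_iff₀ hNR] at this; linarith
        rw [abs_le]; constructor <;> linarith)
    have hPL := hPuInt j (by omega) (N:ℝ) (-(j:ℝ)) ((j:ℝ)/N) (((j:ℝ)+1)/N) rfl rfl
    have hPR := hPuInt (j+1) (by omega) (-(N:ℝ)) ((j:ℝ)+2) (((j:ℝ)+1)/N) (((j:ℝ)+2)/N)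
      (by push_cast; ring) (by push_cast; ring)
    -- nodal values in terms of the affine pieces
    have hv1 : v j = A j * ((j:ℝ)/N) + B j := hAB j (by omega) _ ⟨le_rfl, hpq⟩
    have hv2 : v (j+1) = A j * (((j:ℝ)+1)/N) + B j := by
      have hcast : ((j+1:ℕ):ℝ) = (j:ℝ)+1 := by push_cast; ring
      have hmem : (((j:ℝ)+1)/N) ∈ Icc ((j:ℝ)/N) (((j:ℝ)+1)/N) := ⟨hpq, le_rfl⟩
      have := hAB j (by omega) _ hmem
      rw [hvdef]
      simp only [hcast]
      exact this
    have hv2' : v (j+1) = A (j+1) * (((j:ℝ)+1)/N) + B (j+1) := by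
      have hcast : ((j+1:ℕ):ℝ) = (j:ℝ)+1 := by push_cast; ring
      have hmem : (((j:ℝ)+1)/N) ∈ Icc (((j+1:ℕ):ℝ)/N) ((((j+1:ℕ):ℝ)+1)/N) := by
        rw [hcast]
        exact ⟨le_rfl, by gcongr <;> linarith⟩
      have := hAB (j+1) (by omega) _ hmem
      rw [hvdef]
      simp only [hcast]
      exact this
    have hv3 : v (j+2) = A (j+1) * (((j:ℝ)+2)/N) + B (j+1) := by
      have hcast1 : ((j+2:ℕ):ℝ) = (j:ℝ)+2 := by push_cast; ring
      have hcast : ((j+1:ℕ):ℝ) = (j:ℝ)+1 := by push_cast; ring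
      have hmem : (((j:ℝ)+2)/N) ∈ Icc (((j+1:ℕ):ℝ)/N) ((((j+1:ℕ):ℝ)+1)/N) := by
        rw [hcast]
        constructor
        · gcongr <;> linarith
        · apply le_of_eq; rw [div_eq_div_iff hNe hNe] <;> try ring
      have := hAB (j+1) (by omega) _ hmem
      rw [hvdef]
      simp only [hcast1]
      exact this
    have eqP : (tprim (B j) (A j) 0 0 0 (N:ℝ) (-(j:ℝ)) (((j:ℝ)+1)/N)
          - tprim (B j) (A j) 0 0 0 (N:ℝ) (-(j:ℝ)) ((j:ℝ)/N))
        + (tprim (B (j+1)) (A (j+1)) 0 0 0 (-(N:ℝ)) ((j:ℝ)+2) (((j:ℝ)+2)/N)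
          - tprim (B (j+1)) (A (j+1)) 0 0 0 (-(N:ℝ)) ((j:ℝ)+2) (((j:ℝ)+1)/N))
        = (1/(6*(N:ℝ))) * (v j + 4 * v (j+1) + v (j+2)) := by
      have hsplit4 : v j + 4*v (j+1) + v (j+2)
          = (A j*((j:ℝ)/N)+B j) + 2*(A j*(((j:ℝ)+1)/N)+B j)
            + 2*(A (j+1)*(((j:ℝ)+1)/N)+B (j+1)) + (A (j+1)*(((j:ℝ)+2)/N)+B (j+1)) := by
        rw [hv1, hv3]; linarith [hv2, hv2']
      rw [hsplit4]
      simp only [tprim]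
      field_simp
      ring
    have idU : (tprim (u a) (u1 a) (u2 a) (u3 a) a (N:ℝ) (-(j:ℝ)) ((((j:ℝ)+1)/N)-a)
          - tprim (u a) (u1 a) (u2 a) (u3 a) a (N:ℝ) (-(j:ℝ)) ((j:ℝ)/N-a))
        + (tprim (u a) (u1 a) (u2 a) (u3 a) a (-(N:ℝ)) ((j:ℝ)+2) ((((j:ℝ)+2)/N)-a)
          - tprim (u a) (u1 a) (u2 a) (u3 a) a (-(N:ℝ)) ((j:ℝ)+2) ((((j:ℝ)+1)/N)-a))
        = ((1:ℝ)/N) * u a + ((1:ℝ)/N)^3 * u2 a / 12 := by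
      simp only [tprim, hadef]
      field_simp
      ring
    set XL := tprim (u a) (u1 a) (u2 a) (u3 a) a (N:ℝ) (-(j:ℝ)) ((((j:ℝ)+1)/N)-a)
      - tprim (u a) (u1 a) (u2 a) (u3 a) a (N:ℝ) (-(j:ℝ)) ((j:ℝ)/N-a) with hXLd
    set XR := tprim (u a) (u1 a) (u2 a) (u3 a) a (-(N:ℝ)) ((j:ℝ)+2) ((((j:ℝ)+2)/N)-a)
      - tprim (u a) (u1 a) (u2 a) (u3 a) a (-(N:ℝ)) ((j:ℝ)+2) ((((j:ℝ)+1)/N)-a) with hXRd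
    rw [hPL, hPR] at hm
    have hfin : ((1:ℝ)/N) * u a + ((1:ℝ)/N)^3 * u2 a / 12
        - (1/(6*(N:ℝ))) * (v j + 4 * v (j+1) + v (j+2))
        = (XL - (∫ y in ((j:ℝ)/N)..(((j:ℝ)+1)/N), u y * ((N:ℝ)*y + (-(j:ℝ)))))
          + (XR - (∫ y in (((j:ℝ)+1)/N)..(((j:ℝ)+2)/N), u y * (-(N:ℝ)*y + ((j:ℝ)+2)))) := by
      rw [← idU, ← eqP]
      linarith [hm]
    rw [hfin]
    have e1 : |XL - (∫ y in ((j:ℝ)/N)..(((j:ℝ)+1)/N), u y * ((N:ℝ)*y + (-(j:ℝ))))|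
        ≤ M * ((1:ℝ)/N)^4 * (((j:ℝ)+1)/N - (j:ℝ)/N) := by rw [abs_sub_comm]; exact hL
    have e2 : |XR - (∫ y in (((j:ℝ)+1)/N)..(((j:ℝ)+2)/N), u y * (-(N:ℝ)*y + ((j:ℝ)+2)))|
        ≤ M * ((1:ℝ)/N)^4 * (((j:ℝ)+2)/N - (((j:ℝ)+1)/N)) := by rw [abs_sub_comm]; exact hR
    have hlen1 : M * ((1:ℝ)/N)^4 * (((j:ℝ)+1)/N - (j:ℝ)/N) = M * ((1:ℝ)/N)^5 := by
      rw [hgap1]; ring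
    have hlen2 : M * ((1:ℝ)/N)^4 * (((j:ℝ)+2)/N - (((j:ℝ)+1)/N)) = M * ((1:ℝ)/N)^5 := by
      rw [hgap2]; ring
    calc |(XL - (∫ y in ((j:ℝ)/N)..(((j:ℝ)+1)/N), u y * ((N:ℝ)*y + (-(j:ℝ)))))
          + (XR - (∫ y in (((j:ℝ)+1)/N)..(((j:ℝ)+2)/N), u y * (-(N:ℝ)*y + ((j:ℝ)+2))))|
        ≤ |XL - (∫ y in ((j:ℝ)/N)..(((j:ℝ)+1)/N), u y * ((N:ℝ)*y + (-(j:ℝ))))|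
          + |XR - (∫ y in (((j:ℝ)+1)/N)..(((j:ℝ)+2)/N), u y * (-(N:ℝ)*y + ((j:ℝ)+2)))| :=
        abs_add_le _ _
      _ ≤ 2 * M * ((1:ℝ)/N)^5 := by linarith
  have hrec : ∀ j : ℕ, j + 2 ≤ N →
      |ep j + 4*ep (j+1) + ep (j+2)| ≤ 6 * (3*M*((1:ℝ)/N)^4) := by
    intro j hj
    have hdel := massEq j hj
    set a : ℝ := ((j:ℝ)+1)/N with hadef
    have hpq : (j:ℝ)/N ≤ ((j:ℝ)+1)/N := by gcongr; linarith
    have hqr : ((j:ℝ)+1)/N ≤ ((j:ℝ)+2)/N := by gcongr; linarith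
    have hjN : ((j:ℝ)) + 2 ≤ (N:ℝ) := by exact_mod_cast hj
    have hr1 : ((j:ℝ)+2)/N ≤ 1 := by rw [div_le_one hNR]; linarith
    have hq1 : ((j:ℝ)+1)/N ≤ 1 := le_trans hqr hr1
    have haS : a ∈ Icc (0:ℝ) 1 := ⟨by positivity, hq1⟩
    have hmS : ((j:ℝ)/N) ∈ Icc (0:ℝ) 1 := ⟨by positivity, le_trans hpq hq1⟩
    have hpS : (((j:ℝ)+2)/N) ∈ Icc (0:ℝ) 1 := ⟨by positivity, hr1⟩
    have hgap1 : ((j:ℝ)+1)/N - (j:ℝ)/N = 1/N := by rw [div_sub_div_same]; ring_nf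
    have hgap2 : ((j:ℝ)+2)/N - ((j:ℝ)+1)/N = 1/N := by rw [div_sub_div_same]; ring_nf
    have hdm : (j:ℝ)/N - a = -(1/N) := by rw [hadef]; linarith
    have hdp : ((j:ℝ)+2)/N - a = 1/N := by rw [hadef]; linarith
    have habsm : |(j:ℝ)/N - a| = 1/N := by rw [hdm, abs_neg, abs_of_pos hH]
    have habsp : |((j:ℝ)+2)/N - a| = 1/N := by rw [hdp, abs_of_pos hH]
    obtain ⟨_, P2, P4⟩ := tay a haS
    set Rm := u ((j:ℝ)/N) - (u a + u1 a * (((j:ℝ)/N) - a) + u2 a * (((j:ℝ)/N) - a)^2/2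
      + u3 a * (((j:ℝ)/N) - a)^3/6) with hRmd
    set Rp := u (((j:ℝ)+2)/N) - (u a + u1 a * ((((j:ℝ)+2)/N) - a) + u2 a * ((((j:ℝ)+2)/N) - a)^2/2
      + u3 a * ((((j:ℝ)+2)/N) - a)^3/6) with hRpd
    set Sm := u2 ((j:ℝ)/N) - u2 a - u3 a * (((j:ℝ)/N) - a) with hSmd
    set Sp := u2 (((j:ℝ)+2)/N) - u2 a - u3 a * ((((j:ℝ)+2)/N) - a) with hSpd
    set dl := (1/(6*(N:ℝ))) * (v j + 4 * v (j+1) + v (j+2))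
      - (((1:ℝ)/N) * u a + ((1:ℝ)/N)^3 * u2 a / 12) with hdld
    have hRm : |Rm| ≤ M * ((1:ℝ)/N)^4 := by
      have := P4 _ hmS
      rw [habsm] at this
      exact this
    have hRp : |Rp| ≤ M * ((1:ℝ)/N)^4 := by
      have := P4 _ hpS
      rw [habsp] at this
      exact this
    have hSm : |Sm| ≤ M * ((1:ℝ)/N)^2 := by
      have := P2 _ hmS
      rw [habsm] at this
      exact this
    have hSp : |Sp| ≤ M * ((1:ℝ)/N)^2 := by
      have := P2 _ hpS
      rw [habsp] at this
      exact this
    have hdl : |dl| ≤ 2 * M * ((1:ℝ)/N)^5 := by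
      rw [hdld, abs_sub_comm]
      exact hdel
    have hid : ep j + 4*ep (j+1) + ep (j+2)
        = Rm + Rp - 6*(N:ℝ)*dl - ((1:ℝ)/N)^2/12*(Sm + Sp) := by
      simp only [hepdef, heedef, hvdef, hRmd, hRpd, hSmd, hSpd, hdld, hadef]
      push_cast
      field_simp
      ring
    rw [hid]
    obtain ⟨l1, r1⟩ := abs_le.mp hRm
    obtain ⟨l2, r2⟩ := abs_le.mp hRp
    obtain ⟨l3, r3⟩ := abs_le.mp hSm
    obtain ⟨l4, r4⟩ := abs_le.mp hSp
    obtain ⟨l5, r5⟩ := abs_le.mp hdl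
    have hc1 : (0:ℝ) ≤ 6*(N:ℝ) := by positivity
    have m5a : 6*(N:ℝ)*dl ≤ 6*(N:ℝ)*(2*M*((1:ℝ)/N)^5) := mul_le_mul_of_nonneg_left r5 hc1
    have m5b : 6*(N:ℝ)*(-(2*M*((1:ℝ)/N)^5)) ≤ 6*(N:ℝ)*dl := mul_le_mul_of_nonneg_left l5 hc1
    have hNh : 6*(N:ℝ)*(2*M*((1:ℝ)/N)^5) = 12*M*((1:ℝ)/N)^4 := by
      field_simp; ring
    have hNh' : 6*(N:ℝ)*(-(2*M*((1:ℝ)/N)^5)) = -(12*M*((1:ℝ)/N)^4) := by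
      field_simp; ring
    have hc2 : (0:ℝ) ≤ ((1:ℝ)/N)^2/12 := by positivity
    have m4a : ((1:ℝ)/N)^2/12*(Sm + Sp) ≤ ((1:ℝ)/N)^2/12*(2*(M*((1:ℝ)/N)^2)) :=
      mul_le_mul_of_nonneg_left (by linarith) hc2
    have m4b : ((1:ℝ)/N)^2/12*(-(2*(M*((1:ℝ)/N)^2))) ≤ ((1:ℝ)/N)^2/12*(Sm + Sp) :=
      mul_le_mul_of_nonneg_left (by linarith) hc2
    have hq2 : ((1:ℝ)/N)^2/12*(2*(M*((1:ℝ)/N)^2)) = M*((1:ℝ)/N)^4/6 := by ring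
    have hq2' : ((1:ℝ)/N)^2/12*(-(2*(M*((1:ℝ)/N)^2))) = -(M*((1:ℝ)/N)^4/6) := by ring
    have hpos : (0:ℝ) ≤ M*((1:ℝ)/N)^4 := by positivity
    rw [abs_le]
    constructor
    · rw [hNh'] at m5b
      rw [hq2] at m4a
      linarith
    · rw [hNh] at m5a
      rw [hq2'] at m4b
      linarith
  have hep0 : ep 0 = 0 := by
    simp [hepdef, heedef, hvdef, hu0, hPu0, hu20]
  have hepN : ep N = 0 := by
    have hd : ((N:ℝ))/N = 1 := div_self hNe
    simp [hepdef, heedef, hvdef, hd, hu1, hPu1, hu21]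
  have hmax := maxp N hN ep (3*M*((1:ℝ)/N)^4) hep0 hepN hrec
  -- final assembly
  set a : ℝ := (i:ℝ)/N with hadef
  have hpq : a ≤ ((i:ℝ)+1)/N := by rw [hadef]; gcongr; linarith
  have hiN : ((i:ℝ)) + 1 ≤ (N:ℝ) := by exact_mod_cast hi
  have hq1 : ((i:ℝ)+1)/N ≤ 1 := by rw [div_le_one hNR]; linarith
  have hp0 : (0:ℝ) ≤ a := by rw [hadef]; positivity
  have haS : a ∈ Icc (0:ℝ) 1 := ⟨hp0, le_trans hpq hq1⟩
  have hqS : (((i:ℝ)+1)/N) ∈ Icc (0:ℝ) 1 := ⟨by positivity, hq1⟩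
  have hqa : (((i:ℝ)+1)/N) - a = 1/N := by rw [hadef, div_sub_div_same]; ring_nf
  have hcw : Continuous (fun y : ℝ => (0:ℝ)*y+1) := by fun_prop
  have hsplit : (∫ y in a..(((i:ℝ)+1)/N), (u y - Pu y))
      = (∫ y in a..(((i:ℝ)+1)/N), u y * ((0:ℝ)*y+1))
        - ∫ y in a..(((i:ℝ)+1)/N), Pu y * ((0:ℝ)*y+1) := by
    rw [← intervalIntegral.integral_sub
      (hInt (fun y => u y * ((0:ℝ)*y+1)) (hucont.mul hcw.continuousOn) a _ hp0 hpq hq1)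
      (hInt (fun y => Pu y * ((0:ℝ)*y+1)) (hPuc.mul hcw.continuousOn) a _ hp0 hpq hq1)]
    apply intervalIntegral.integral_congr
    intro y _
    ring
  have hU := cellu a a (((i:ℝ)+1)/N) 0 1 haS hp0 hpq hq1
    (by
      intro y hy
      rw [abs_le]
      constructor
      · have := hy.1; linarith
      · have := hy.2; linarith [hqa])
    (by intro y hy; norm_num)
  have hPu := hPuInt i hi 0 1 a (((i:ℝ)+1)/N) hadef rfl
  set X := tprim (u a) (u1 a) (u2 a) (u3 a) a 0 1 ((((i:ℝ)+1)/N)-a)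
    - tprim (u a) (u1 a) (u2 a) (u3 a) a 0 1 (a-a) with hXd
  set W := (∫ y in a..(((i:ℝ)+1)/N), u y * ((0:ℝ)*y+1)) - X with hWd
  have hIu : (∫ y in a..(((i:ℝ)+1)/N), u y * ((0:ℝ)*y+1)) = X + W := by rw [hWd]; ring
  have hW : |W| ≤ M * ((1:ℝ)/N)^4 * ((((i:ℝ)+1)/N) - a) := hU
  obtain ⟨_, P2, P4⟩ := tay a haS
  set Rp := u (((i:ℝ)+1)/N) - (u a + u1 a * ((((i:ℝ)+1)/N) - a)
    + u2 a * ((((i:ℝ)+1)/N) - a)^2/2 + u3 a * ((((i:ℝ)+1)/N) - a)^3/6) with hRpd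
  set Sp := u2 (((i:ℝ)+1)/N) - u2 a - u3 a * ((((i:ℝ)+1)/N) - a) with hSpd
  have habsp : |(((i:ℝ)+1)/N) - a| = 1/N := by rw [hqa, abs_of_pos hH]
  have hRp : |Rp| ≤ M * ((1:ℝ)/N)^4 := by
    have := P4 _ hqS
    rw [habsp] at this
    exact this
  have hSp : |Sp| ≤ M * ((1:ℝ)/N)^2 := by
    have := P2 _ hqS
    rw [habsp] at this
    exact this
  have hep1 : |ep i| ≤ 3*(3*M*((1:ℝ)/N)^4) := hmax i (by omega)
  have hep2 : |ep (i+1)| ≤ 3*(3*M*((1:ℝ)/N)^4) := hmax (i+1) (by omega)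
  have hv1 : v i = A i * ((i:ℝ)/N) + B i := hAB i hi _ ⟨le_rfl, by rw [← hadef]; exact hpq⟩
  have hv2 : v (i+1) = A i * (((i:ℝ)+1)/N) + B i := by
    have hcast : ((i+1:ℕ):ℝ) = (i:ℝ)+1 := by push_cast; ring
    have hmem : (((i:ℝ)+1)/N) ∈ Icc ((i:ℝ)/N) (((i:ℝ)+1)/N) := ⟨by rw [← hadef]; exact hpq, le_rfl⟩
    have := hAB i hi _ hmem
    rw [hvdef]
    simp only [hcast]
    exact this
  have hPval : tprim (B i) (A i) 0 0 0 0 1 (((i:ℝ)+1)/N) - tprim (B i) (A i) 0 0 0 0 1 a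
      = (1/(2*(N:ℝ)))*(v i + v (i+1)) := by
    rw [hv1, hv2]
    simp only [tprim, hadef]
    field_simp
    ring
  have hid : (∫ y in a..(((i:ℝ)+1)/N), (u y - Pu y))
      = W - (1/(2*(N:ℝ)))*Rp + (1/(2*(N:ℝ)))*(ep i + ep (i+1)) + (((1:ℝ)/N)^3/24)*Sp := by
    rw [hsplit, hPu, hIu, hPval]
    simp only [hXd, tprim, hepdef, heedef, hvdef, hRpd, hSpd, hadef]
    push_cast
    field_simp
    ring
  rw [hid]
  obtain ⟨lW, rW⟩ := abs_le.mp hW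
  obtain ⟨lR, rR⟩ := abs_le.mp hRp
  obtain ⟨lS, rS⟩ := abs_le.mp hSp
  obtain ⟨l1, r1⟩ := abs_le.mp hep1
  obtain ⟨l2, r2⟩ := abs_le.mp hep2
  have hc : (0:ℝ) ≤ 1/(2*(N:ℝ)) := by positivity
  have hc2 : (0:ℝ) ≤ ((1:ℝ)/N)^3/24 := by positivity
  have mRa : (1/(2*(N:ℝ)))*Rp ≤ (1/(2*(N:ℝ)))*(M * ((1:ℝ)/N)^4) := mul_le_mul_of_nonneg_left rR hc
  have mRb : (1/(2*(N:ℝ)))*(-(M * ((1:ℝ)/N)^4)) ≤ (1/(2*(N:ℝ)))*Rp := mul_le_mul_of_nonneg_left lR hc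
  have mEa : (1/(2*(N:ℝ)))*(ep i + ep (i+1)) ≤ (1/(2*(N:ℝ)))*(2*(3*(3*M*((1:ℝ)/N)^4))) :=
    mul_le_mul_of_nonneg_left (by linarith) hc
  have mEb : (1/(2*(N:ℝ)))*(-(2*(3*(3*M*((1:ℝ)/N)^4)))) ≤ (1/(2*(N:ℝ)))*(ep i + ep (i+1)) :=
    mul_le_mul_of_nonneg_left (by linarith) hc
  have mSa : (((1:ℝ)/N)^3/24)*Sp ≤ (((1:ℝ)/N)^3/24)*(M * ((1:ℝ)/N)^2) := mul_le_mul_of_nonneg_left rS hc2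
  have mSb : (((1:ℝ)/N)^3/24)*(-(M * ((1:ℝ)/N)^2)) ≤ (((1:ℝ)/N)^3/24)*Sp := mul_le_mul_of_nonneg_left lS hc2
  have q1 : M * ((1:ℝ)/N)^4 * ((((i:ℝ)+1)/N) - a) = M * ((1:ℝ)/N)^5 := by rw [hqa]; ring
  have q2 : (1/(2*(N:ℝ)))*(M * ((1:ℝ)/N)^4) = M * ((1:ℝ)/N)^5/2 := by
    field_simp
  have q2' : (1/(2*(N:ℝ)))*(-(M * ((1:ℝ)/N)^4)) = -(M * ((1:ℝ)/N)^5/2) := by rw [mul_neg, q2]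
  have q3 : (1/(2*(N:ℝ)))*(2*(3*(3*M*((1:ℝ)/N)^4))) = 9*M*((1:ℝ)/N)^5 := by
    field_simp
    first | (left; ring) | ring
  have q3' : (1/(2*(N:ℝ)))*(-(2*(3*(3*M*((1:ℝ)/N)^4)))) = -(9*M*((1:ℝ)/N)^5) := by
    rw [mul_neg, q3]
  have q4 : (((1:ℝ)/N)^3/24)*(M * ((1:ℝ)/N)^2) = M*((1:ℝ)/N)^5/24 := by ring
  have q4' : (((1:ℝ)/N)^3/24)*(-(M * ((1:ℝ)/N)^2)) = -(M*((1:ℝ)/N)^5/24) := by ring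
  have hpos : (0:ℝ) ≤ M*((1:ℝ)/N)^5 := by positivity
  rw [q1] at lW rW
  rw [q2] at mRa
  rw [q2'] at mRb
  rw [q3] at mEa
  rw [q3'] at mEb
  rw [q4] at mSa
  rw [q4'] at mSb
  rw [abs_le]
  constructor
  · linarith
  · linarith
end
end

section
/- Let u ∈ C₀³ with u''(0) = u''(1) = 0, and let σ = u − P₀u. Then there exists a constant C, depending only on ‖u⁽³⁾‖_{L^∞(0,1)} and not on N, such that for all N ≥ 2, max_{1≤i≤N} |σ'(x_{i+1/2})| ≤ C h², where x_{i+1/2} = (x_i + x_{i+1})/2 is the midpoint of I_i and σ' denotes the derivative of σ (which exists at each midpoint since P₀u is affine on the interior of each I_i). -/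
noncomputable section
open Set

open MeasureTheory intervalIntegral

namespace Stmt5

lemma udiff : UniqueDiffOn ℝ (Icc (0:ℝ) 1) := uniqueDiffOn_Icc zero_lt_one

lemma ftc_sub {F f : ℝ → ℝ} (hF : ContinuousOn F (Icc (0:ℝ) 1))
    (hd : ∀ y ∈ Ioo (0:ℝ) 1, HasDerivAt F (f y) y)
    (hf : ContinuousOn f (Icc (0:ℝ) 1))
    {a b : ℝ} (ha : a ∈ Icc (0:ℝ) 1) (hb : b ∈ Icc (0:ℝ) 1) (hab : a ≤ b) :
    ∫ y in a..b, f y = F b - F a := by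
  apply integral_eq_sub_of_hasDeriv_right_of_le hab
    (hF.mono (Icc_subset_Icc ha.1 hb.2))
    (fun x hx => ((hd x ⟨lt_of_le_of_lt ha.1 hx.1, lt_of_lt_of_le hx.2 hb.2⟩).hasDerivWithinAt))
  apply (hf.mono ?_).intervalIntegrable
  rw [uIcc_of_le hab]; exact Icc_subset_Icc ha.1 hb.2

lemma intble {f : ℝ → ℝ} (hf : ContinuousOn f (Icc (0:ℝ) 1))
    {a b : ℝ} (ha : a ∈ Icc (0:ℝ) 1) (hb : b ∈ Icc (0:ℝ) 1) :
    IntervalIntegrable f volume a b := by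
  apply (hf.mono ?_).intervalIntegrable
  exact uIcc_subset_Icc ha hb

lemma pint (a b c : ℝ) (k : ℕ) :
    ∫ y in a..b, (y - c)^k = ((b-c)^(k+1) - (a-c)^(k+1))/(k+1) := by
  have := integral_comp_sub_right (a := a) (b := b) (fun x => x ^ k) c
  rw [this, integral_pow]

lemma pint' (a b c : ℝ) (k : ℕ) :
    ∫ y in a..b, (c - y)^k = ((c-a)^(k+1) - (c-b)^(k+1))/(k+1) := by
  have := integral_comp_sub_left (a := a) (b := b) (fun x => x ^ k) c
  rw [this, integral_pow]

lemma bnd {f g : ℝ → ℝ} {a b : ℝ} (hab : a ≤ b)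
    (hgi : IntervalIntegrable g volume a b)
    (h : ∀ t ∈ Icc a b, |f t| ≤ g t) :
    |∫ t in a..b, f t| ≤ |∫ t in a..b, g t| := by
  rw [← Real.norm_eq_abs (∫ t in a..b, f t)]
  apply le_trans (intervalIntegral.norm_integral_le_of_norm_le hab ?_ hgi) (le_abs_self _)
  filter_upwards with t ht
  exact h t ⟨le_of_lt ht.1, ht.2⟩

lemma taylor_bound {F f : ℝ → ℝ} (hF : ContinuousOn F (Icc (0:ℝ) 1))
    (hd : ∀ y ∈ Ioo (0:ℝ) 1, HasDerivAt F (f y) y) (hf : ContinuousOn f (Icc (0:ℝ) 1))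
    {c : ℝ} (hc : c ∈ Icc (0:ℝ) 1) (hFc : F c = 0) {K : ℝ} (hK0 : 0 ≤ K) (k : ℕ)
    (hK : ∀ t ∈ Icc (0:ℝ) 1, |f t| ≤ K * |t - c| ^ k) :
    ∀ y ∈ Icc (0:ℝ) 1, |F y| ≤ K * |y - c| ^ (k+1) / (k+1) := by
  intro y hy
  rcases le_total c y with hcy | hyc
  · have h1 : (0:ℝ) ≤ y - c := sub_nonneg.mpr hcy
    have hFy : ∫ t in c..y, f t = F y - F c := ftc_sub hF hd hf hc hy hcy
    rw [hFc, sub_zero] at hFy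
    rw [← hFy]
    calc |∫ t in c..y, f t| ≤ |∫ t in c..y, K * (t - c)^k| := by
          apply bnd hcy ((Continuous.intervalIntegrable (by continuity) _ _))
          intro t ht
          calc |f t| ≤ K * |t - c| ^ k := hK t ⟨le_trans hc.1 ht.1, le_trans ht.2 hy.2⟩
          _ = K * (t - c)^k := by rw [abs_of_nonneg (by linarith [ht.1])]
      _ = K * |y - c| ^ (k+1) / (k+1) := by
          rw [intervalIntegral.integral_const_mul, pint, sub_self,
            zero_pow (Nat.succ_ne_zero k), sub_zero, abs_of_nonneg h1,
            abs_of_nonneg (mul_nonneg hK0 (div_nonneg (pow_nonneg h1 _) (by positivity)))]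
          ring
  · have h1 : (0:ℝ) ≤ c - y := sub_nonneg.mpr hyc
    have hFy : ∫ t in y..c, f t = F c - F y := ftc_sub hF hd hf hy hc hyc
    rw [hFc, zero_sub] at hFy
    have h2 : F y = -∫ t in y..c, f t := by rw [hFy, neg_neg]
    rw [h2, abs_neg]
    calc |∫ t in y..c, f t| ≤ |∫ t in y..c, K * (c - t)^k| := by
          apply bnd hyc ((Continuous.intervalIntegrable (by continuity) _ _))
          intro t ht
          calc |f t| ≤ K * |t - c| ^ k := hK t ⟨le_trans hy.1 ht.1, le_trans ht.2 hc.2⟩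
          _ = K * (c - t)^k := by rw [abs_sub_comm, abs_of_nonneg (by linarith [ht.2])]
      _ = K * |y - c| ^ (k+1) / (k+1) := by
          rw [intervalIntegral.integral_const_mul, pint', sub_self,
            zero_pow (Nat.succ_ne_zero k), sub_zero, abs_sub_comm, abs_of_nonneg h1,
            abs_of_nonneg (mul_nonneg hK0 (div_nonneg (pow_nonneg h1 _) (by positivity)))]
          ring



variable {u : ℝ → ℝ}

lemma c1 (hu : ContDiffOn ℝ 3 u (Icc (0:ℝ) 1)) :
    ContinuousOn (derivWithin u (Icc (0:ℝ) 1)) (Icc (0:ℝ) 1) := by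
  apply (hu.continuousOn_iteratedDerivWithin (m := 1) (by norm_num) udiff).congr
  exact fun x hx => (congrFun iteratedDerivWithin_one x).symm

lemma c2 (hu : ContDiffOn ℝ 3 u (Icc (0:ℝ) 1)) :
    ContinuousOn (iteratedDerivWithin 2 u (Icc (0:ℝ) 1)) (Icc (0:ℝ) 1) :=
  hu.continuousOn_iteratedDerivWithin (m := 2) (by norm_num) udiff

lemma c3 (hu : ContDiffOn ℝ 3 u (Icc (0:ℝ) 1)) :
    ContinuousOn (iteratedDerivWithin 3 u (Icc (0:ℝ) 1)) (Icc (0:ℝ) 1) :=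
  hu.continuousOn_iteratedDerivWithin (m := 3) (by norm_num) udiff

lemma d0 (hu : ContDiffOn ℝ 3 u (Icc (0:ℝ) 1)) {y : ℝ} (hy : y ∈ Ioo (0:ℝ) 1) :
    HasDerivAt u (derivWithin u (Icc (0:ℝ) 1) y) y := by
  have := (hu.differentiableOn (by norm_num) y (Ioo_subset_Icc_self hy)).hasDerivWithinAt
  exact this.hasDerivAt (Icc_mem_nhds hy.1 hy.2)

lemma d1 (hu : ContDiffOn ℝ 3 u (Icc (0:ℝ) 1)) {y : ℝ} (hy : y ∈ Ioo (0:ℝ) 1) :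
    HasDerivAt (derivWithin u (Icc (0:ℝ) 1))
      (iteratedDerivWithin 2 u (Icc (0:ℝ) 1) y) y := by
  have hmem : y ∈ Icc (0:ℝ) 1 := Ioo_subset_Icc_self hy
  have hdiff := hu.differentiableOn_iteratedDerivWithin (m := 1) (by norm_num) udiff
  have h1 : HasDerivAt (iteratedDerivWithin 1 u (Icc (0:ℝ) 1))
      (derivWithin (iteratedDerivWithin 1 u (Icc (0:ℝ) 1)) (Icc (0:ℝ) 1) y) y :=
    (hdiff y hmem).hasDerivWithinAt.hasDerivAt (Icc_mem_nhds hy.1 hy.2)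
  rw [← iteratedDerivWithin_succ] at h1
  apply h1.congr_of_eventuallyEq
  filter_upwards [Icc_mem_nhds hy.1 hy.2] with x hx
  exact (congrFun iteratedDerivWithin_one x).symm

lemma d2 (hu : ContDiffOn ℝ 3 u (Icc (0:ℝ) 1)) {y : ℝ} (hy : y ∈ Ioo (0:ℝ) 1) :
    HasDerivAt (iteratedDerivWithin 2 u (Icc (0:ℝ) 1))
      (iteratedDerivWithin 3 u (Icc (0:ℝ) 1) y) y := by
  have hmem : y ∈ Icc (0:ℝ) 1 := Ioo_subset_Icc_self hy
  have hdiff := hu.differentiableOn_iteratedDerivWithin (m := 2) (by norm_num) udiff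
  have h1 := (hdiff y hmem).hasDerivWithinAt.hasDerivAt (Icc_mem_nhds hy.1 hy.2)
  rwa [← iteratedDerivWithin_succ] at h1




lemma cubic_hasDerivAt (c p0 p1 p2 p3 y : ℝ) :
    HasDerivAt (fun y => p0*(y-c) + p1*(y-c)^2/2 + p2*(y-c)^3/3 + p3*(y-c)^4/4)
      (p0 + p1*(y-c) + p2*(y-c)^2 + p3*(y-c)^3) y := by
  have h1 := (hasDerivAt_id y).sub_const c
  have e2 := ((h1.pow 2).const_mul p1).div_const 2
  have e3 := ((h1.pow 3).const_mul p2).div_const 3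
  have e4 := ((h1.pow 4).const_mul p3).div_const 4
  have e1 := h1.const_mul p0
  have := ((e1.add e2).add e3).add e4
  refine this.congr_deriv ?_
  push_cast [id_eq]
  ring

lemma cubint (a b c p0 p1 p2 p3 : ℝ) :
    ∫ y in a..b, (p0 + p1*(y-c) + p2*(y-c)^2 + p3*(y-c)^3)
      = (p0*(b-c) + p1*(b-c)^2/2 + p2*(b-c)^3/3 + p3*(b-c)^4/4)
        - (p0*(a-c) + p1*(a-c)^2/2 + p2*(a-c)^3/3 + p3*(a-c)^4/4) := by
  exact integral_eq_sub_of_hasDerivAt (fun y _ => cubic_hasDerivAt c p0 p1 p2 p3 y)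
    (Continuous.intervalIntegrable (by continuity) _ _)

lemma M1 {n : ℝ} (hn : n ≠ 0) (a b p : ℝ) :
    ∫ y in p..(p+1/n), (a*y+b) * (n*(y-p))
      = (1/n)/6 * ((a*p+b) + 2*(a*(p+1/n)+b)) := by
  rw [integral_congr (g := fun y => (0:ℝ) + n*(a*p+b)*(y-p) + (a*n)*(y-p)^2 + 0*(y-p)^3)
    (fun y _ => by ring), cubint]
  field_simp
  ring

lemma M2 {n : ℝ} (hn : n ≠ 0) (a b p : ℝ) :
    ∫ y in p..(p+1/n), (a*y+b) * (1 - n*(y-p))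
      = (1/n)/6 * (2*(a*p+b) + (a*(p+1/n)+b)) := by
  rw [integral_congr (g := fun y => (a*p+b) + (a - n*(a*p+b))*(y-p) + (-(a*n))*(y-p)^2 + 0*(y-p)^3)
    (fun y _ => by ring), cubint]
  field_simp
  ring

lemma Q1 {n : ℝ} (hn : n ≠ 0) (α β γ c : ℝ) :
    ∫ y in (c-1/n)..c, (α + β*(y-c) + γ*(y-c)^2) * (n*(y-c)+1)
      = α*(1/n)/2 - β*(1/n)^2/6 + γ*(1/n)^3/12 := by
  rw [integral_congr (g := fun y => α + (α*n+β)*(y-c) + (β*n+γ)*(y-c)^2 + (γ*n)*(y-c)^3)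
    (fun y _ => by ring), cubint]
  field_simp
  ring

lemma Q2 {n : ℝ} (hn : n ≠ 0) (α β γ c : ℝ) :
    ∫ y in c..(c+1/n), (α + β*(y-c) + γ*(y-c)^2) * (1-n*(y-c))
      = α*(1/n)/2 + β*(1/n)^2/6 + γ*(1/n)^3/12 := by
  rw [integral_congr (g := fun y => α + (β - α*n)*(y-c) + (γ - β*n)*(y-c)^2 + (-(γ*n))*(y-c)^3)
    (fun y _ => by ring), cubint]
  field_simp
  ring





def hat (N j : ℕ) : ℝ → ℝ := fun y => max 0 (1 - |(N:ℝ)*y - j|)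

lemma hat_left0 {N j : ℕ} {y : ℝ} (h : (N:ℝ)*y ≤ (j:ℝ) - 1) : hat N j y = 0 := by
  have h1 : 1 ≤ |(N:ℝ)*y - j| := by
    rw [abs_sub_comm]
    exact le_trans (by linarith) (le_abs_self _)
  exact max_eq_left (by linarith)

lemma hat_right0 {N j : ℕ} {y : ℝ} (h : (j:ℝ) + 1 ≤ (N:ℝ)*y) : hat N j y = 0 := by
  have h1 : 1 ≤ |(N:ℝ)*y - j| := le_trans (by linarith) (le_abs_self _)
  exact max_eq_left (by linarith)

lemma hat_asc {N j : ℕ} {y : ℝ} (h1 : (j:ℝ) - 1 ≤ (N:ℝ)*y) (h2 : (N:ℝ)*y ≤ j) :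
    hat N j y = (N:ℝ)*y - j + 1 := by
  have habs : |(N:ℝ)*y - j| = (j:ℝ) - (N:ℝ)*y := by
    rw [abs_sub_comm]; exact abs_of_nonneg (by linarith)
  rw [hat, habs, max_eq_right (by linarith)]
  ring

lemma hat_desc {N j : ℕ} {y : ℝ} (h1 : (j:ℝ) ≤ (N:ℝ)*y) (h2 : (N:ℝ)*y ≤ (j:ℝ) + 1) :
    hat N j y = (j:ℝ) + 1 - (N:ℝ)*y := by
  have habs : |(N:ℝ)*y - j| = (N:ℝ)*y - (j:ℝ) := abs_of_nonneg (by linarith)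
  rw [hat, habs, max_eq_right (by linarith)]
  ring

lemma hat_mem_PL0 {N j : ℕ} (hN : 0 < N) (hj1 : 1 ≤ j) (hjN : j < N) :
    hat N j ∈ PL0 N := by
  have hn : (0:ℝ) < (N:ℝ) := by exact_mod_cast hN
  refine ⟨⟨(Continuous.continuousOn (by unfold hat; exact continuous_const.max ((continuous_const.sub ((continuous_const.mul continuous_id).sub continuous_const).abs)))), ?_⟩, ?_, ?_⟩
  · intro i hi
    have hbnd : ∀ y ∈ Icc ((i:ℝ)/N) (((i:ℝ)+1)/N),
        (i:ℝ) ≤ (N:ℝ)*y ∧ (N:ℝ)*y ≤ (i:ℝ)+1 := by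
      intro y hy
      constructor
      · calc (i:ℝ) = ((i:ℝ)/N)*N := by field_simp
          _ ≤ y*N := by apply mul_le_mul_of_nonneg_right hy.1 (le_of_lt hn)
          _ = (N:ℝ)*y := by ring
      · calc (N:ℝ)*y = y*N := by ring
          _ ≤ (((i:ℝ)+1)/N)*N := by apply mul_le_mul_of_nonneg_right hy.2 (le_of_lt hn)
          _ = (i:ℝ)+1 := by field_simp
    rcases lt_trichotomy i j with hij | hij | hij
    · rcases Nat.lt_or_ge (i+1) j with hij2 | hij2
      · -- i + 2 ≤ j : hat = 0
        refine ⟨0, 0, fun y hy => ?_⟩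
        have := (hbnd y hy).2
        have hc : ((i:ℝ)+1) ≤ (j:ℝ) - 1 := by
          have : ((i:ℝ)+1) + 1 ≤ (j:ℝ) := by exact_mod_cast hij2
          linarith
        rw [hat_left0 (by linarith)]; ring
      · -- i + 1 = j : ascending
        have hij1 : i + 1 = j := le_antisymm hij hij2
        refine ⟨(N:ℝ), 1 - (j:ℝ), fun y hy => ?_⟩
        have h1 := (hbnd y hy).1
        have h2 := (hbnd y hy).2
        have hci : (i:ℝ) = (j:ℝ) - 1 := by
          have : ((i:ℝ)+1) = (j:ℝ) := by exact_mod_cast hij1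
          linarith
        rw [hat_asc (by linarith) (by rw [hci] at h2; linarith)]
        ring
    · -- i = j : descending
      subst hij
      refine ⟨-(N:ℝ), (i:ℝ) + 1, fun y hy => ?_⟩
      rw [hat_desc (hbnd y hy).1 (hbnd y hy).2]
      ring
    · -- j < i : hat = 0
      refine ⟨0, 0, fun y hy => ?_⟩
      have h1 := (hbnd y hy).1
      have hc : (j:ℝ) + 1 ≤ (i:ℝ) := by exact_mod_cast hij
      rw [hat_right0 (by linarith)]; ring
  · apply hat_left0
    have : (1:ℝ) ≤ (j:ℝ) := by exact_mod_cast hj1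
    simp only [mul_zero]; linarith
  · apply hat_right0
    have : (j:ℝ) + 1 ≤ (N:ℝ) := by exact_mod_cast hjN
    simpa using this


lemma hat_cont (N j : ℕ) : Continuous (hat N j) := by
  unfold hat
  exact continuous_const.max ((continuous_const.sub ((continuous_const.mul continuous_id).sub continuous_const).abs))

lemma localize {f : ℝ → ℝ} (hf : ContinuousOn f (Icc (0:ℝ) 1)) {N k : ℕ}
    (hN : 0 < N) (hk : k + 2 ≤ N) :
    ∫ y in (0:ℝ)..1, f y * hat N (k+1) y
      = (∫ y in ((k:ℝ)/N)..(((k:ℝ)+1)/N), f y * ((N:ℝ)*(y-((k:ℝ)+1)/N)+1))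
      + ∫ y in (((k:ℝ)+1)/N)..(((k:ℝ)+2)/N), f y * (1-(N:ℝ)*(y-((k:ℝ)+1)/N)) := by
  have hn : (0:ℝ) < N := by exact_mod_cast hN
  have hn' : (N:ℝ) ≠ 0 := ne_of_gt hn
  set n : ℝ := (N:ℝ) with hndef
  set cl : ℝ := (k:ℝ)/n with hcldef
  set c : ℝ := ((k:ℝ)+1)/n with hcdef
  set cr : ℝ := ((k:ℝ)+2)/n with hcrdef
  have hkn : (k:ℝ) + 2 ≤ n := by show (k:ℝ)+2 ≤ (N:ℝ); exact_mod_cast hk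
  have h0cl : (0:ℝ) ≤ cl := by positivity
  have hclc : cl ≤ c := by rw [hcldef, hcdef]; exact (div_le_div_iff_of_pos_right hn).mpr (by linarith)
  have hccr : c ≤ cr := by rw [hcrdef, hcdef]; exact (div_le_div_iff_of_pos_right hn).mpr (by linarith)
  have hcr1 : cr ≤ 1 := (div_le_one hn).mpr hkn
  have m0 : (0:ℝ) ∈ Icc (0:ℝ) 1 := by norm_num
  have m1 : (1:ℝ) ∈ Icc (0:ℝ) 1 := by norm_num
  have mcl : cl ∈ Icc (0:ℝ) 1 := ⟨h0cl, by linarith⟩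
  have mc : c ∈ Icc (0:ℝ) 1 := ⟨by linarith, by linarith⟩
  have mcr : cr ∈ Icc (0:ℝ) 1 := ⟨by linarith, hcr1⟩
  have hcont : ContinuousOn (fun y => f y * hat N (k+1) y) (Icc (0:ℝ) 1) :=
    hf.mul (hat_cont N (k+1)).continuousOn
  have s1 := integral_add_adjacent_intervals (μ := volume)
    (intble hcont m0 mcl) (intble hcont mcl m1)
  have s2 := integral_add_adjacent_intervals (μ := volume)
    (intble hcont mcl mc) (intble hcont mc m1)
  have s3 := integral_add_adjacent_intervals (μ := volume)
    (intble hcont mc mcr) (intble hcont mcr m1)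
  have hup : ∀ {r : ℝ} {y : ℝ}, y ≤ r/n → n*y ≤ r := by
    intro r y h; rw [mul_comm]; exact (le_div_iff₀ hn).mp h
  have hlo : ∀ {r : ℝ} {y : ℝ}, r/n ≤ y → r ≤ n*y := by
    intro r y h; rw [mul_comm]; exact (div_le_iff₀ hn).mp h
  have z1 : ∫ y in (0:ℝ)..cl, f y * hat N (k+1) y = 0 := by
    rw [integral_congr (g := fun _ => (0:ℝ)) ?_, intervalIntegral.integral_zero]
    intro y hy
    rw [uIcc_of_le h0cl] at hy
    have h1 : n*y ≤ (k:ℝ) := hup hy.2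
    have h0 : hat N (k+1) y = 0 := hat_left0 (by push_cast; linarith)
    show f y * hat N (k+1) y = 0
    rw [h0, mul_zero]
  have z2 : ∫ y in cr..(1:ℝ), f y * hat N (k+1) y = 0 := by
    rw [integral_congr (g := fun _ => (0:ℝ)) ?_, intervalIntegral.integral_zero]
    intro y hy
    rw [uIcc_of_le hcr1] at hy
    have h1 : (k:ℝ)+2 ≤ n*y := hlo hy.1
    have h0 : hat N (k+1) y = 0 := hat_right0 (by push_cast; linarith)
    show f y * hat N (k+1) y = 0
    rw [h0, mul_zero]
  have hnc : n*c = (k:ℝ)+1 := by rw [hcdef]; field_simp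
  have e1 : ∫ y in cl..c, f y * hat N (k+1) y
      = ∫ y in cl..c, f y * (n*(y-c)+1) := by
    apply integral_congr
    intro y hy
    rw [uIcc_of_le hclc] at hy
    have h1 : (k:ℝ) ≤ n*y := hlo hy.1
    have h2 : n*y ≤ (k:ℝ)+1 := hup hy.2
    have h3 : hat N (k+1) y = n*y - ((k:ℝ)+1) + 1 := by
      have := hat_asc (N := N) (j := k+1) (y := y) (by push_cast; linarith) (by push_cast; linarith)
      push_cast at this; exact this
    show f y * hat N (k+1) y = f y * (n*(y-c)+1)
    have h4 : n*(y-c) = n*y - ((k:ℝ)+1) := by rw [mul_sub, hnc]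
    rw [h3, h4]
  have e2 : ∫ y in c..cr, f y * hat N (k+1) y
      = ∫ y in c..cr, f y * (1-n*(y-c)) := by
    apply integral_congr
    intro y hy
    rw [uIcc_of_le hccr] at hy
    have h1 : (k:ℝ)+1 ≤ n*y := hlo hy.1
    have h2 : n*y ≤ (k:ℝ)+2 := hup hy.2
    have h3 : hat N (k+1) y = ((k:ℝ)+1) + 1 - n*y := by
      have := hat_desc (N := N) (j := k+1) (y := y) (by push_cast; linarith) (by push_cast; linarith)
      push_cast at this; exact this
    show f y * hat N (k+1) y = f y * (1-n*(y-c))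
    have h4 : n*(y-c) = n*y - ((k:ℝ)+1) := by rw [mul_sub, hnc]
    rw [h3, h4]; ring
  rw [← e1, ← e2]
  linarith [s1, s2, s3, z1, z2]


lemma MA {n : ℝ} (hn : n ≠ 0) (a b p q : ℝ) (hq : n*(q-p) = 1) :
    ∫ y in p..q, (a*y+b) * (n*(y-q)+1) = (1/n)/6 * ((a*p+b) + 2*(a*q+b)) := by
  have hq' : q = p + 1/n := by field_simp; linear_combination hq
  subst hq'
  have hinv : n*(1/n) = 1 := by field_simp
  rw [integral_congr (g := fun y => (a*y+b)*(n*(y-p)))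
    (fun y _ => by linear_combination (-(a*y+b)) * hinv)]
  exact M1 hn a b p

lemma MD {n : ℝ} (hn : n ≠ 0) (a b p q : ℝ) (hq : n*(q-p) = 1) :
    ∫ y in p..q, (a*y+b) * (1 - n*(y-p)) = (1/n)/6 * (2*(a*p+b) + (a*q+b)) := by
  have hq' : q = p + 1/n := by field_simp; linear_combination hq
  subst hq'
  exact M2 hn a b p

lemma QA {n : ℝ} (hn : n ≠ 0) (α β γ p q : ℝ) (hq : n*(q-p) = 1) :
    ∫ y in p..q, (α + β*(y-q) + γ*(y-q)^2) * (n*(y-q)+1)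
      = α*(1/n)/2 - β*(1/n)^2/6 + γ*(1/n)^3/12 := by
  have hp' : p = q - 1/n := by field_simp; linear_combination -hq
  rw [hp']
  exact Q1 hn α β γ q

lemma QD {n : ℝ} (hn : n ≠ 0) (α β γ p q : ℝ) (hq : n*(q-p) = 1) :
    ∫ y in p..q, (α + β*(y-p) + γ*(y-p)^2) * (1-n*(y-p))
      = α*(1/n)/2 + β*(1/n)^2/6 + γ*(1/n)^3/12 := by
  have hq' : q = p + 1/n := by field_simp; linear_combination hq
  subst hq'
  exact Q2 hn α β γ p







end Stmt5

namespace Stmt5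
variable {u : ℝ → ℝ} {M : ℝ}

lemma T0 (hu : ContDiffOn ℝ 3 u (Icc (0:ℝ) 1))
    (hM : ∀ y ∈ Icc (0:ℝ) 1, |iteratedDerivWithin 3 u (Icc (0:ℝ) 1) y| ≤ M)
    {c : ℝ} (hc : c ∈ Icc (0:ℝ) 1) :
    ∀ y ∈ Icc (0:ℝ) 1,
      |iteratedDerivWithin 2 u (Icc (0:ℝ) 1) y - iteratedDerivWithin 2 u (Icc (0:ℝ) 1) c|
        ≤ M * |y - c| := by
  have hM0 : 0 ≤ M := le_trans (abs_nonneg _) (hM 0 (by norm_num))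
  intro y hy
  have := taylor_bound (F := fun y => iteratedDerivWithin 2 u (Icc (0:ℝ) 1) y
      - iteratedDerivWithin 2 u (Icc (0:ℝ) 1) c)
    (f := iteratedDerivWithin 3 u (Icc (0:ℝ) 1))
    ((c2 hu).sub continuousOn_const)
    (fun t ht => ((d2 hu ht).sub_const _)) (c3 hu) hc (sub_self _) hM0 0
    (by intro t ht; simpa using hM t ht) y hy
  simpa using this

lemma T1 (hu : ContDiffOn ℝ 3 u (Icc (0:ℝ) 1))
    (hM : ∀ y ∈ Icc (0:ℝ) 1, |iteratedDerivWithin 3 u (Icc (0:ℝ) 1) y| ≤ M)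
    {c : ℝ} (hc : c ∈ Icc (0:ℝ) 1) :
    ∀ y ∈ Icc (0:ℝ) 1,
      |derivWithin u (Icc (0:ℝ) 1) y - derivWithin u (Icc (0:ℝ) 1) c
        - iteratedDerivWithin 2 u (Icc (0:ℝ) 1) c * (y - c)|
        ≤ M * |y - c|^2 / 2 := by
  have hM0 : 0 ≤ M := le_trans (abs_nonneg _) (hM 0 (by norm_num))
  intro y hy
  have := taylor_bound (F := fun y => derivWithin u (Icc (0:ℝ) 1) y
      - derivWithin u (Icc (0:ℝ) 1) c - iteratedDerivWithin 2 u (Icc (0:ℝ) 1) c * (y - c))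
    (f := fun y => iteratedDerivWithin 2 u (Icc (0:ℝ) 1) y
      - iteratedDerivWithin 2 u (Icc (0:ℝ) 1) c)
    (((c1 hu).sub continuousOn_const).sub (by fun_prop))
    (fun t ht => by
      have h1 := (d1 hu ht).sub_const (derivWithin u (Icc (0:ℝ) 1) c)
      have h2 : HasDerivAt (fun y => iteratedDerivWithin 2 u (Icc (0:ℝ) 1) c * (y - c))
          (iteratedDerivWithin 2 u (Icc (0:ℝ) 1) c) t := by
        simpa using ((hasDerivAt_id t).sub_const c).const_mul
          (iteratedDerivWithin 2 u (Icc (0:ℝ) 1) c)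
      exact h1.sub h2)
    ((c2 hu).sub continuousOn_const) hc (by simp) hM0 1
    (fun t ht => by simpa using T0 hu hM hc t ht) y hy
  norm_num at this
  rw [sq_abs]
  exact this

lemma T2 (hu : ContDiffOn ℝ 3 u (Icc (0:ℝ) 1))
    (hM : ∀ y ∈ Icc (0:ℝ) 1, |iteratedDerivWithin 3 u (Icc (0:ℝ) 1) y| ≤ M)
    (hcont : ContinuousOn u (Icc (0:ℝ) 1))
    {c : ℝ} (hc : c ∈ Icc (0:ℝ) 1) :
    ∀ y ∈ Icc (0:ℝ) 1,
      |u y - u c - derivWithin u (Icc (0:ℝ) 1) c * (y - c)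
        - iteratedDerivWithin 2 u (Icc (0:ℝ) 1) c * (y - c)^2 / 2|
        ≤ M * |y - c|^3 / 6 := by
  have hM0 : 0 ≤ M := le_trans (abs_nonneg _) (hM 0 (by norm_num))
  intro y hy
  have := taylor_bound (F := fun y => u y - u c - derivWithin u (Icc (0:ℝ) 1) c * (y - c)
      - iteratedDerivWithin 2 u (Icc (0:ℝ) 1) c * (y - c)^2 / 2)
    (f := fun y => derivWithin u (Icc (0:ℝ) 1) y - derivWithin u (Icc (0:ℝ) 1) c
      - iteratedDerivWithin 2 u (Icc (0:ℝ) 1) c * (y - c))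
    (((hcont.sub continuousOn_const).sub (by fun_prop)).sub (by fun_prop))
    (fun t ht => by
      have h1 := (d0 hu ht).sub_const (u c)
      have h2 : HasDerivAt (fun y => derivWithin u (Icc (0:ℝ) 1) c * (y - c))
          (derivWithin u (Icc (0:ℝ) 1) c) t := by
        simpa using ((hasDerivAt_id t).sub_const c).const_mul (derivWithin u (Icc (0:ℝ) 1) c)
      have h3 : HasDerivAt (fun y => iteratedDerivWithin 2 u (Icc (0:ℝ) 1) c * (y - c)^2 / 2)
          (iteratedDerivWithin 2 u (Icc (0:ℝ) 1) c * (t - c)) t := by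
        have h := ((((hasDerivAt_id t).sub_const c).pow 2).const_mul
          (iteratedDerivWithin 2 u (Icc (0:ℝ) 1) c)).div_const 2
        refine h.congr_deriv ?_
        push_cast [id_eq]
        ring
      exact (h1.sub h2).sub h3)
    (((c1 hu).sub continuousOn_const).sub (by fun_prop)) hc (by simp)
    (by positivity : (0:ℝ) ≤ M / 2) 2
    (fun t ht => by
      have := T1 hu hM hc t ht
      calc |_| ≤ M * |t - c|^2/2 := this
        _ = M/2 * |t-c|^2 := by ring) y hy
  norm_num at this
  have heq : M/2 * |y-c|^3/3 = M * |y - c|^3/6 := by ring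
  linarith








set_option maxHeartbeats 2000000 in
lemma node_est {u Pu : ℝ → ℝ} {M : ℝ} {N k : ℕ} (hk : k + 2 ≤ N)
    (hu : ContDiffOn ℝ 3 u (Icc (0:ℝ) 1))
    (hM : ∀ y ∈ Icc (0:ℝ) 1, |iteratedDerivWithin 3 u (Icc (0:ℝ) 1) y| ≤ M)
    (hP : IsL2ProjOn (PL0 N) u Pu) :
    |(1/(N:ℝ))/6 * ((Pu ((k:ℝ)/N) - u ((k:ℝ)/N)) + 4*(Pu (((k:ℝ)+1)/N) - u (((k:ℝ)+1)/N))
        + (Pu (((k:ℝ)+2)/N) - u (((k:ℝ)+2)/N)))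
      + (1/(N:ℝ))^3/12 * iteratedDerivWithin 2 u (Icc (0:ℝ) 1) (((k:ℝ)+1)/N)|
      ≤ 5*M*(1/(N:ℝ))^4/36 := by
  have hN : 0 < N := by omega
  have hn : (0:ℝ) < N := by exact_mod_cast hN
  have hn' : (N:ℝ) ≠ 0 := ne_of_gt hn
  have hM0 : 0 ≤ M := le_trans (abs_nonneg _) (hM 0 (by norm_num))
  set n : ℝ := (N:ℝ) with hndef
  set cl : ℝ := (k:ℝ)/n with hcldef
  set c : ℝ := ((k:ℝ)+1)/n with hcdef
  set cr : ℝ := ((k:ℝ)+2)/n with hcrdef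
  have hkn : (k:ℝ) + 2 ≤ n := by show (k:ℝ)+2 ≤ (N:ℝ); exact_mod_cast hk
  have hccl : c - cl = 1/n := by rw [hcdef, hcldef]; ring
  have hcrc : cr - c = 1/n := by rw [hcrdef, hcdef]; ring
  have hpos : (0:ℝ) < 1/n := by positivity
  have h0cl : (0:ℝ) ≤ cl := by positivity
  have hclc : cl ≤ c := by linarith
  have hccr : c ≤ cr := by linarith
  have hcr1 : cr ≤ 1 := by rw [hcrdef]; exact (div_le_one hn).mpr hkn
  have mcl : cl ∈ Icc (0:ℝ) 1 := ⟨h0cl, by linarith⟩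
  have mc : c ∈ Icc (0:ℝ) 1 := ⟨by linarith, by linarith⟩
  have mcr : cr ∈ Icc (0:ℝ) 1 := ⟨by linarith, hcr1⟩
  have hone : n*(c - cl) = 1 := by rw [hccl]; field_simp
  have hone' : n*(cr - c) = 1 := by rw [hcrc]; field_simp
  have hucont : ContinuousOn u (Icc (0:ℝ) 1) := hu.continuousOn
  have hc0eq : ((k:ℝ))/(N:ℝ) = cl := by rw [hcldef, hndef]
  have hc1eq : ((k:ℝ)+1)/(N:ℝ) = c := by rw [hcdef, hndef]
  have hc2eq : ((k:ℝ)+2)/(N:ℝ) = cr := by rw [hcrdef, hndef]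
  clear_value n cl c cr
  obtain ⟨hPmem, horthall⟩ := hP
  obtain ⟨⟨hPcont, hPelem⟩, hPu0, hPu1⟩ := hPmem
  have horth : ∫ y in (0:ℝ)..1, (u y - Pu y) * hat N (k+1) y = 0 := by
    have := horthall (hat N (k+1)) (hat_mem_PL0 hN (by omega) (by omega))
    simpa [ip] using this
  have hdiffc : ContinuousOn (fun y => u y - Pu y) (Icc (0:ℝ) 1) := hucont.sub hPcont
  have hloc := localize hdiffc hN hk
  rw [horth] at hloc
  rw [show ((k:ℝ)+1)/(N:ℝ) = c from hc1eq, show ((k:ℝ))/(N:ℝ) = cl from hc0eq,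
    show ((k:ℝ)+2)/(N:ℝ) = cr from hc2eq, ← hndef] at hloc
  -- integrability of the four pieces
  have hwlc : Continuous (fun y : ℝ => n*(y-c)+1) := (continuous_const.mul (continuous_id.sub continuous_const)).add continuous_const
  have hwrc : Continuous (fun y : ℝ => 1-n*(y-c)) := continuous_const.sub (continuous_const.mul (continuous_id.sub continuous_const))
  have hIul : IntervalIntegrable (fun y => u y * (n*(y-c)+1)) volume cl c :=
    intble (hucont.mul hwlc.continuousOn) mcl mc
  have hIpl : IntervalIntegrable (fun y => Pu y * (n*(y-c)+1)) volume cl c :=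
    intble (hPcont.mul hwlc.continuousOn) mcl mc
  have hIur : IntervalIntegrable (fun y => u y * (1-n*(y-c))) volume c cr :=
    intble (hucont.mul hwrc.continuousOn) mc mcr
  have hIpr : IntervalIntegrable (fun y => Pu y * (1-n*(y-c))) volume c cr :=
    intble (hPcont.mul hwrc.continuousOn) mc mcr
  have hsplitl : ∫ y in cl..c, (u y - Pu y) * (n*(y-c)+1)
      = (∫ y in cl..c, u y * (n*(y-c)+1)) - ∫ y in cl..c, Pu y * (n*(y-c)+1) := by
    rw [← integral_sub hIul hIpl]
    apply integral_congr; intro y _; ring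
  have hsplitr : ∫ y in c..cr, (u y - Pu y) * (1-n*(y-c))
      = (∫ y in c..cr, u y * (1-n*(y-c))) - ∫ y in c..cr, Pu y * (1-n*(y-c)) := by
    rw [← integral_sub hIur hIpr]
    apply integral_congr; intro y _; ring
  -- Pu is affine on each element
  obtain ⟨a1, b1, hE1⟩ := hPelem k (by omega)
  obtain ⟨a2, b2, hE2⟩ := hPelem (k+1) (by omega)
  have hE1' : ∀ y ∈ Icc cl c, Pu y = a1*y + b1 := by
    intro y hy
    apply hE1 y
    rw [hc0eq, hc1eq]
    exact hy
  have hE2' : ∀ y ∈ Icc c cr, Pu y = a2*y + b2 := by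
    intro y hy
    apply hE2 y
    have e1 : ((k+1:ℕ):ℝ)/(N:ℝ) = c := by rw [← hc1eq]; push_cast; ring
    have e2 : (((k+1:ℕ):ℝ)+1)/(N:ℝ) = cr := by rw [← hc2eq]; push_cast; ring
    rw [e1, e2]
    exact hy
  have hPL : ∫ y in cl..c, Pu y * (n*(y-c)+1) = (1/n)/6 * (Pu cl + 2*Pu c) := by
    rw [integral_congr (g := fun y => (a1*y+b1) * (n*(y-c)+1))
      (fun y hy => by rw [hE1' y (by rwa [uIcc_of_le hclc] at hy)]),
      MA hn' a1 b1 cl c hone,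
      ← hE1' cl ⟨le_refl _, hclc⟩, ← hE1' c ⟨hclc, le_refl _⟩]
  have hPR : ∫ y in c..cr, Pu y * (1-n*(y-c)) = (1/n)/6 * (2*Pu c + Pu cr) := by
    rw [integral_congr (g := fun y => (a2*y+b2) * (1-n*(y-c)))
      (fun y hy => by rw [hE2' y (by rwa [uIcc_of_le hccr] at hy)]),
      MD hn' a2 b2 c cr hone',
      ← hE2' c ⟨le_refl _, hccr⟩, ← hE2' cr ⟨hccr, le_refl _⟩]
  have heq1 : (∫ y in cl..c, u y * (n*(y-c)+1)) + (∫ y in c..cr, u y * (1-n*(y-c)))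
      = (1/n)/6 * (Pu cl + 4*Pu c + Pu cr) := by
    rw [hsplitl, hsplitr, hPL, hPR] at hloc
    linarith [hloc]
  -- Taylor polynomial at c
  set B : ℝ := derivWithin u (Icc (0:ℝ) 1) c with hBdef
  set G : ℝ := iteratedDerivWithin 2 u (Icc (0:ℝ) 1) c with hGdef
  -- left element u-integral estimate
  have hT2 := T2 hu hM hucont mc
  have hUL : |(∫ y in cl..c, u y * (n*(y-c)+1))
      - (u c*(1/n)/2 - B*(1/n)^2/6 + (G/2)*(1/n)^3/12)| ≤ M*(1/n)^4/24 := by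
    have hQA := QA hn' (u c) B (G/2) cl c hone
    have hQint : IntervalIntegrable (fun y => (u c + B*(y-c) + (G/2)*(y-c)^2) * (n*(y-c)+1))
        volume cl c := Continuous.intervalIntegrable (((continuous_const.add (continuous_const.mul (continuous_id.sub continuous_const))).add (continuous_const.mul ((continuous_id.sub continuous_const).pow 2))).mul hwlc) _ _
    have hsub : (∫ y in cl..c, u y * (n*(y-c)+1))
        - (u c*(1/n)/2 - B*(1/n)^2/6 + (G/2)*(1/n)^3/12)
        = ∫ y in cl..c, (u y - (u c + B*(y-c) + (G/2)*(y-c)^2)) * (n*(y-c)+1) := by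
      rw [← hQA, ← integral_sub hIul hQint]
      apply integral_congr; intro y _; ring
    rw [hsub]
    have hgi : IntervalIntegrable (fun y => M/6*(c-y)^3) volume cl c :=
      Continuous.intervalIntegrable (continuous_const.mul ((continuous_const.sub continuous_id).pow 3)) _ _
    calc |∫ y in cl..c, (u y - (u c + B*(y-c) + (G/2)*(y-c)^2)) * (n*(y-c)+1)|
        ≤ |∫ y in cl..c, M/6*(c-y)^3| := by
          apply bnd hclc hgi
          intro t ht
          have hmem : t ∈ Icc (0:ℝ) 1 := ⟨le_trans mcl.1 ht.1, le_trans ht.2 mc.2⟩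
          have hT := hT2 t hmem
          have habs : |t - c| = c - t := by
            rw [abs_sub_comm]; exact abs_of_nonneg (by linarith [ht.2])
          have hw0 : 0 ≤ n*(t-c)+1 := by
            have e : n*(t-c)+1 = n*(t-cl) + (1 - n*(c-cl)) := by ring
            rw [e, hone]
            have := mul_nonneg hn.le (sub_nonneg.mpr ht.1)
            linarith
          have hw1 : n*(t-c)+1 ≤ 1 := by
            have := mul_nonneg hn.le (sub_nonneg.mpr ht.2)
            nlinarith
          calc |(u t - (u c + B*(t-c) + (G/2)*(t-c)^2)) * (n*(t-c)+1)|
              = |u t - u c - B*(t-c) - G*(t-c)^2/2| * |n*(t-c)+1| := by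
                rw [← abs_mul]; congr 1; ring
            _ ≤ (M*|t-c|^3/6) * 1 := by
                apply mul_le_mul hT ?_ (abs_nonneg _)
                  (div_nonneg (mul_nonneg hM0 (pow_nonneg (abs_nonneg _) 3)) (by norm_num))
                rw [abs_of_nonneg hw0]; exact hw1
            _ = M/6*(c-t)^3 := by rw [habs]; ring
      _ = M*(1/n)^4/24 := by
          rw [intervalIntegral.integral_const_mul, pint', sub_self, zero_pow (by norm_num : (4:ℕ) ≠ 0), sub_zero,
            hccl, abs_of_nonneg (mul_nonneg (div_nonneg hM0 (by norm_num))
              (div_nonneg (pow_nonneg hpos.le 4) (by norm_num)))]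
          ring
  -- right element u-integral estimate
  have hUR : |(∫ y in c..cr, u y * (1-n*(y-c)))
      - (u c*(1/n)/2 + B*(1/n)^2/6 + (G/2)*(1/n)^3/12)| ≤ M*(1/n)^4/24 := by
    have hQD := QD hn' (u c) B (G/2) c cr hone'
    have hQint : IntervalIntegrable (fun y => (u c + B*(y-c) + (G/2)*(y-c)^2) * (1-n*(y-c)))
        volume c cr := Continuous.intervalIntegrable (((continuous_const.add (continuous_const.mul (continuous_id.sub continuous_const))).add (continuous_const.mul ((continuous_id.sub continuous_const).pow 2))).mul hwrc) _ _
    have hsub : (∫ y in c..cr, u y * (1-n*(y-c)))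
        - (u c*(1/n)/2 + B*(1/n)^2/6 + (G/2)*(1/n)^3/12)
        = ∫ y in c..cr, (u y - (u c + B*(y-c) + (G/2)*(y-c)^2)) * (1-n*(y-c)) := by
      rw [← hQD, ← integral_sub hIur hQint]
      apply integral_congr; intro y _; ring
    rw [hsub]
    have hgi : IntervalIntegrable (fun y => M/6*(y-c)^3) volume c cr :=
      Continuous.intervalIntegrable (continuous_const.mul ((continuous_id.sub continuous_const).pow 3)) _ _
    calc |∫ y in c..cr, (u y - (u c + B*(y-c) + (G/2)*(y-c)^2)) * (1-n*(y-c))|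
        ≤ |∫ y in c..cr, M/6*(y-c)^3| := by
          apply bnd hccr hgi
          intro t ht
          have hmem : t ∈ Icc (0:ℝ) 1 := ⟨le_trans mc.1 ht.1, le_trans ht.2 mcr.2⟩
          have hT := hT2 t hmem
          have habs : |t - c| = t - c := abs_of_nonneg (by linarith [ht.1])
          have hw0 : 0 ≤ 1-n*(t-c) := by
            have e : 1-n*(t-c) = n*(cr-t) + (1 - n*(cr-c)) := by ring
            rw [e, hone']
            have := mul_nonneg hn.le (sub_nonneg.mpr ht.2)
            linarith
          have hw1 : 1-n*(t-c) ≤ 1 := by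
            have := mul_nonneg hn.le (sub_nonneg.mpr ht.1)
            nlinarith
          calc |(u t - (u c + B*(t-c) + (G/2)*(t-c)^2)) * (1-n*(t-c))|
              = |u t - u c - B*(t-c) - G*(t-c)^2/2| * |1-n*(t-c)| := by
                rw [← abs_mul]; congr 1; ring
            _ ≤ (M*|t-c|^3/6) * 1 := by
                apply mul_le_mul hT ?_ (abs_nonneg _)
                  (div_nonneg (mul_nonneg hM0 (pow_nonneg (abs_nonneg _) 3)) (by norm_num))
                rw [abs_of_nonneg hw0]; exact hw1
            _ = M/6*(t-c)^3 := by rw [habs]; ring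
      _ = M*(1/n)^4/24 := by
          rw [intervalIntegral.integral_const_mul, pint, sub_self, zero_pow (by norm_num : (4:ℕ) ≠ 0), sub_zero,
            hcrc, abs_of_nonneg (mul_nonneg (div_nonneg hM0 (by norm_num))
              (div_nonneg (pow_nonneg hpos.le 4) (by norm_num)))]
          ring
  -- endpoint Taylor estimates
  have hclval : cl = c - 1/n := by linarith
  have hcrval : cr = c + 1/n := by linarith
  have hel := hT2 cl mcl
  have her := hT2 cr mcr
  have habsl : |cl - c| = 1/n := by
    rw [abs_sub_comm]; rw [hccl] at *; exact abs_of_nonneg hpos.le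
  have habsr : |cr - c| = 1/n := by
    rw [hcrc] at *; exact abs_of_nonneg hpos.le
  rw [habsl] at hel
  rw [habsr] at her
  -- final assembly
  have key : (1/n)/6 * ((Pu cl - u cl) + 4*(Pu c - u c) + (Pu cr - u cr)) + (1/n)^3/12 * G
      = ((∫ y in cl..c, u y * (n*(y-c)+1))
          - (u c*(1/n)/2 - B*(1/n)^2/6 + (G/2)*(1/n)^3/12))
        + ((∫ y in c..cr, u y * (1-n*(y-c)))
          - (u c*(1/n)/2 + B*(1/n)^2/6 + (G/2)*(1/n)^3/12))
        + (-((1/n)/6) * ((u cl - u c - B*(cl-c) - G*(cl-c)^2/2)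
            + (u cr - u c - B*(cr-c) - G*(cr-c)^2/2))) := by
    rw [hclval, hcrval] at heq1 ⊢
    linear_combination -heq1
  rw [key]
  calc |_| ≤ |(∫ y in cl..c, u y * (n*(y-c)+1))
          - (u c*(1/n)/2 - B*(1/n)^2/6 + (G/2)*(1/n)^3/12)|
        + |(∫ y in c..cr, u y * (1-n*(y-c)))
          - (u c*(1/n)/2 + B*(1/n)^2/6 + (G/2)*(1/n)^3/12)|
        + |(-((1/n)/6)) * ((u cl - u c - B*(cl-c) - G*(cl-c)^2/2)
            + (u cr - u c - B*(cr-c) - G*(cr-c)^2/2))| := abs_add_three _ _ _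
    _ ≤ M*(1/n)^4/24 + M*(1/n)^4/24
        + (1/n)/6 * (M*(1/n)^3/6 + M*(1/n)^3/6) := by
        apply add_le_add (add_le_add hUL hUR)
        rw [abs_mul, abs_neg, abs_of_nonneg (div_nonneg hpos.le (by norm_num) : (0:ℝ) ≤ (1/n)/6)]
        apply mul_le_mul_of_nonneg_left ?_ (div_nonneg hpos.le (by norm_num))
        exact le_trans (abs_add_le _ _) (add_le_add hel her)
    _ = 5*M*(1/n)^4/36 := by ring


set_option maxHeartbeats 1000000 in
lemma discrete_bound {u Pu : ℝ → ℝ} {M : ℝ} {N : ℕ} (hN : 2 ≤ N)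
    (hu : ContDiffOn ℝ 3 u (Icc (0:ℝ) 1))
    (hM : ∀ y ∈ Icc (0:ℝ) 1, |iteratedDerivWithin 3 u (Icc (0:ℝ) 1) y| ≤ M)
    (hu0 : u 0 = 0) (hu1 : u 1 = 0)
    (h2a : iteratedDerivWithin 2 u (Icc (0:ℝ) 1) 0 = 0)
    (h2b : iteratedDerivWithin 2 u (Icc (0:ℝ) 1) 1 = 0)
    (hP : IsL2ProjOn (PL0 N) u Pu) :
    ∀ j ≤ N, |(Pu ((j:ℝ)/N) - u ((j:ℝ)/N))
        + (1/(N:ℝ))^2/12 * iteratedDerivWithin 2 u (Icc (0:ℝ) 1) ((j:ℝ)/N)|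
      ≤ M * (1/(N:ℝ))^3 / 2 := by
  have hN0 : 0 < N := by omega
  have hn : (0:ℝ) < N := by exact_mod_cast hN0
  have hn' : (N:ℝ) ≠ 0 := ne_of_gt hn
  have hM0 : 0 ≤ M := le_trans (abs_nonneg _) (hM 0 (by norm_num))
  set w : ℕ → ℝ := fun j => (Pu ((j:ℝ)/N) - u ((j:ℝ)/N))
      + (1/(N:ℝ))^2/12 * iteratedDerivWithin 2 u (Icc (0:ℝ) 1) ((j:ℝ)/N) with hwdef
  have hw0 : w 0 = 0 := by
    have : ((0:ℕ):ℝ)/(N:ℝ) = 0 := by norm_num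
    simp only [hwdef, this, hP.1.2.1, hu0, h2a]
    ring
  have hwN : w N = 0 := by
    have : ((N:ℕ):ℝ)/(N:ℝ) = 1 := div_self hn'
    simp only [hwdef, this, hP.1.2.2, hu1, h2b]
    ring
  -- interior relation
  have hrel : ∀ k : ℕ, k + 2 ≤ N → |w k + 4 * w (k+1) + w (k+2)| ≤ M * (1/(N:ℝ))^3 := by
    intro k hk
    have hne := node_est hk hu hM hP
    -- rescale node_est by 6N
    have hm1 : ∀ y ∈ Icc (0:ℝ) 1, True := fun _ _ => trivial
    have hx1 : ((k+1:ℕ):ℝ)/(N:ℝ) = ((k:ℝ)+1)/(N:ℝ) := by push_cast; ring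
    have hx2 : ((k+2:ℕ):ℝ)/(N:ℝ) = ((k:ℝ)+2)/(N:ℝ) := by push_cast; ring
    -- membership of nodes
    have hkn : (k:ℝ) + 2 ≤ (N:ℝ) := by exact_mod_cast hk
    have mk : (k:ℝ)/(N:ℝ) ∈ Icc (0:ℝ) 1 := ⟨by positivity, by
      rw [div_le_one hn]; linarith⟩
    have mk1 : ((k:ℝ)+1)/(N:ℝ) ∈ Icc (0:ℝ) 1 := ⟨by positivity, by
      rw [div_le_one hn]; linarith⟩
    have mk2 : ((k:ℝ)+2)/(N:ℝ) ∈ Icc (0:ℝ) 1 := ⟨by positivity, by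
      rw [div_le_one hn]; linarith⟩
    -- Lipschitz bounds on u''
    have hL0 := T0 hu hM mk1 ((k:ℝ)/(N:ℝ)) mk
    have hL2 := T0 hu hM mk1 (((k:ℝ)+2)/(N:ℝ)) mk2
    have hd0 : |(k:ℝ)/(N:ℝ) - ((k:ℝ)+1)/(N:ℝ)| = 1/(N:ℝ) := by
      rw [show (k:ℝ)/(N:ℝ) - ((k:ℝ)+1)/(N:ℝ) = -(1/(N:ℝ)) from by ring, abs_neg,
        abs_of_nonneg (by positivity)]
    have hd2 : |((k:ℝ)+2)/(N:ℝ) - ((k:ℝ)+1)/(N:ℝ)| = 1/(N:ℝ) := by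
      rw [show ((k:ℝ)+2)/(N:ℝ) - ((k:ℝ)+1)/(N:ℝ) = 1/(N:ℝ) from by ring,
        abs_of_nonneg (by positivity)]
    rw [hd0] at hL0
    rw [hd2] at hL2
    -- rescale
    have hresc : |(Pu ((k:ℝ)/N) - u ((k:ℝ)/N)) + 4*(Pu (((k:ℝ)+1)/N) - u (((k:ℝ)+1)/N))
        + (Pu (((k:ℝ)+2)/N) - u (((k:ℝ)+2)/N))
        + (1/(N:ℝ))^2/2 * iteratedDerivWithin 2 u (Icc (0:ℝ) 1) (((k:ℝ)+1)/N)|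
        ≤ 5*M*(1/(N:ℝ))^3/6 := by
      have e : (Pu ((k:ℝ)/N) - u ((k:ℝ)/N)) + 4*(Pu (((k:ℝ)+1)/N) - u (((k:ℝ)+1)/N))
          + (Pu (((k:ℝ)+2)/N) - u (((k:ℝ)+2)/N))
          + (1/(N:ℝ))^2/2 * iteratedDerivWithin 2 u (Icc (0:ℝ) 1) (((k:ℝ)+1)/N)
          = (6*(N:ℝ)) * ((1/(N:ℝ))/6 * ((Pu ((k:ℝ)/N) - u ((k:ℝ)/N))
              + 4*(Pu (((k:ℝ)+1)/N) - u (((k:ℝ)+1)/N))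
              + (Pu (((k:ℝ)+2)/N) - u (((k:ℝ)+2)/N))))
            + (6*(N:ℝ)) * ((1/(N:ℝ))^3/12 * iteratedDerivWithin 2 u (Icc (0:ℝ) 1) (((k:ℝ)+1)/N)) := by
        field_simp
        ring
      rw [e, ← mul_add, abs_mul, abs_of_nonneg (by positivity : (0:ℝ) ≤ 6*(N:ℝ))]
      calc (6*(N:ℝ)) * |(1/(N:ℝ))/6 * ((Pu ((k:ℝ)/N) - u ((k:ℝ)/N))
              + 4*(Pu (((k:ℝ)+1)/N) - u (((k:ℝ)+1)/N))
              + (Pu (((k:ℝ)+2)/N) - u (((k:ℝ)+2)/N)))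
            + (1/(N:ℝ))^3/12 * iteratedDerivWithin 2 u (Icc (0:ℝ) 1) (((k:ℝ)+1)/N)|
          ≤ (6*(N:ℝ)) * (5*M*(1/(N:ℝ))^4/36) := by
            apply mul_le_mul_of_nonneg_left hne (by positivity)
        _ = 5*M*(1/(N:ℝ))^3/6 := by field_simp; ring
    -- combine
    have ew : w k + 4 * w (k+1) + w (k+2)
        = ((Pu ((k:ℝ)/N) - u ((k:ℝ)/N)) + 4*(Pu (((k:ℝ)+1)/N) - u (((k:ℝ)+1)/N))
            + (Pu (((k:ℝ)+2)/N) - u (((k:ℝ)+2)/N))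
            + (1/(N:ℝ))^2/2 * iteratedDerivWithin 2 u (Icc (0:ℝ) 1) (((k:ℝ)+1)/N))
          + (1/(N:ℝ))^2/12 * (iteratedDerivWithin 2 u (Icc (0:ℝ) 1) ((k:ℝ)/N)
              - iteratedDerivWithin 2 u (Icc (0:ℝ) 1) (((k:ℝ)+1)/N))
          + (1/(N:ℝ))^2/12 * (iteratedDerivWithin 2 u (Icc (0:ℝ) 1) (((k:ℝ)+2)/N)
              - iteratedDerivWithin 2 u (Icc (0:ℝ) 1) (((k:ℝ)+1)/N)) := by
      simp only [hwdef, hx1, hx2]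
      ring
    rw [ew]
    calc |_| ≤ |(Pu ((k:ℝ)/N) - u ((k:ℝ)/N)) + 4*(Pu (((k:ℝ)+1)/N) - u (((k:ℝ)+1)/N))
            + (Pu (((k:ℝ)+2)/N) - u (((k:ℝ)+2)/N))
            + (1/(N:ℝ))^2/2 * iteratedDerivWithin 2 u (Icc (0:ℝ) 1) (((k:ℝ)+1)/N)|
          + |(1/(N:ℝ))^2/12 * (iteratedDerivWithin 2 u (Icc (0:ℝ) 1) ((k:ℝ)/N)
              - iteratedDerivWithin 2 u (Icc (0:ℝ) 1) (((k:ℝ)+1)/N))|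
          + |(1/(N:ℝ))^2/12 * (iteratedDerivWithin 2 u (Icc (0:ℝ) 1) (((k:ℝ)+2)/N)
              - iteratedDerivWithin 2 u (Icc (0:ℝ) 1) (((k:ℝ)+1)/N))| := abs_add_three _ _ _
      _ ≤ 5*M*(1/(N:ℝ))^3/6 + (1/(N:ℝ))^2/12 * (M*(1/(N:ℝ)))
          + (1/(N:ℝ))^2/12 * (M*(1/(N:ℝ))) := by
          apply add_le_add (add_le_add hresc ?_) ?_
          · rw [abs_mul, abs_of_nonneg (by positivity : (0:ℝ) ≤ (1/(N:ℝ))^2/12)]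
            exact mul_le_mul_of_nonneg_left hL0 (by positivity)
          · rw [abs_mul, abs_of_nonneg (by positivity : (0:ℝ) ≤ (1/(N:ℝ))^2/12)]
            exact mul_le_mul_of_nonneg_left hL2 (by positivity)
      _ = M * (1/(N:ℝ))^3 := by ring
  -- discrete maximum principle
  have hmax : ∀ j ≤ N, |w j| ≤ M * (1/(N:ℝ))^3 / 2 := by
    obtain ⟨J, hJmem, hJmax⟩ := Finset.exists_max_image (Finset.range (N+1))
      (fun j => |w j|) ⟨0, Finset.mem_range.mpr (by omega)⟩
    have hJle : ∀ j ≤ N, |w j| ≤ |w J| := fun j hj =>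
      hJmax j (Finset.mem_range.mpr (by omega))
    have hJN : J ≤ N := by
      have := Finset.mem_range.mp hJmem; omega
    have hJbound : |w J| ≤ M * (1/(N:ℝ))^3 / 2 := by
      rcases Nat.eq_zero_or_pos J with hJ0 | hJpos
      · rw [hJ0, hw0]; simp; positivity
      · rcases Nat.lt_or_ge J N with hJlt | hJge
        · -- interior
          have hk : (J-1) + 2 ≤ N := by omega
          have hrelJ := hrel (J-1) hk
          have e1 : J - 1 + 1 = J := by omega
          have e2 : J - 1 + 2 = J + 1 := by omega
          rw [e1, e2] at hrelJ
          have h1 : |w (J-1)| ≤ |w J| := hJle _ (by omega)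
          have h2 : |w (J+1)| ≤ |w J| := hJle _ (by omega)
          have h4 : 4 * |w J| ≤ |w (J-1)| + |w (J+1)| + M * (1/(N:ℝ))^3 := by
            have habs : |4 * w J| ≤ |w (J-1)| + |w (J+1)| + M * (1/(N:ℝ))^3 := by
              have e3 : (4:ℝ) * w J = (w (J-1) + 4 * w J + w (J+1)) + (-(w (J-1))) + (-(w (J+1))) := by ring
              rw [e3]
              calc |_| ≤ |w (J-1) + 4 * w J + w (J+1)| + |(-(w (J-1)))| + |(-(w (J+1)))| :=
                    abs_add_three _ _ _
                _ = |w (J-1) + 4 * w J + w (J+1)| + |w (J-1)| + |w (J+1)| := by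
                    rw [abs_neg, abs_neg]
                _ ≤ M * (1/(N:ℝ))^3 + |w (J-1)| + |w (J+1)| := by
                    apply add_le_add (add_le_add hrelJ (le_refl _)) (le_refl _)
                _ = |w (J-1)| + |w (J+1)| + M * (1/(N:ℝ))^3 := by ring
            rw [abs_mul, abs_of_nonneg (by norm_num : (0:ℝ) ≤ 4)] at habs
            linarith [habs]
          linarith [h1, h2, h4]
        · -- J = N
          have : J = N := by omega
          rw [this, hwN]; simp; positivity
    exact fun j hj => le_trans (hJle j hj) hJbound
  exact fun j hj => hmax j hj

end Stmt5


open Stmt5 in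
set_option maxHeartbeats 2000000 in
/-- **Superaccuracy of the derivative of the L² projection error at midpoints
(`S_{h,0}` case).** -/
theorem stmt_5 :
    ∃ C : ℝ → ℝ,
      ∀ (u Pu : ℝ → ℝ) (N : ℕ), 2 ≤ N →
        ContDiffOn ℝ 3 u (Icc (0:ℝ) 1) → u 0 = 0 → u 1 = 0 →
        iteratedDerivWithin 2 u (Icc (0:ℝ) 1) 0 = 0 →
        iteratedDerivWithin 2 u (Icc (0:ℝ) 1) 1 = 0 →
        IsL2ProjOn (PL0 N) u Pu →
        ∀ i < N,
          |deriv (fun y => u y - Pu y) (((i : ℝ) + 1/2)/N)|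
            ≤ C (sSup ((fun y => |iteratedDerivWithin 3 u (Icc (0:ℝ) 1) y|) '' Icc (0:ℝ) 1))
                * ((1:ℝ)/N) ^ 2 := by
  refine ⟨fun x => 2*x, ?_⟩
  intro u Pu N hN hu hu0 hu1 h2a h2b hP i hi
  set M := sSup ((fun y => |iteratedDerivWithin 3 u (Icc (0:ℝ) 1) y|) '' Icc (0:ℝ) 1) with hMdef
  have hbdd : BddAbove ((fun y => |iteratedDerivWithin 3 u (Icc (0:ℝ) 1) y|) '' Icc (0:ℝ) 1) :=
    IsCompact.bddAbove_image isCompact_Icc (c3 hu).abs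
  have hMub : ∀ y ∈ Icc (0:ℝ) 1, |iteratedDerivWithin 3 u (Icc (0:ℝ) 1) y| ≤ M :=
    fun y hy => le_csSup hbdd (mem_image_of_mem _ hy)
  have hM0 : 0 ≤ M := le_trans (abs_nonneg _) (hMub 0 (by norm_num))
  have hN0 : 0 < N := by omega
  have hn : (0:ℝ) < N := by exact_mod_cast hN0
  have hn' : (N:ℝ) ≠ 0 := ne_of_gt hn
  have hiN : (i:ℝ) + 1 ≤ (N:ℝ) := by exact_mod_cast hi
  set m : ℝ := ((i:ℝ) + 1/2)/N with hmdef
  have hm0 : 0 < m := by positivity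
  have hm1 : m < 1 := by rw [hmdef, div_lt_one hn]; linarith
  have hmIoo : m ∈ Ioo (0:ℝ) 1 := ⟨hm0, hm1⟩
  have hmmem : m ∈ Icc (0:ℝ) 1 := ⟨hm0.le, hm1.le⟩
  have hxi : (i:ℝ)/N ∈ Icc (0:ℝ) 1 := ⟨by positivity, by rw [div_le_one hn]; linarith⟩
  have hxi1 : ((i:ℝ)+1)/N ∈ Icc (0:ℝ) 1 := ⟨by positivity, by rw [div_le_one hn]; linarith⟩
  have hstep : (i:ℝ)/N ≤ ((i:ℝ)+1)/N :=
    (div_le_div_iff_of_pos_right hn).mpr (by linarith)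
  -- derivative of u at m
  have hdu := d0 hu hmIoo
  -- Pu affine on element i
  obtain ⟨a, b, hE⟩ := hP.1.1.2 i hi
  have hnhds : Icc ((i:ℝ)/N) (((i:ℝ)+1)/N) ∈ nhds m := by
    apply Icc_mem_nhds
    · rw [hmdef]; apply (div_lt_div_iff_of_pos_right hn).mpr; linarith
    · rw [hmdef]; apply (div_lt_div_iff_of_pos_right hn).mpr; linarith
  have hdP : HasDerivAt Pu a m := by
    have haff : HasDerivAt (fun y => a*y+b) a m := by
      simpa using ((hasDerivAt_id m).const_mul a).add_const b
    apply haff.congr_of_eventuallyEq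
    filter_upwards [hnhds] with y hy
    exact hE y hy
  have hderiv : deriv (fun y => u y - Pu y) m
      = derivWithin u (Icc (0:ℝ) 1) m - a := (hdu.sub hdP).deriv
  have hPslope : a = (N:ℝ) * (Pu (((i:ℝ)+1)/N) - Pu ((i:ℝ)/N)) := by
    have v1 : Pu ((i:ℝ)/N) = a*((i:ℝ)/N)+b := hE _ ⟨le_refl _, hstep⟩
    have v2 : Pu (((i:ℝ)+1)/N) = a*(((i:ℝ)+1)/N)+b := hE _ ⟨hstep, le_refl _⟩
    rw [v1, v2]
    field_simp
    ring
  -- midpoint Taylor estimate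
  have hftc : ∫ y in ((i:ℝ)/N)..(((i:ℝ)+1)/N), derivWithin u (Icc (0:ℝ) 1) y
      = u (((i:ℝ)+1)/N) - u ((i:ℝ)/N) :=
    ftc_sub hu.continuousOn (fun y hy => d0 hu hy) (c1 hu) hxi hxi1 hstep
  have hIu1 : IntervalIntegrable (derivWithin u (Icc (0:ℝ) 1)) volume ((i:ℝ)/N) (((i:ℝ)+1)/N) :=
    intble (c1 hu) hxi hxi1
  have hIq : IntervalIntegrable (fun y => derivWithin u (Icc (0:ℝ) 1) m
      + iteratedDerivWithin 2 u (Icc (0:ℝ) 1) m * (y-m)) volume ((i:ℝ)/N) (((i:ℝ)+1)/N) :=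
    Continuous.intervalIntegrable
      (continuous_const.add (continuous_const.mul (continuous_id.sub continuous_const))) _ _
  have hx1m : ((i:ℝ)+1)/N - m = 1/(2*(N:ℝ)) := by rw [hmdef]; ring
  have hxm : (i:ℝ)/N - m = -(1/(2*(N:ℝ))) := by rw [hmdef]; ring
  have hqint : ∫ y in ((i:ℝ)/N)..(((i:ℝ)+1)/N), (derivWithin u (Icc (0:ℝ) 1) m
      + iteratedDerivWithin 2 u (Icc (0:ℝ) 1) m * (y-m))
      = (1/(N:ℝ)) * derivWithin u (Icc (0:ℝ) 1) m := by
    rw [integral_congr (g := fun y => derivWithin u (Icc (0:ℝ) 1) m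
        + iteratedDerivWithin 2 u (Icc (0:ℝ) 1) m * (y-m) + 0*(y-m)^2 + 0*(y-m)^3)
      (fun y _ => by ring), cubint, hx1m, hxm]
    field_simp
    ring
  have hmid : |(u (((i:ℝ)+1)/N) - u ((i:ℝ)/N))
      - (1/(N:ℝ)) * derivWithin u (Icc (0:ℝ) 1) m| ≤ M*(1/(N:ℝ))^3/24 := by
    have hsub : (u (((i:ℝ)+1)/N) - u ((i:ℝ)/N))
        - (1/(N:ℝ)) * derivWithin u (Icc (0:ℝ) 1) m
        = ∫ y in ((i:ℝ)/N)..(((i:ℝ)+1)/N), (derivWithin u (Icc (0:ℝ) 1) y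
            - (derivWithin u (Icc (0:ℝ) 1) m
              + iteratedDerivWithin 2 u (Icc (0:ℝ) 1) m * (y-m))) := by
      rw [integral_sub hIu1 hIq, hftc, hqint]
    rw [hsub]
    have hgi : IntervalIntegrable (fun y => M/2*(y-m)^2) volume ((i:ℝ)/N) (((i:ℝ)+1)/N) :=
      Continuous.intervalIntegrable
        (continuous_const.mul ((continuous_id.sub continuous_const).pow 2)) _ _
    calc |∫ y in ((i:ℝ)/N)..(((i:ℝ)+1)/N), (derivWithin u (Icc (0:ℝ) 1) y
            - (derivWithin u (Icc (0:ℝ) 1) m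
              + iteratedDerivWithin 2 u (Icc (0:ℝ) 1) m * (y-m)))|
        ≤ |∫ y in ((i:ℝ)/N)..(((i:ℝ)+1)/N), M/2*(y-m)^2| := by
          apply bnd hstep hgi
          intro t ht
          have hmemt : t ∈ Icc (0:ℝ) 1 := ⟨le_trans hxi.1 ht.1, le_trans ht.2 hxi1.2⟩
          have hT := T1 hu hMub hmmem t hmemt
          calc |derivWithin u (Icc (0:ℝ) 1) t - (derivWithin u (Icc (0:ℝ) 1) m
                + iteratedDerivWithin 2 u (Icc (0:ℝ) 1) m * (t-m))|
              = |derivWithin u (Icc (0:ℝ) 1) t - derivWithin u (Icc (0:ℝ) 1) m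
                - iteratedDerivWithin 2 u (Icc (0:ℝ) 1) m * (t-m)| := by
                congr 1; ring
            _ ≤ M*|t-m|^2/2 := hT
            _ = M/2*(t-m)^2 := by rw [sq_abs]; ring
      _ = M*(1/(N:ℝ))^3/24 := by
          rw [intervalIntegral.integral_const_mul, pint, hx1m, hxm,
            abs_of_nonneg (mul_nonneg (div_nonneg hM0 (by norm_num)) ?_)]
          · field_simp
            have e : (N:ℝ) ^ 3 * ((1 / (2 * (N:ℝ))) ^ (2 + 1) - (-(1 / (2 * (N:ℝ)))) ^ (2 + 1)) = 1/4 := by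
              field_simp; ring_nf; rw [← mul_pow, mul_inv_cancel₀ hn', one_pow]
            rw [mul_assoc M, e]; push_cast; ring
          · rw [show (1/(2*(N:ℝ)))^(2+1) - (-(1/(2*(N:ℝ))))^(2+1)
                = 2*(1/(2*(N:ℝ)))^3 from by ring]
            positivity
  -- discrete bounds at the two nodes
  have hw := discrete_bound hN hu hMub hu0 hu1 h2a h2b hP
  have hwi := hw i (by omega)
  have hwi1 := hw (i+1) (by omega)
  have hcast : ((i+1:ℕ):ℝ) = (i:ℝ)+1 := by push_cast; ring
  rw [hcast] at hwi1
  -- Lipschitz bound on u'' between the nodes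
  have hLip := T0 hu hMub hxi (((i:ℝ)+1)/N) hxi1
  have hdiff : |((i:ℝ)+1)/N - (i:ℝ)/N| = 1/(N:ℝ) := by
    rw [show ((i:ℝ)+1)/N - (i:ℝ)/N = 1/(N:ℝ) from by ring, abs_of_nonneg (by positivity)]
  rw [hdiff] at hLip
  -- final assembly
  rw [hderiv, hPslope]
  have keyid : derivWithin u (Icc (0:ℝ) 1) m - (N:ℝ)*(Pu (((i:ℝ)+1)/N) - Pu ((i:ℝ)/N))
      = (-(N:ℝ)) * (((Pu (((i:ℝ)+1)/N) - u (((i:ℝ)+1)/N))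
            + (1/(N:ℝ))^2/12 * iteratedDerivWithin 2 u (Icc (0:ℝ) 1) (((i:ℝ)+1)/N))
          - ((Pu ((i:ℝ)/N) - u ((i:ℝ)/N))
            + (1/(N:ℝ))^2/12 * iteratedDerivWithin 2 u (Icc (0:ℝ) 1) ((i:ℝ)/N)))
        + ((N:ℝ)*(1/(N:ℝ))^2/12) * (iteratedDerivWithin 2 u (Icc (0:ℝ) 1) (((i:ℝ)+1)/N)
            - iteratedDerivWithin 2 u (Icc (0:ℝ) 1) ((i:ℝ)/N))
        + (-(N:ℝ)) * ((u (((i:ℝ)+1)/N) - u ((i:ℝ)/N))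
            - (1/(N:ℝ)) * derivWithin u (Icc (0:ℝ) 1) m) := by
    field_simp
    ring
  rw [keyid]
  have habs3 := abs_add_three
    ((-(N:ℝ)) * (((Pu (((i:ℝ)+1)/N) - u (((i:ℝ)+1)/N))
            + (1/(N:ℝ))^2/12 * iteratedDerivWithin 2 u (Icc (0:ℝ) 1) (((i:ℝ)+1)/N))
          - ((Pu ((i:ℝ)/N) - u ((i:ℝ)/N))
            + (1/(N:ℝ))^2/12 * iteratedDerivWithin 2 u (Icc (0:ℝ) 1) ((i:ℝ)/N))))
    (((N:ℝ)*(1/(N:ℝ))^2/12) * (iteratedDerivWithin 2 u (Icc (0:ℝ) 1) (((i:ℝ)+1)/N)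
            - iteratedDerivWithin 2 u (Icc (0:ℝ) 1) ((i:ℝ)/N)))
    ((-(N:ℝ)) * ((u (((i:ℝ)+1)/N) - u ((i:ℝ)/N))
            - (1/(N:ℝ)) * derivWithin u (Icc (0:ℝ) 1) m))
  apply le_trans habs3
  have hb1 : |(-(N:ℝ)) * (((Pu (((i:ℝ)+1)/N) - u (((i:ℝ)+1)/N))
            + (1/(N:ℝ))^2/12 * iteratedDerivWithin 2 u (Icc (0:ℝ) 1) (((i:ℝ)+1)/N))
          - ((Pu ((i:ℝ)/N) - u ((i:ℝ)/N))
            + (1/(N:ℝ))^2/12 * iteratedDerivWithin 2 u (Icc (0:ℝ) 1) ((i:ℝ)/N)))|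
      ≤ (N:ℝ) * (M*(1/(N:ℝ))^3/2 + M*(1/(N:ℝ))^3/2) := by
    rw [abs_mul, abs_neg, abs_of_nonneg hn.le]
    apply mul_le_mul_of_nonneg_left ?_ hn.le
    exact le_trans (abs_sub _ _) (add_le_add hwi1 hwi)
  have hb2 : |((N:ℝ)*(1/(N:ℝ))^2/12) * (iteratedDerivWithin 2 u (Icc (0:ℝ) 1) (((i:ℝ)+1)/N)
            - iteratedDerivWithin 2 u (Icc (0:ℝ) 1) ((i:ℝ)/N))|
      ≤ ((N:ℝ)*(1/(N:ℝ))^2/12) * (M*(1/(N:ℝ))) := by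
    rw [abs_mul, abs_of_nonneg (by positivity : (0:ℝ) ≤ (N:ℝ)*(1/(N:ℝ))^2/12)]
    exact mul_le_mul_of_nonneg_left hLip (by positivity)
  have hb3 : |(-(N:ℝ)) * ((u (((i:ℝ)+1)/N) - u ((i:ℝ)/N))
            - (1/(N:ℝ)) * derivWithin u (Icc (0:ℝ) 1) m)|
      ≤ (N:ℝ) * (M*(1/(N:ℝ))^3/24) := by
    rw [abs_mul, abs_neg, abs_of_nonneg hn.le]
    exact mul_le_mul_of_nonneg_left hmid hn.le
  have hfin : (N:ℝ) * (M*(1/(N:ℝ))^3/2 + M*(1/(N:ℝ))^3/2)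
      + ((N:ℝ)*(1/(N:ℝ))^2/12) * (M*(1/(N:ℝ))) + (N:ℝ) * (M*(1/(N:ℝ))^3/24)
      ≤ 2*M*(1/(N:ℝ))^2 := by
    have hNinv : (N:ℝ)*(1/(N:ℝ)) = 1 := by field_simp
    have e : (N:ℝ) * (M*(1/(N:ℝ))^3/2 + M*(1/(N:ℝ))^3/2)
        + ((N:ℝ)*(1/(N:ℝ))^2/12) * (M*(1/(N:ℝ))) + (N:ℝ) * (M*(1/(N:ℝ))^3/24)
        = (9/8) * M * (1/(N:ℝ))^2 * ((N:ℝ)*(1/(N:ℝ))) := by ring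
    rw [e, hNinv, mul_one]
    have : 0 ≤ M * (1/(N:ℝ))^2 := by positivity
    nlinarith [this]
  show _ ≤ 2*M*((1:ℝ)/N)^2
  linarith [hb1, hb2, hb3, hfin]
end
end

section
/- Let η ∈ C³[0,1] and ρ = η − Pη. Then there exists a constant C, depending only on ‖η⁽³⁾‖_{L^∞(0,1)} and not on N, such that for all N ≥ 2, max_{1≤i≤N} |ρ'(x_{i+1/2})| ≤ C h², where x_{i+1/2} = (x_i + x_{i+1})/2 is the midpoint of I_i and ρ' denotes the derivative of ρ (which exists at each midpoint since Pη is affine on the interior of each I_i). -/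
noncomputable section
open Set




lemma polyint (u h A B C D : ℝ) :
    ∫ y in u..(u+h), (A + B*(y-u) + C*(y-u)^2 + D*(y-u)^3)
      = A*h + B*h^2/2 + C*h^3/3 + D*h^4/4 := by
  have key : ∀ y : ℝ, HasDerivAt
      (fun y => A*(y-u) + B*(y-u)^2/2 + C*(y-u)^3/3 + D*(y-u)^4/4)
      (A + B*(y-u) + C*(y-u)^2 + D*(y-u)^3) y := by
    intro y
    have h1 : HasDerivAt (fun y : ℝ => y - u) 1 y := (hasDerivAt_id y).sub_const u
    have h2 := h1.fun_pow 2
    have h3 := h1.fun_pow 3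
    have h4 := h1.fun_pow 4
    have := (((h1.const_mul A).add ((h2.const_mul B).div_const 2)).add
      ((h3.const_mul C).div_const 3)).add ((h4.const_mul D).div_const 4)
    refine this.congr_deriv ?_
    ring
  rw [intervalIntegral.integral_eq_sub_of_hasDerivAt (fun y _ => key y)
    ((Continuous.intervalIntegrable (by continuity) _ _))]
  ring

lemma taylor_est_s8 {f f1 f2 : ℝ → ℝ} {M : ℝ}
    (hf : ∀ x ∈ Icc (0:ℝ) 1, HasDerivWithinAt f (f1 x) (Icc (0:ℝ) 1) x)
    (hf1 : ∀ x ∈ Icc (0:ℝ) 1, HasDerivWithinAt f1 (f2 x) (Icc (0:ℝ) 1) x)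
    (hM : 0 ≤ M)
    (hlip : ∀ x ∈ Icc (0:ℝ) 1, ∀ y ∈ Icc (0:ℝ) 1, |f2 y - f2 x| ≤ M * |y - x|) :
    (∀ x ∈ Icc (0:ℝ) 1, ∀ y ∈ Icc (0:ℝ) 1,
      |f1 y - f1 x - f2 x * (y-x)| ≤ M * |y-x|^2) ∧
    (∀ x ∈ Icc (0:ℝ) 1, ∀ y ∈ Icc (0:ℝ) 1,
      |f y - f x - f1 x * (y-x) - f2 x * (y-x)^2/2| ≤ M * |y-x|^3) := by
  have husub : ∀ x ∈ Icc (0:ℝ) 1, ∀ y ∈ Icc (0:ℝ) 1, uIcc x y ⊆ Icc (0:ℝ) 1 := by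
    intro x hx y hy
    exact uIcc_subset_Icc hx hy
  have step1 : ∀ x ∈ Icc (0:ℝ) 1, ∀ y ∈ Icc (0:ℝ) 1,
      |f1 y - f1 x - f2 x * (y-x)| ≤ M * |y-x|^2 := by
    intro x hx y hy
    have hsub := husub x hx y hy
    have hg : ∀ t ∈ uIcc x y, HasDerivWithinAt (fun t => f1 t - f2 x * t)
        (f2 t - f2 x) (uIcc x y) t := by
      intro t ht
      have hmul : HasDerivWithinAt (fun t : ℝ => f2 x * t) (f2 x) (uIcc x y) t := by
        simpa using (hasDerivWithinAt_id t (uIcc x y)).const_mul (f2 x)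
      exact ((hf1 t (hsub ht)).mono hsub).sub hmul
    have hb : ∀ t ∈ uIcc x y, ‖f2 t - f2 x‖ ≤ M * |y - x| := by
      intro t ht
      have h1 := hlip x hx t (hsub ht)
      have h2 : |t - x| ≤ |y - x| := by
        rw [abs_sub_le_iff]
        rcases mem_uIcc.mp ht with ⟨h,h'⟩|⟨h,h'⟩ <;> constructor <;>
          cases abs_cases (y - x) <;> linarith [abs_nonneg (y-x), le_abs_self (y-x), neg_abs_le (y-x)]
      calc ‖f2 t - f2 x‖ ≤ M * |t - x| := h1
        _ ≤ M * |y - x| := mul_le_mul_of_nonneg_left h2 hM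
    have := Convex.norm_image_sub_le_of_norm_hasDerivWithin_le hg hb (convex_uIcc x y)
      left_mem_uIcc right_mem_uIcc
    have e : (fun t => f1 t - f2 x * t) y - (fun t => f1 t - f2 x * t) x
        = f1 y - f1 x - f2 x * (y - x) := by ring
    rw [e] at this
    calc |f1 y - f1 x - f2 x * (y-x)| ≤ M * |y - x| * ‖y - x‖ := this
      _ = M * |y-x|^2 := by rw [Real.norm_eq_abs]; ring
  refine ⟨step1, ?_⟩
  intro x hx y hy
  have hsub := husub x hx y hy
  have hg : ∀ t ∈ uIcc x y, HasDerivWithinAt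
      (fun t => f t - f1 x * t - f2 x * (t-x)^2/2)
      (f1 t - f1 x - f2 x * (t-x)) (uIcc x y) t := by
    intro t ht
    have h1 : HasDerivWithinAt (fun t : ℝ => t - x) 1 (uIcc x y) t :=
      (hasDerivWithinAt_id t _).sub_const x
    have h2 := (h1.fun_pow 2).const_mul (f2 x)
    have hmul : HasDerivWithinAt (fun t : ℝ => f1 x * t) (f1 x) (uIcc x y) t := by
      simpa using (hasDerivWithinAt_id t (uIcc x y)).const_mul (f1 x)
    have := (((hf t (hsub ht)).mono hsub).sub hmul).sub (h2.div_const 2)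
    refine this.congr_deriv ?_
    ring
  have hb : ∀ t ∈ uIcc x y, ‖f1 t - f1 x - f2 x * (t-x)‖ ≤ M * |y-x|^2 := by
    intro t ht
    have h1 := step1 x hx t (hsub ht)
    have h2 : |t - x| ≤ |y - x| := by
      rw [abs_sub_le_iff]
      rcases mem_uIcc.mp ht with ⟨h,h'⟩|⟨h,h'⟩ <;> constructor <;>
        cases abs_cases (y - x) <;> linarith [abs_nonneg (y-x), le_abs_self (y-x), neg_abs_le (y-x)]
    calc ‖f1 t - f1 x - f2 x * (t - x)‖ ≤ M * |t-x|^2 := h1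
      _ ≤ M * |y-x|^2 := by
          have h3 : |t-x|^2 ≤ |y-x|^2 := by nlinarith [abs_nonneg (t-x)]
          exact mul_le_mul_of_nonneg_left h3 hM
  have := Convex.norm_image_sub_le_of_norm_hasDerivWithin_le hg hb (convex_uIcc x y)
    left_mem_uIcc right_mem_uIcc
  have e : (fun t => f t - f1 x * t - f2 x * (t-x)^2/2) y
      - (fun t => f t - f1 x * t - f2 x * (t-x)^2/2) x
      = f y - f x - f1 x * (y - x) - f2 x * (y-x)^2/2 := by ring
  rw [e] at this
  calc |f y - f x - f1 x * (y-x) - f2 x * (y-x)^2/2| ≤ M * |y-x|^2 * ‖y - x‖ := this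
    _ = M * |y-x|^3 := by rw [Real.norm_eq_abs]; ring

lemma interval_est {f g : ℝ → ℝ} {M n u aa bb f1u f2u : ℝ}
    (hM : 0 ≤ M) (hn : 0 < n) (hu0 : 0 ≤ u) (hu1 : u + 1/n ≤ 1)
    (hg : ∀ y ∈ Icc u (u+1/n), g y = aa*y + bb)
    (htay : ∀ y ∈ Icc (0:ℝ) 1, |f y - f u - f1u*(y-u) - f2u*(y-u)^2/2| ≤ M*|y-u|^3)
    (hfc : ContinuousOn f (Icc (0:ℝ) 1)) :
    |(∫ y in u..(u+1/n), (f y - g y) * (1 - n*(y-u)))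
        - ((1/n)*(2*(f u - g u) + (f (u+1/n) - g (u+1/n)))/6 - f2u*(1/n)^3/24)|
      ≤ 2*M*(1/n)^4 ∧
    |(∫ y in u..(u+1/n), (f y - g y) * (n*(y-u)))
        - ((1/n)*((f u - g u) + 2*(f (u+1/n) - g (u+1/n)))/6 - f2u*(1/n)^3/24)|
      ≤ 2*M*(1/n)^4 := by
  set h : ℝ := 1/n with hh
  have h0 : 0 < h := by positivity
  have hIccS : Icc u (u+h) ⊆ Icc (0:ℝ) 1 := by
    intro y hy
    exact ⟨le_trans hu0 hy.1, le_trans hy.2 hu1⟩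
  have huIcc : uIcc u (u+h) = Icc u (u+h) := uIcc_of_le (by linarith)
  have hnh : n * h = 1 := by rw [hh]; field_simp
  set E0 : ℝ := f u - g u with hE0
  set d : ℝ := f1u - aa with hd
  set R : ℝ → ℝ := fun y => f y - f u - f1u*(y-u) - f2u*(y-u)^2/2 with hR
  have hRbd : ∀ y ∈ Icc u (u+h), |R y| ≤ M * h^3 := by
    intro y hy
    have h1 := htay y (hIccS hy)
    have h2 : |y - u| ≤ h := by
      rw [abs_le]
      refine ⟨by linarith [hy.1, h0.le], by linarith [hy.2]⟩
    calc |R y| ≤ M*|y-u|^3 := h1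
      _ ≤ M*h^3 := by
          have : |y-u|^3 ≤ h^3 := pow_le_pow_left₀ (abs_nonneg _) h2 3
          exact mul_le_mul_of_nonneg_left this hM
  -- identity of integrand
  have hsplit : ∀ y ∈ Icc u (u+h),
      f y - g y = (E0 + d*(y-u) + f2u*(y-u)^2/2) + R y := by
    intro y hy
    have h1 := hg y hy
    have h2 := hg u (⟨le_refl u, by linarith⟩)
    rw [h1]
    simp only [hE0, hd, hR]
    rw [h2]
    ring
  -- E1 identity
  have hupIcc : u + h ∈ Icc u (u+h) := ⟨by linarith, le_refl _⟩
  have hE1 : f (u+h) - g (u+h) = E0 + d*h + f2u*h^2/2 + R (u+h) := by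
    have := hsplit (u+h) hupIcc
    rw [this]; ring
  have hRp : |R (u+h)| ≤ M*h^3 := hRbd _ hupIcc
  -- integrability facts
  have hq1cont : Continuous (fun y => (E0 + d*(y-u) + f2u*(y-u)^2/2) * (1 - n*(y-u))) := by
    fun_prop
  have hq2cont : Continuous (fun y => (E0 + d*(y-u) + f2u*(y-u)^2/2) * (n*(y-u))) := by
    fun_prop
  have hRcont : ContinuousOn R (Icc (0:ℝ) 1) := by
    apply ContinuousOn.sub
    apply ContinuousOn.sub
    apply ContinuousOn.sub hfc
    · exact continuousOn_const
    · exact (continuous_const.mul (continuous_id.sub continuous_const)).continuousOn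
    · exact ((continuous_const.mul ((continuous_id.sub continuous_const).pow 2)).div_const 2).continuousOn
  have hRw1int : IntervalIntegrable (fun y => R y * (1 - n*(y-u))) MeasureTheory.volume u (u+h) := by
    apply ContinuousOn.intervalIntegrable
    rw [huIcc]
    exact (hRcont.mono hIccS).mul (by fun_prop : Continuous fun y : ℝ => 1 - n*(y-u)).continuousOn
  have hRw2int : IntervalIntegrable (fun y => R y * (n*(y-u))) MeasureTheory.volume u (u+h) := by
    apply ContinuousOn.intervalIntegrable
    rw [huIcc]
    exact (hRcont.mono hIccS).mul (by fun_prop : Continuous fun y : ℝ => n*(y-u)).continuousOn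
  -- bounds on remainder integrals
  have hw1bd : ∀ y ∈ Icc u (u+h), |1 - n*(y-u)| ≤ 1 := by
    intro y hy
    rw [abs_le]
    have h1 : 0 ≤ n*(y-u) := by
      apply mul_nonneg hn.le; linarith [hy.1]
    have h2 : n*(y-u) ≤ 1 := by
      calc n*(y-u) ≤ n*h := by
            apply mul_le_mul_of_nonneg_left _ hn.le; linarith [hy.2]
        _ = 1 := hnh
    constructor <;> linarith
  have hw2bd : ∀ y ∈ Icc u (u+h), |n*(y-u)| ≤ 1 := by
    intro y hy
    have h1 : 0 ≤ n*(y-u) := by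
      apply mul_nonneg hn.le; linarith [hy.1]
    have h2 : n*(y-u) ≤ 1 := by
      calc n*(y-u) ≤ n*h := by
            apply mul_le_mul_of_nonneg_left _ hn.le; linarith [hy.2]
        _ = 1 := hnh
    rw [abs_le]; constructor <;> linarith
  have hIR1 : |∫ y in u..(u+h), R y * (1 - n*(y-u))| ≤ M*h^3 * h := by
    have := intervalIntegral.norm_integral_le_of_norm_le_const (C := M*h^3)
      (f := fun y => R y * (1 - n*(y-u))) (a := u) (b := u+h) ?_
    · rw [Real.norm_eq_abs] at this
      have habs : |u + h - u| = h := by rw [show u + h - u = h by ring, abs_of_pos h0]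
      rw [habs] at this
      exact this
    · intro y hy
      have hy' : y ∈ Icc u (u+h) := by
        rw [uIoc_of_le (by linarith : u ≤ u+h)] at hy
        exact ⟨hy.1.le, hy.2⟩
      rw [Real.norm_eq_abs, abs_mul]
      calc |R y| * |1 - n*(y-u)| ≤ (M*h^3) * 1 :=
            mul_le_mul (hRbd y hy') (hw1bd y hy') (abs_nonneg _) (by positivity)
        _ = M*h^3 := by ring
  have hIR2 : |∫ y in u..(u+h), R y * (n*(y-u))| ≤ M*h^3 * h := by
    have := intervalIntegral.norm_integral_le_of_norm_le_const (C := M*h^3)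
      (f := fun y => R y * (n*(y-u))) (a := u) (b := u+h) ?_
    · rw [Real.norm_eq_abs] at this
      have habs : |u + h - u| = h := by rw [show u + h - u = h by ring, abs_of_pos h0]
      rw [habs] at this
      exact this
    · intro y hy
      have hy' : y ∈ Icc u (u+h) := by
        rw [uIoc_of_le (by linarith : u ≤ u+h)] at hy
        exact ⟨hy.1.le, hy.2⟩
      rw [Real.norm_eq_abs, abs_mul]
      calc |R y| * |n*(y-u)| ≤ (M*h^3) * 1 :=
            mul_le_mul (hRbd y hy') (hw2bd y hy') (abs_nonneg _) (by positivity)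
        _ = M*h^3 := by ring
  -- split the integrals
  have hsplitInt1 : (∫ y in u..(u+h), (f y - g y) * (1 - n*(y-u)))
      = (∫ y in u..(u+h), (E0 + d*(y-u) + f2u*(y-u)^2/2) * (1 - n*(y-u)))
        + ∫ y in u..(u+h), R y * (1 - n*(y-u)) := by
    rw [← intervalIntegral.integral_add (hq1cont.intervalIntegrable _ _) hRw1int]
    apply intervalIntegral.integral_congr
    rw [huIcc]
    intro y hy
    dsimp only
    rw [hsplit y hy]
    ring
  have hsplitInt2 : (∫ y in u..(u+h), (f y - g y) * (n*(y-u)))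
      = (∫ y in u..(u+h), (E0 + d*(y-u) + f2u*(y-u)^2/2) * (n*(y-u)))
        + ∫ y in u..(u+h), R y * (n*(y-u)) := by
    rw [← intervalIntegral.integral_add (hq2cont.intervalIntegrable _ _) hRw2int]
    apply intervalIntegral.integral_congr
    rw [huIcc]
    intro y hy
    dsimp only
    rw [hsplit y hy]
    ring
  -- compute polynomial integrals
  have hpoly1 : (∫ y in u..(u+h), (E0 + d*(y-u) + f2u*(y-u)^2/2) * (1 - n*(y-u)))
      = E0*h/2 + d*h^2/6 + f2u*h^3/24 := by
    have heq : ∀ y : ℝ, (E0 + d*(y-u) + f2u*(y-u)^2/2) * (1 - n*(y-u))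
        = E0 + (d - E0*n)*(y-u) + (f2u/2 - d*n)*(y-u)^2 + (-(f2u*n/2))*(y-u)^3 := by
      intro y; ring
    rw [intervalIntegral.integral_congr (fun y _ => heq y), polyint]
    linear_combination (-(E0*h/2 + d*h^2/3 + f2u*h^3/8)) * hnh
  have hpoly2 : (∫ y in u..(u+h), (E0 + d*(y-u) + f2u*(y-u)^2/2) * (n*(y-u)))
      = E0*h/2 + d*h^2/3 + f2u*h^3/8 := by
    have heq : ∀ y : ℝ, (E0 + d*(y-u) + f2u*(y-u)^2/2) * (n*(y-u))
        = 0 + (E0*n)*(y-u) + (d*n)*(y-u)^2 + (f2u*n/2)*(y-u)^3 := by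
      intro y; ring
    rw [intervalIntegral.integral_congr (fun y _ => heq y), polyint]
    linear_combination (E0*h/2 + d*h^2/3 + f2u*h^3/8) * hnh
  constructor
  · have hident : (∫ y in u..(u+h), (f y - g y) * (1 - n*(y-u)))
        - (h*(2*(f u - g u) + (f (u+h) - g (u+h)))/6 - f2u*h^3/24)
        = (∫ y in u..(u+h), R y * (1 - n*(y-u))) - h/6 * R (u+h) := by
      rw [hsplitInt1, hpoly1, hE1, ← hE0]
      ring
    rw [hident]
    calc |(∫ y in u..(u+h), R y * (1 - n*(y-u))) - h/6 * R (u+h)|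
        ≤ |∫ y in u..(u+h), R y * (1 - n*(y-u))| + |h/6 * R (u+h)| := abs_sub _ _
      _ ≤ M*h^3*h + (h/6) * (M*h^3) := by
          apply add_le_add hIR1
          rw [abs_mul, abs_of_pos (by positivity : (0:ℝ) < h/6)]
          exact mul_le_mul_of_nonneg_left hRp (by positivity)
      _ ≤ 2*M*h^4 := by nlinarith [pow_pos h0 4, hM]
  · have hident : (∫ y in u..(u+h), (f y - g y) * (n*(y-u)))
        - (h*((f u - g u) + 2*(f (u+h) - g (u+h)))/6 - f2u*h^3/24)
        = (∫ y in u..(u+h), R y * (n*(y-u))) - h/3 * R (u+h) := by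
      rw [hsplitInt2, hpoly2, hE1, ← hE0]
      ring
    rw [hident]
    calc |(∫ y in u..(u+h), R y * (n*(y-u))) - h/3 * R (u+h)|
        ≤ |∫ y in u..(u+h), R y * (n*(y-u))| + |h/3 * R (u+h)| := abs_sub _ _
      _ ≤ M*h^3*h + (h/3) * (M*h^3) := by
          apply add_le_add hIR2
          rw [abs_mul, abs_of_pos (by positivity : (0:ℝ) < h/3)]
          exact mul_le_mul_of_nonneg_left hRp (by positivity)
      _ ≤ 2*M*h^4 := by nlinarith [pow_pos h0 4, hM]




lemma node_bounds {N k : ℕ} (hN : 0 < N) {y : ℝ}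
    (hy : y ∈ Icc ((k:ℝ)/N) (((k:ℝ)+1)/N)) : (k:ℝ) ≤ (N:ℝ)*y ∧ (N:ℝ)*y ≤ (k:ℝ)+1 := by
  have hN' : (0:ℝ) < N := by exact_mod_cast hN
  constructor
  · have := hy.1
    rw [div_le_iff₀ hN'] at this
    linarith [this]
  · have := hy.2
    rw [le_div_iff₀ hN'] at this
    linarith [this]

lemma hat_val_mid {N j : ℕ} (hN : 0 < N) {y : ℝ}
    (hy : y ∈ Icc ((j:ℝ)/N) (((j:ℝ)+1)/N)) :
    max 0 (1 - |(N:ℝ)*y - j|) = ((j:ℝ)+1) - (N:ℝ)*y := by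
  obtain ⟨h1, h2⟩ := node_bounds hN hy
  rw [abs_of_nonneg (by linarith), max_eq_right (by linarith)]
  ring

lemma hat_val_left {N j : ℕ} (hN : 0 < N) {y : ℝ}
    (hy : y ∈ Icc ((j:ℝ)/N) (((j:ℝ)+1)/N)) :
    max 0 (1 - |(N:ℝ)*y - ((j:ℝ)+1)|) = (N:ℝ)*y - (j:ℝ) := by
  obtain ⟨h1, h2⟩ := node_bounds hN hy
  rw [abs_of_nonpos (by linarith), max_eq_right (by linarith)]
  ring

lemma hat_val_zero {N k j : ℕ} (hN : 0 < N) (hkj : k ≠ j) (hkj1 : k + 1 ≠ j) {y : ℝ}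
    (hy : y ∈ Icc ((k:ℝ)/N) (((k:ℝ)+1)/N)) :
    max 0 (1 - |(N:ℝ)*y - j|) = 0 := by
  obtain ⟨h1, h2⟩ := node_bounds hN hy
  apply max_eq_left
  rcases lt_or_gt_of_ne hkj with hlt | hgt
  · -- k < j, and k+1 ≠ j so k+2 ≤ j
    have : k + 2 ≤ j := by omega
    have hc : (k:ℝ) + 2 ≤ (j:ℝ) := by exact_mod_cast this
    have : (N:ℝ)*y - j ≤ -1 := by linarith
    have : 1 ≤ |(N:ℝ)*y - j| := by
      rw [abs_sub_comm]
      calc (1:ℝ) ≤ (j:ℝ) - (N:ℝ)*y := by linarith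
        _ ≤ |(j:ℝ) - (N:ℝ)*y| := le_abs_self _
    linarith
  · -- j < k
    have hc : (j:ℝ) + 1 ≤ (k:ℝ) := by exact_mod_cast hgt
    have : 1 ≤ |(N:ℝ)*y - j| := by
      calc (1:ℝ) ≤ (N:ℝ)*y - j := by linarith
        _ ≤ |(N:ℝ)*y - j| := le_abs_self _
    linarith


lemma scale_abs {n W c : ℝ} (hn : 0 < n) (h : |(1/n)*W/6| ≤ c*(1/n)^4) : |W| ≤ 6*c*(1/n)^3 := by
  have h1 : |(1/n)*W/6| = |W|/(6*n) := by
    rw [show (1/n)*W/6 = W/(6*n) by ring, abs_div, abs_of_pos (by positivity : (0:ℝ) < 6*n)]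
  rw [h1, div_le_iff₀ (by positivity : (0:ℝ) < 6*n)] at h
  calc |W| ≤ c*(1/n)^4*(6*n) := h
    _ = 6*c*(1/n)^3 := by field_simp


set_option maxHeartbeats 2000000 in
/-- **Superaccuracy of the derivative of the L² projection error at midpoints
(`S_h` case).** -/
theorem stmt_8 :
    ∃ C : ℝ → ℝ,
      ∀ (η Pη : ℝ → ℝ) (N : ℕ), 2 ≤ N →
        ContDiffOn ℝ 3 η (Icc (0:ℝ) 1) →
        IsL2ProjOn (PL N) η Pη →
        ∀ i < N,
          |deriv (fun y => η y - Pη y) (((i : ℝ) + 1/2)/N)|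
            ≤ C (sSup ((fun y => |iteratedDerivWithin 3 η (Icc (0:ℝ) 1) y|) '' Icc (0:ℝ) 1))
                * ((1:ℝ)/N) ^ 2 := by
  refine ⟨fun s => 1000 * s, ?_⟩
  intro η Pη N hN hη hPη
  have hN0 : 0 < N := by omega
  have hNR : (0:ℝ) < N := by exact_mod_cast hN0
  have hu : UniqueDiffOn ℝ (Icc (0:ℝ) 1) := uniqueDiffOn_Icc one_pos
  set M : ℝ := sSup ((fun y => |iteratedDerivWithin 3 η (Icc (0:ℝ) 1) y|) '' Icc (0:ℝ) 1) with hMdef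
  set η1 : ℝ → ℝ := derivWithin η (Icc (0:ℝ) 1) with hη1def
  set η2 : ℝ → ℝ := derivWithin η1 (Icc (0:ℝ) 1) with hη2def
  set η3 : ℝ → ℝ := derivWithin η2 (Icc (0:ℝ) 1) with hη3def
  -- basic differentiability
  have hd1 : ∀ x ∈ Icc (0:ℝ) 1, HasDerivWithinAt η (η1 x) (Icc (0:ℝ) 1) x := by
    intro x hx
    exact (hη.differentiableOn (by norm_num) x hx).hasDerivWithinAt
  have hc1 : ContDiffOn ℝ 2 η1 (Icc (0:ℝ) 1) := hη.derivWithin hu (by norm_num)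
  have hd2 : ∀ x ∈ Icc (0:ℝ) 1, HasDerivWithinAt η1 (η2 x) (Icc (0:ℝ) 1) x := by
    intro x hx
    exact (hc1.differentiableOn (by norm_num) x hx).hasDerivWithinAt
  have hc2 : ContDiffOn ℝ 1 η2 (Icc (0:ℝ) 1) := hc1.derivWithin hu (by norm_num)
  have hd3 : ∀ x ∈ Icc (0:ℝ) 1, HasDerivWithinAt η2 (η3 x) (Icc (0:ℝ) 1) x := by
    intro x hx
    exact (hc2.differentiableOn (by norm_num) x hx).hasDerivWithinAt
  -- the third iterated derivative
  have hiter : ∀ y ∈ Icc (0:ℝ) 1, iteratedDerivWithin 3 η (Icc (0:ℝ) 1) y = η3 y := by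
    have honeeq : EqOn (iteratedDerivWithin 1 η (Icc (0:ℝ) 1)) η1 (Icc (0:ℝ) 1) := by
      intro w hw
      rw [iteratedDerivWithin_one, hη1def]
    have htwoeq : EqOn (iteratedDerivWithin 2 η (Icc (0:ℝ) 1)) η2 (Icc (0:ℝ) 1) := by
      intro z hz
      rw [show (2:ℕ) = 1+1 from rfl, iteratedDerivWithin_succ, hη2def]
      exact derivWithin_congr honeeq (honeeq hz)
    intro y hy
    rw [show (3:ℕ) = 2+1 from rfl, iteratedDerivWithin_succ, hη3def]
    exact derivWithin_congr htwoeq (htwoeq hy)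
  have hbdd : BddAbove ((fun y => |iteratedDerivWithin 3 η (Icc (0:ℝ) 1) y|) '' Icc (0:ℝ) 1) :=
    (isCompact_Icc.image_of_continuousOn
      ((hη.continuousOn_iteratedDerivWithin (by norm_num) hu).abs)).bddAbove
  have hMb : ∀ y ∈ Icc (0:ℝ) 1, |η3 y| ≤ M := by
    intro y hy
    rw [← hiter y hy]
    exact le_csSup hbdd (mem_image_of_mem _ hy)
  have hM0 : 0 ≤ M :=
    le_trans (abs_nonneg _) (hMb 0 ⟨le_refl 0, by norm_num⟩)
  have hlip : ∀ x ∈ Icc (0:ℝ) 1, ∀ y ∈ Icc (0:ℝ) 1, |η2 y - η2 x| ≤ M * |y - x| := by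
    intro x hx y hy
    have := Convex.norm_image_sub_le_of_norm_hasDerivWithin_le hd3
      (fun t ht => by rw [Real.norm_eq_abs]; exact hMb t ht) (convex_Icc 0 1) hx hy
    simpa [Real.norm_eq_abs] using this
  obtain ⟨htay1, htay2⟩ := taylor_est_s8 hd1 hd2 hM0 hlip
  -- data of the projection
  obtain ⟨⟨hPcont, hPaff⟩, horth⟩ := hPη
  choose! aa bb hab using hPaff
  -- mesh facts
  have hnode : ∀ j : ℕ, j ≤ N → ((j:ℝ)/N) ∈ Icc (0:ℝ) 1 := by
    intro j hj
    refine ⟨by positivity, ?_⟩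
    rw [div_le_one hNR]
    exact_mod_cast hj
  have hnode' : ∀ j : ℕ, j ≤ N → (((j:ℝ)-1+1)/N) ∈ Icc (0:ℝ) 1 := by
    intro j hj
    have : ((j:ℝ)-1+1)/N = (j:ℝ)/N := by ring_nf
    rw [this]; exact hnode j hj
  have hNk : ∀ k : ℕ, (N:ℝ) * ((k:ℝ)/N) = (k:ℝ) := by
    intro k; field_simp
  have hstep : ∀ k : ℕ, ((k:ℝ)+1)/N = (k:ℝ)/N + 1/N := by
    intro k; ring
  have hle : ∀ k : ℕ, (k:ℝ)/N ≤ ((k:ℝ)+1)/N := by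
    intro k
    have h01 : 0 < 1/(N:ℝ) := by positivity
    rw [hstep k]
    linarith
  -- nodal errors
  set E : ℕ → ℝ := fun j => η ((j:ℝ)/N) - Pη ((j:ℝ)/N) with hE
  set A : ℕ → ℝ := fun k => ∫ y in ((k:ℝ)/N)..(((k:ℝ)+1)/N),
      (η y - Pη y) * (1 - (N:ℝ)*(y - (k:ℝ)/N)) with hA
  set B : ℕ → ℝ := fun k => ∫ y in ((k:ℝ)/N)..(((k:ℝ)+1)/N),
      (η y - Pη y) * ((N:ℝ)*(y - (k:ℝ)/N)) with hB
  have hcast1 : ∀ k : ℕ, ((k+1:ℕ):ℝ) = (k:ℝ)+1 := by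
    intro k; push_cast; ring
  have key : ∀ k, k < N →
      |A k - ((1/N)*(2*E k + E (k+1))/6 - η2 ((k:ℝ)/N)*(1/N)^3/24)| ≤ 2*M*(1/(N:ℝ))^4 ∧
      |B k - ((1/N)*(E k + 2*E (k+1))/6 - η2 ((k:ℝ)/N)*(1/N)^3/24)| ≤ 2*M*(1/(N:ℝ))^4 := by
    intro k hk
    have hu0 : (0:ℝ) ≤ (k:ℝ)/N := by positivity
    have hu1 : (k:ℝ)/N + 1/N ≤ 1 := by
      rw [← hstep k, div_le_one hNR]
      have : (k:ℝ)+1 = ((k+1:ℕ):ℝ) := by push_cast; ring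
      rw [this]
      exact_mod_cast hk
    have hg' : ∀ y ∈ Icc ((k:ℝ)/N) ((k:ℝ)/N + 1/N), Pη y = aa k * y + bb k := by
      rw [← hstep k]; exact hab k hk
    have H := interval_est hM0 hNR hu0 hu1 hg' (htay2 _ (hnode k hk.le)) hη.continuousOn
    have hpt : ((k+1:ℕ):ℝ)/N = (k:ℝ)/N + 1/N := by rw [hcast1 k]; ring
    have hEk : η ((k:ℝ)/N) - Pη ((k:ℝ)/N) = E k := by simp only [hE]
    have hEk1 : η ((k:ℝ)/N + 1/N) - Pη ((k:ℝ)/N + 1/N) = E (k+1) := by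
      simp only [hE]
      rw [hpt]
    rw [hEk, hEk1] at H
    have hend : (k:ℝ)/N + 1/N = ((k:ℝ)+1)/N := (hstep k).symm
    rw [hend] at H
    have hAeq : A k = ∫ y in ((k:ℝ)/N)..(((k:ℝ)+1)/N),
        (η y - Pη y) * (1 - (N:ℝ)*(y - (k:ℝ)/N)) := by simp only [hA]
    have hBeq : B k = ∫ y in ((k:ℝ)/N)..(((k:ℝ)+1)/N),
        (η y - Pη y) * ((N:ℝ)*(y - (k:ℝ)/N)) := by simp only [hB]
    rw [hAeq, hBeq]
    exact H
  -- hat functions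
  have hΦmem : ∀ j : ℕ, (fun y => max 0 (1 - |(N:ℝ)*y - (j:ℝ)|)) ∈ PL N := by
    intro j
    constructor
    · exact Continuous.continuousOn (by fun_prop)
    · intro k hk
      rcases eq_or_ne k j with rfl | hkj
      · exact ⟨-(N:ℝ), (k:ℝ)+1, fun y hy => by dsimp only; rw [hat_val_mid hN0 hy]; ring⟩
      rcases eq_or_ne (k+1) j with hkj1 | hkj1
      · refine ⟨(N:ℝ), -(k:ℝ), fun y hy => ?_⟩
        have hjc : (j:ℝ) = (k:ℝ)+1 := by rw [← hkj1]; push_cast; ring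
        dsimp only
        rw [hjc, hat_val_left hN0 hy]
        ring
      · exact ⟨0, 0, fun y hy => by dsimp only; rw [hat_val_zero hN0 hkj hkj1 hy]; ring⟩
  -- identifications of the local integrals
  have hf0 : ∀ k j : ℕ, k < N → k ≠ j → k+1 ≠ j →
      (∫ y in ((k:ℝ)/N)..(((k:ℝ)+1)/N),
        (η y - Pη y) * max 0 (1 - |(N:ℝ)*y - (j:ℝ)|)) = 0 := by
    intro k j hk hkj hkj1
    have h0 : EqOn (fun y => (η y - Pη y) * max 0 (1 - |(N:ℝ)*y - (j:ℝ)|))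
        (fun _ => (0:ℝ)) (uIcc ((k:ℝ)/N) (((k:ℝ)+1)/N)) := by
      intro y hy
      rw [uIcc_of_le (hle k)] at hy
      dsimp only
      rw [hat_val_zero hN0 hkj hkj1 hy, mul_zero]
    rw [intervalIntegral.integral_congr h0]
    simp
  have hfA : ∀ k : ℕ, k < N →
      (∫ y in ((k:ℝ)/N)..(((k:ℝ)+1)/N),
        (η y - Pη y) * max 0 (1 - |(N:ℝ)*y - (k:ℝ)|)) = A k := by
    intro k hk
    simp only [hA]
    apply intervalIntegral.integral_congr
    intro y hy
    rw [uIcc_of_le (hle k)] at hy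
    dsimp only
    rw [hat_val_mid hN0 hy]
    linear_combination (-(η y - Pη y)) * hNk k
  have hfB : ∀ k j : ℕ, k < N → j = k+1 →
      (∫ y in ((k:ℝ)/N)..(((k:ℝ)+1)/N),
        (η y - Pη y) * max 0 (1 - |(N:ℝ)*y - (j:ℝ)|)) = B k := by
    intro k j hk hj
    subst hj
    simp only [hB]
    apply intervalIntegral.integral_congr
    intro y hy
    rw [uIcc_of_le (hle k)] at hy
    dsimp only
    rw [hcast1 k, hat_val_left hN0 hy]
    linear_combination (η y - Pη y) * hNk k
  -- orthogonality, split into subintervals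
  have horthΦ : ∀ j : ℕ, j ≤ N → ∑ k ∈ Finset.range N,
      (∫ y in ((k:ℝ)/N)..(((k:ℝ)+1)/N),
        (η y - Pη y) * max 0 (1 - |(N:ℝ)*y - (j:ℝ)|)) = 0 := by
    intro j hj
    have hint : ∀ k, k < N → IntervalIntegrable
        (fun y => (η y - Pη y) * max 0 (1 - |(N:ℝ)*y - (j:ℝ)|))
        MeasureTheory.volume (((k:ℕ):ℝ)/N) (((k+1:ℕ):ℝ)/N) := by
      intro k hk
      apply ContinuousOn.intervalIntegrable
      apply ((hη.continuousOn.sub hPcont).mul (Continuous.continuousOn (by fun_prop))).mono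
      rw [hcast1 k, uIcc_of_le (hle k)]
      intro y hy
      constructor
      · exact le_trans (by positivity) hy.1
      · refine le_trans hy.2 ?_
        rw [div_le_one hNR, ← hcast1 k]
        exact_mod_cast hk
    have hsum := intervalIntegral.sum_integral_adjacent_intervals
      (a := fun k : ℕ => ((k:ℕ):ℝ)/N) (μ := MeasureTheory.volume) hint
    simp only [Nat.cast_add, Nat.cast_one, Nat.cast_zero, zero_div] at hsum
    have hip := horth _ (hΦmem j)
    simp only [ip] at hip
    rw [hsum, div_self hNR.ne']
    simpa using hip
  -- the three families of equations
  have eqA0 : A 0 = 0 := by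
    have hs := horthΦ 0 (by omega)
    rw [Finset.sum_eq_single_of_mem 0 (Finset.mem_range.mpr hN0)
      (fun k hk hknz => hf0 k 0 (Finset.mem_range.mp hk) hknz (by omega))] at hs
    rw [hfA 0 hN0] at hs
    exact hs
  have eqBN : ∀ p : ℕ, p + 1 = N → B p = 0 := by
    intro p hp
    have hs := horthΦ N le_rfl
    rw [Finset.sum_eq_single_of_mem p (Finset.mem_range.mpr (by omega))
      (fun k hk hknz => hf0 k N (Finset.mem_range.mp hk)
        (by have := Finset.mem_range.mp hk; omega) (by omega))] at hs
    rw [hfB p N (by omega) (by omega)] at hs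
    exact hs
  have eqMid : ∀ q : ℕ, q + 1 < N → B q + A (q+1) = 0 := by
    intro q hq
    have hs := horthΦ (q+1) (by omega)
    have hsub : ({q, q+1} : Finset ℕ) ⊆ Finset.range N := by
      intro x hx
      simp only [Finset.mem_insert, Finset.mem_singleton] at hx
      rcases hx with rfl|rfl <;> exact Finset.mem_range.mpr (by omega)
    rw [← Finset.sum_subset hsub (fun k hk hknot => hf0 k (q+1) (Finset.mem_range.mp hk)
      (by simp only [Finset.mem_insert, Finset.mem_singleton] at hknot; omega)
      (by simp only [Finset.mem_insert, Finset.mem_singleton] at hknot; omega))] at hs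
    rw [Finset.sum_insert (by simp), Finset.sum_singleton] at hs
    rw [hfB q (q+1) (by omega) rfl, hfA (q+1) hq] at hs
    exact hs
  -- the discrete system
  set G : ℕ → ℝ := fun j => η2 ((j:ℝ)/N) * (1/(N:ℝ))^2/12 with hG
  set Dl : ℕ → ℝ := fun j => E j - G j with hDl
  have hadj : ∀ q : ℕ, q+1 ≤ N → |η2 (((q+1:ℕ):ℝ)/N) - η2 ((q:ℝ)/N)| ≤ M*(1/N) := by
    intro q hq
    have h1 := hlip _ (hnode q (by omega)) _ (hnode (q+1) hq)
    have h2 : |((q+1:ℕ):ℝ)/N - (q:ℝ)/N| = 1/N := by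
      rw [hcast1 q, show ((q:ℝ)+1)/N - (q:ℝ)/N = 1/N by ring]
      exact abs_of_pos (by positivity)
    rw [h2] at h1
    exact h1
  have hadj2 : ∀ q : ℕ, q+1+1 ≤ N → |η2 (((q+1+1:ℕ):ℝ)/N) - η2 ((q:ℝ)/N)| ≤ M*(2/N) := by
    intro q hq
    have h1 := hlip _ (hnode q (by omega)) _ (hnode (q+1+1) hq)
    have h2 : |((q+1+1:ℕ):ℝ)/N - (q:ℝ)/N| = 2/N := by
      rw [show ((q+1+1:ℕ):ℝ) = (q:ℝ)+2 by push_cast; ring,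
        show ((q:ℝ)+2)/N - (q:ℝ)/N = 2/N by ring]
      exact abs_of_pos (by positivity)
    rw [h2] at h1
    exact h1
  have S0 : |2*Dl 0 + Dl (0+1)| ≤ 6*(3*M)*(1/(N:ℝ))^3 := by
    apply scale_abs hNR
    have h1 := (key 0 hN0).1
    rw [eqA0, zero_sub, abs_neg] at h1
    have h2 := hadj 0 (by omega)
    have hid : (1/(N:ℝ))*(2*Dl 0 + Dl (0+1))/6
        = ((1/(N:ℝ))*(2*E 0 + E (0+1))/6 - η2 (((0:ℕ):ℝ)/N)*(1/(N:ℝ))^3/24)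
          - (η2 (((0+1:ℕ):ℝ)/N) - η2 (((0:ℕ):ℝ)/N))*((1/(N:ℝ))^3/72) := by
      simp only [hDl, hG]
      ring
    rw [hid]
    have h3 : |(η2 (((0+1:ℕ):ℝ)/N) - η2 (((0:ℕ):ℝ)/N))*((1/(N:ℝ))^3/72)|
        ≤ (M*(1/N))*((1/(N:ℝ))^3/72) := by
      rw [abs_mul, abs_of_pos (by positivity : (0:ℝ) < (1/(N:ℝ))^3/72)]
      exact mul_le_mul_of_nonneg_right h2 (by positivity)
    calc |_ - _| ≤ |(1/(N:ℝ))*(2*E 0 + E (0+1))/6 - η2 (((0:ℕ):ℝ)/N)*(1/(N:ℝ))^3/24|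
          + |(η2 (((0+1:ℕ):ℝ)/N) - η2 (((0:ℕ):ℝ)/N))*((1/(N:ℝ))^3/72)| := abs_sub _ _
      _ ≤ 2*M*(1/(N:ℝ))^4 + (M*(1/N))*((1/(N:ℝ))^3/72) := add_le_add h1 h3
      _ ≤ (3*M)*(1/(N:ℝ))^4 := by nlinarith [pow_pos (by positivity : (0:ℝ) < 1/(N:ℝ)) 4, hM0]
  have SN : ∀ p : ℕ, p + 1 = N → |Dl p + 2*Dl (p+1)| ≤ 6*(3*M)*(1/(N:ℝ))^3 := by
    intro p hp
    apply scale_abs hNR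
    have h1 := (key p (by omega)).2
    rw [eqBN p hp, zero_sub, abs_neg] at h1
    have h2 := hadj p (by omega)
    have hid : (1/(N:ℝ))*(Dl p + 2*Dl (p+1))/6
        = ((1/(N:ℝ))*(E p + 2*E (p+1))/6 - η2 ((p:ℝ)/N)*(1/(N:ℝ))^3/24)
          - (η2 (((p+1:ℕ):ℝ)/N) - η2 ((p:ℝ)/N))*(2*(1/(N:ℝ))^3/72) := by
      simp only [hDl, hG]
      ring
    rw [hid]
    have h3 : |(η2 (((p+1:ℕ):ℝ)/N) - η2 ((p:ℝ)/N))*(2*(1/(N:ℝ))^3/72)|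
        ≤ (M*(1/N))*(2*(1/(N:ℝ))^3/72) := by
      rw [abs_mul, abs_of_pos (by positivity : (0:ℝ) < 2*(1/(N:ℝ))^3/72)]
      exact mul_le_mul_of_nonneg_right h2 (by positivity)
    calc |_ - _| ≤ |(1/(N:ℝ))*(E p + 2*E (p+1))/6 - η2 ((p:ℝ)/N)*(1/(N:ℝ))^3/24|
          + |(η2 (((p+1:ℕ):ℝ)/N) - η2 ((p:ℝ)/N))*(2*(1/(N:ℝ))^3/72)| := abs_sub _ _
      _ ≤ 2*M*(1/(N:ℝ))^4 + (M*(1/N))*(2*(1/(N:ℝ))^3/72) := add_le_add h1 h3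
      _ ≤ (3*M)*(1/(N:ℝ))^4 := by nlinarith [pow_pos (by positivity : (0:ℝ) < 1/(N:ℝ)) 4, hM0]
  have Smid : ∀ q : ℕ, q + 1 < N → |Dl q + 4*Dl (q+1) + Dl (q+1+1)| ≤ 6*(5*M)*(1/(N:ℝ))^3 := by
    intro q hq
    apply scale_abs hNR
    have h1 := (key q (by omega)).2
    have h2 := (key (q+1) hq).1
    have heq := eqMid q hq
    set Tb := (1/(N:ℝ))*(E q + 2*E (q+1))/6 - η2 ((q:ℝ)/N)*(1/(N:ℝ))^3/24 with hTb
    set Ta := (1/(N:ℝ))*(2*E (q+1) + E (q+1+1))/6 - η2 (((q+1:ℕ):ℝ)/N)*(1/(N:ℝ))^3/24 with hTa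
    have hTT : |Tb + Ta| ≤ 4*M*(1/(N:ℝ))^4 := by
      have e : Tb + Ta = (B q + A (q+1)) - ((B q - Tb) + (A (q+1) - Ta)) := by ring
      rw [e, heq, zero_sub, abs_neg]
      calc |(B q - Tb) + (A (q+1) - Ta)| ≤ |B q - Tb| + |A (q+1) - Ta| := abs_add_le _ _
        _ ≤ 2*M*(1/(N:ℝ))^4 + 2*M*(1/(N:ℝ))^4 := add_le_add h1 h2
        _ = 4*M*(1/(N:ℝ))^4 := by ring
    have ha1 := hadj q (by omega)
    have ha2 := hadj2 q (by omega)
    have hid : (1/(N:ℝ))*(Dl q + 4*Dl (q+1) + Dl (q+1+1))/6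
        = (Tb + Ta)
          - ((η2 (((q+1:ℕ):ℝ)/N) - η2 ((q:ℝ)/N))
              + (η2 (((q+1+1:ℕ):ℝ)/N) - η2 ((q:ℝ)/N)))*((1/(N:ℝ))^3/72) := by
      simp only [hDl, hG, hTb, hTa]
      ring
    rw [hid]
    have h3 : |((η2 (((q+1:ℕ):ℝ)/N) - η2 ((q:ℝ)/N))
        + (η2 (((q+1+1:ℕ):ℝ)/N) - η2 ((q:ℝ)/N)))*((1/(N:ℝ))^3/72)|
        ≤ (M*(1/N) + M*(2/N))*((1/(N:ℝ))^3/72) := by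
      rw [abs_mul, abs_of_pos (by positivity : (0:ℝ) < (1/(N:ℝ))^3/72)]
      apply mul_le_mul_of_nonneg_right _ (by positivity)
      exact le_trans (abs_add_le _ _) (add_le_add ha1 ha2)
    calc |_ - _| ≤ |Tb + Ta| + |((η2 (((q+1:ℕ):ℝ)/N) - η2 ((q:ℝ)/N))
            + (η2 (((q+1+1:ℕ):ℝ)/N) - η2 ((q:ℝ)/N)))*((1/(N:ℝ))^3/72)| := abs_sub _ _
      _ ≤ 4*M*(1/(N:ℝ))^4 + (M*(1/N) + M*(2/N))*((1/(N:ℝ))^3/72) := add_le_add hTT h3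
      _ ≤ (5*M)*(1/(N:ℝ))^4 := by
          have e : (M*(1/(N:ℝ)) + M*(2/(N:ℝ)))*((1/(N:ℝ))^3/72) = M*(1/(N:ℝ))^4/24 := by
            field_simp
            ring
          rw [e]
          have hX : 0 ≤ M*(1/(N:ℝ))^4 := by positivity
          linarith
  -- maximum principle
  have hne : (Finset.range (N+1)).Nonempty := ⟨0, by simp⟩
  set Dmax := (Finset.range (N+1)).sup' hne (fun j => |Dl j|) with hDm
  have hDle : ∀ j, j ≤ N → |Dl j| ≤ Dmax := by
    intro j hj
    exact Finset.le_sup' (fun j => |Dl j|) (Finset.mem_range.mpr (Nat.lt_succ_of_le hj))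
  have hDmax : Dmax ≤ 18*M*(1/(N:ℝ))^3 := by
    obtain ⟨j0, hj0m, hj0⟩ := Finset.exists_mem_eq_sup' hne (fun j => |Dl j|)
    have hj0N : j0 ≤ N := by have := Finset.mem_range.mp hj0m; omega
    rw [← hDm] at hj0
    rcases Nat.eq_zero_or_pos j0 with rfl | hpos
    · have h1 := S0
      have h2 := hDle (0+1) (by omega)
      have h3 : 2*|Dl 0| ≤ |2*Dl 0 + Dl (0+1)| + |Dl (0+1)| := by
        have e : 2*Dl 0 = (2*Dl 0 + Dl (0+1)) - Dl (0+1) := by ring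
        calc 2*|Dl 0| = |2*Dl 0| := by rw [abs_mul]; norm_num
          _ = |(2*Dl 0 + Dl (0+1)) - Dl (0+1)| := by rw [← e]
          _ ≤ |2*Dl 0 + Dl (0+1)| + |Dl (0+1)| := abs_sub _ _
      rw [hj0]
      linarith
    rcases eq_or_ne j0 N with hj0e | hj0ne
    · obtain ⟨p, hp⟩ : ∃ p, p + 1 = N := ⟨N - 1, by omega⟩
      have h1 := SN p hp
      have h2 := hDle p (by omega)
      have h3 : 2*|Dl (p+1)| ≤ |Dl p + 2*Dl (p+1)| + |Dl p| := by
        have e : 2*Dl (p+1) = (Dl p + 2*Dl (p+1)) - Dl p := by ring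
        calc 2*|Dl (p+1)| = |2*Dl (p+1)| := by rw [abs_mul]; norm_num
          _ = |(Dl p + 2*Dl (p+1)) - Dl p| := by rw [← e]
          _ ≤ |Dl p + 2*Dl (p+1)| + |Dl p| := abs_sub _ _
      have hDlN : |Dl (p+1)| = |Dl j0| := by rw [hp, hj0e]
      linarith
    · obtain ⟨q, hq⟩ : ∃ q, q + 1 = j0 := ⟨j0 - 1, by omega⟩
      have hqN : q + 1 < N := by omega
      have h1 := Smid q hqN
      have h2 := hDle q (by omega)
      have h2' := hDle (q+1+1) (by omega)
      have h3 : 4*|Dl (q+1)| ≤ |Dl q + 4*Dl (q+1) + Dl (q+1+1)| + |Dl q| + |Dl (q+1+1)| := by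
        have e : 4*Dl (q+1) = (Dl q + 4*Dl (q+1) + Dl (q+1+1)) - Dl q - Dl (q+1+1) := by ring
        calc 4*|Dl (q+1)| = |4*Dl (q+1)| := by rw [abs_mul]; norm_num
          _ = |(Dl q + 4*Dl (q+1) + Dl (q+1+1)) - Dl q - Dl (q+1+1)| := by rw [← e]
          _ ≤ |(Dl q + 4*Dl (q+1) + Dl (q+1+1)) - Dl q| + |Dl (q+1+1)| := abs_sub _ _
          _ ≤ |Dl q + 4*Dl (q+1) + Dl (q+1+1)| + |Dl q| + |Dl (q+1+1)| := by
              linarith [abs_sub (Dl q + 4*Dl (q+1) + Dl (q+1+1)) (Dl q)]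
      subst hq
      rw [hj0]
      have hMN3 : 0 ≤ M*(1/(N:ℝ))^3 := by positivity
      linarith
  -- difference of consecutive nodal errors
  have hdE : ∀ k, k < N → |E (k+1) - E k| ≤ 37*M*(1/(N:ℝ))^3 := by
    intro k hk
    have e : E (k+1) - E k = (Dl (k+1) - Dl k) + (G (k+1) - G k) := by
      simp only [hDl]; ring
    have h1 : |Dl (k+1) - Dl k| ≤ 2*(18*M*(1/(N:ℝ))^3) := by
      calc |Dl (k+1) - Dl k| ≤ |Dl (k+1)| + |Dl k| := abs_sub _ _
        _ ≤ Dmax + Dmax := add_le_add (hDle (k+1) hk) (hDle k (by omega))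
        _ ≤ 2*(18*M*(1/(N:ℝ))^3) := by linarith
    have h2 : |G (k+1) - G k| ≤ (M*(1/N))*((1/(N:ℝ))^2/12) := by
      have e2 : G (k+1) - G k = (η2 (((k+1:ℕ):ℝ)/N) - η2 ((k:ℝ)/N))*((1/(N:ℝ))^2/12) := by
        simp only [hG]; ring
      rw [e2, abs_mul, abs_of_pos (by positivity : (0:ℝ) < (1/(N:ℝ))^2/12)]
      exact mul_le_mul_of_nonneg_right (hadj k hk) (by positivity)
    calc |E (k+1) - E k| = |(Dl (k+1) - Dl k) + (G (k+1) - G k)| := by rw [e]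
      _ ≤ |Dl (k+1) - Dl k| + |G (k+1) - G k| := abs_add_le _ _
      _ ≤ 2*(18*M*(1/(N:ℝ))^3) + (M*(1/N))*((1/(N:ℝ))^2/12) := add_le_add h1 h2
      _ ≤ 37*M*(1/(N:ℝ))^3 := by nlinarith [pow_pos (by positivity : (0:ℝ) < 1/(N:ℝ)) 3, hM0]
  -- conclusion at midpoints
  intro i hi
  have hiN : (i:ℝ) + 1 ≤ (N:ℝ) := by
    rw [← hcast1 i]
    exact_mod_cast hi
  set m : ℝ := ((i:ℝ) + 1/2)/N with hm
  have hm0 : 0 < m := by rw [hm]; positivity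
  have hm1 : m < 1 := by rw [hm, div_lt_one hNR]; linarith
  have hmlo : (i:ℝ)/N < m := by
    rw [hm]
    exact (div_lt_div_iff_of_pos_right hNR).mpr (by linarith)
  have hmhi : m < ((i:ℝ)+1)/N := by
    rw [hm]
    exact (div_lt_div_iff_of_pos_right hNR).mpr (by linarith)
  have hmIcc : Icc ((i:ℝ)/N) (((i:ℝ)+1)/N) ∈ nhds m := Icc_mem_nhds hmlo hmhi
  have hmS : Icc (0:ℝ) 1 ∈ nhds m := Icc_mem_nhds hm0 hm1
  have hmSmem : m ∈ Icc (0:ℝ) 1 := ⟨hm0.le, hm1.le⟩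
  have hηdiff : DifferentiableAt ℝ η m := (hη.contDiffAt hmS).differentiableAt (by norm_num)
  have haff : HasDerivAt (fun y => aa i * y + bb i) (aa i) m := by
    simpa using ((hasDerivAt_id m).const_mul (aa i)).add_const (bb i)
  have hPd : HasDerivAt Pη (aa i) m :=
    haff.congr_of_eventuallyEq (Filter.eventuallyEq_of_mem hmIcc (fun y hy => hab i hi y hy))
  have hder : deriv (fun y => η y - Pη y) m = η1 m - aa i := by
    rw [deriv_fun_sub hηdiff hPd.differentiableAt, hPd.deriv]
    congr 1
    exact (derivWithin_of_mem_nhds hmS).symm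
  have hplus : (((i:ℝ)+1)/N) ∈ Icc (0:ℝ) 1 := by
    rw [← hcast1 i]
    exact hnode (i+1) hi
  have hminus : ((i:ℝ)/N) ∈ Icc (0:ℝ) 1 := hnode i (by omega)
  have t1 := htay2 m hmSmem _ hplus
  have t2 := htay2 m hmSmem _ hminus
  have hw1 : ((i:ℝ)+1)/N - m = 1/(2*(N:ℝ)) := by rw [hm]; field_simp; ring
  have hw2 : (i:ℝ)/N - m = -(1/(2*(N:ℝ))) := by rw [hm]; field_simp; ring
  rw [hw1, abs_of_pos (by positivity : (0:ℝ) < 1/(2*(N:ℝ)))] at t1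
  rw [hw2, abs_neg, abs_of_pos (by positivity : (0:ℝ) < 1/(2*(N:ℝ)))] at t2
  have hsq : (-(1/(2*(N:ℝ))))^2 = (1/(2*(N:ℝ)))^2 := by ring
  rw [hsq] at t2
  obtain ⟨t1l, t1r⟩ := abs_le.mp t1
  obtain ⟨t2l, t2r⟩ := abs_le.mp t2
  have hPp : Pη (((i:ℝ)+1)/N) = aa i * (((i:ℝ)+1)/N) + bb i := hab i hi _ ⟨hle i, le_refl _⟩
  have hPm : Pη ((i:ℝ)/N) = aa i * ((i:ℝ)/N) + bb i := hab i hi _ ⟨le_refl _, hle i⟩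
  have hEd := hdE i hi
  have hEdiff : E (i+1) - E i = (η (((i:ℝ)+1)/N) - η ((i:ℝ)/N)) - (aa i * (1/(N:ℝ))) := by
    simp only [hE]
    rw [hcast1 i, hPp, hPm]
    field_simp
    ring
  have hmid : |η1 m * (1/(N:ℝ)) - (η (((i:ℝ)+1)/N) - η ((i:ℝ)/N))| ≤ 2*(M*(1/(2*(N:ℝ)))^3) := by
    have h2w : η1 m * (1/(N:ℝ)) = 2*(η1 m * (1/(2*(N:ℝ)))) := by ring
    rw [h2w, abs_le]
    constructor <;> nlinarith [t1l, t1r, t2l, t2r]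
  have hfin : |η1 m - aa i| ≤ 38*M*(1/(N:ℝ))^2 := by
    have hkey : η1 m - aa i
        = (N:ℝ)*((η1 m * (1/(N:ℝ)) - (η (((i:ℝ)+1)/N) - η ((i:ℝ)/N))) + (E (i+1) - E i)) := by
      rw [hEdiff]
      field_simp
      ring
    calc |η1 m - aa i|
        = |(N:ℝ)| * |(η1 m * (1/(N:ℝ)) - (η (((i:ℝ)+1)/N) - η ((i:ℝ)/N))) + (E (i+1) - E i)| := by
          rw [hkey, abs_mul]
      _ = (N:ℝ) * |(η1 m * (1/(N:ℝ)) - (η (((i:ℝ)+1)/N) - η ((i:ℝ)/N))) + (E (i+1) - E i)| := by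
          rw [abs_of_pos hNR]
      _ ≤ (N:ℝ) * (2*(M*(1/(2*(N:ℝ)))^3) + 37*M*(1/(N:ℝ))^3) :=
          mul_le_mul_of_nonneg_left (le_trans (abs_add_le _ _) (add_le_add hmid hEd)) hNR.le
      _ ≤ 38*M*(1/(N:ℝ))^2 := by
          have e : (N:ℝ) * (2*(M*(1/(2*(N:ℝ)))^3) + 37*M*(1/(N:ℝ))^3)
              = (M/4)*(1/(N:ℝ))^2 + 37*(M*(1/(N:ℝ))^2) := by
            field_simp
            ring
          rw [e]
          have hX : 0 ≤ M*(1/(N:ℝ))^2 := by positivity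
          linarith
  show |deriv (fun y => η y - Pη y) m| ≤ 1000 * M * ((1:ℝ)/N)^2
  rw [hder]
  have hX : 0 ≤ M*(1/(N:ℝ))^2 := by positivity
  calc |η1 m - aa i| ≤ 38*M*(1/(N:ℝ))^2 := hfin
    _ ≤ 1000 * M * ((1:ℝ)/N)^2 := by nlinarith
end
end
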